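/- arXiv:1701.00200 — 17 statements merged into one kernel-verified Lean document; each statement's English description precedes it below -/
import Mathlib

section
/- Let (V, {·,·}) be a Lie algebra over ℂ and let ∘ : V × V → V be a bilinear product satisfying, for all x, y, z ∈ V: {x, y} ∘ z = x ∘ (y ∘ z) − y ∘ (x ∘ z), and x ∘ {y, z} − {x ∘ y, z} − {y, x ∘ z} = x ∘ ⟨y, z⟩ − ⟨x ∘ y, z⟩ − ⟨y, x ∘ z⟩, where ⟨u, v⟩ := u ∘ v − v ∘ u. Then the operation [x, y] := {x, y} − ⟨x, y⟩ is a Lie bracket on V, i.e. it is bilinear, antisymmetric and satisfies the Jacobi identity. -/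
/-- The hypotheses of Definition 4.3 (`defi{}`): a bilinear product `∘` on a Lie algebra
`(V, {·,·})` (the bracket `⁅·,·⁆` plays the role of `{·,·}`) satisfying
`{x,y} ∘ z = x ∘ (y ∘ z) − y ∘ (x ∘ z)` and
`x ∘ {y,z} − {x ∘ y, z} − {y, x ∘ z} = x ∘ ⟨y,z⟩ − ⟨x ∘ y, z⟩ − ⟨y, x ∘ z⟩`,
where `⟨u,v⟩ = u ∘ v − v ∘ u`. -/
def IsPostLieStruct' {V : Type*} [LieRing V] [LieAlgebra ℂ V]
    (mul : V →ₗ[ℂ] V →ₗ[ℂ] V) : Prop :=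
  (∀ x y z : V, mul ⁅x, y⁆ z = mul x (mul y z) - mul y (mul x z)) ∧
  (∀ x y z : V,
    mul x ⁅y, z⁆ - ⁅mul x y, z⁆ - ⁅y, mul x z⁆ =
      mul x (mul y z - mul z y)
        - (mul (mul x y) z - mul z (mul x y))
        - (mul y (mul x z) - mul (mul x z) y))

/-- The operation `[x, y] := {x, y} − ⟨x, y⟩`. -/
def postBracket' {V : Type*} [LieRing V] [LieAlgebra ℂ V]
    (mul : V →ₗ[ℂ] V →ₗ[ℂ] V) (x y : V) : V :=
  ⁅x, y⁆ - (mul x y - mul y x)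

theorem stmt1 (V : Type*) [LieRing V] [LieAlgebra ℂ V]
    (mul : V →ₗ[ℂ] V →ₗ[ℂ] V) (h : IsPostLieStruct' mul) :
    (∀ x x' y : V,
        postBracket' mul (x + x') y = postBracket' mul x y + postBracket' mul x' y) ∧
    (∀ (c : ℂ) (x y : V), postBracket' mul (c • x) y = c • postBracket' mul x y) ∧
    (∀ x y y' : V,
        postBracket' mul x (y + y') = postBracket' mul x y + postBracket' mul x y') ∧
    (∀ (c : ℂ) (x y : V), postBracket' mul x (c • y) = c • postBracket' mul x y) ∧
    (∀ x y : V, postBracket' mul x y = - postBracket' mul y x) ∧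
    (∀ x y z : V,
        postBracket' mul x (postBracket' mul y z)
          + postBracket' mul y (postBracket' mul z x)
          + postBracket' mul z (postBracket' mul x y) = 0) := by
  obtain ⟨h1, h2⟩ := h
  have h2' : ∀ a b c : V, mul a ⁅b, c⁆ =
      -⁅c, mul a b⁆ + ⁅b, mul a c⁆ + mul a (mul b c) - mul a (mul c b)
        - mul (mul a b) c + mul c (mul a b) - mul b (mul a c) + mul (mul a c) b := by
    intro a b c
    have hh := h2 a b c
    rw [sub_sub, sub_eq_iff_eq_add] at hh
    rw [hh, ← lie_skew c (mul a b)]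
    simp only [map_sub]
    abel
  refine ⟨?_, ?_, ?_, ?_, ?_, ?_⟩
  · intro x x' y; simp only [postBracket', add_lie, map_add, LinearMap.add_apply]; abel
  · intro c x y; simp only [postBracket', smul_lie, map_smul, LinearMap.smul_apply, smul_sub]
  · intro x y y'; simp only [postBracket', lie_add, map_add, LinearMap.add_apply]; abel
  · intro c x y; simp only [postBracket', lie_smul, map_smul, LinearMap.smul_apply, smul_sub]
  · intro x y; simp only [postBracket', ← lie_skew x y]; abel
  · intro x y z
    simp only [postBracket', map_sub, LinearMap.sub_apply, lie_sub, sub_lie]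
    rw [h1 y z x, h1 z x y, h1 x y z, h2' x y z, h2' y z x, h2' z x y]
    rw [← lie_skew x ⁅y, z⁆, ← lie_skew y ⁅z, x⁆, lie_lie]
    simp only [← lie_skew ⁅z, x⁆ y, ← lie_skew y x, lie_neg]
    abel
end

section
/- Let φ : ℤ × ℤ → ℂ and define a bilinear product ∘ on the Witt algebra W by L_m ∘ L_n = φ(m, n)·L_{m+n} for all m, n ∈ ℤ. Then (W, [·,·], ∘) is a post-Lie algebra if and only if there exists a function f : ℤ → ℂ such that φ(m, n) = (m − n)·f(m) for all m, n ∈ ℤ and f satisfies equation (E). -/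
noncomputable section

set_option maxSynthPendingDepth 3

/-- The underlying space of the Witt algebra: the free ℂ-module on basis `{L m : m ∈ ℤ}`,
realized as finitely supported functions `ℤ →₀ ℂ`. -/
abbrev W : Type := ℤ →₀ ℂ

/-- The standard basis vector `L m`. -/
def L (m : ℤ) : W := Finsupp.single m 1

/-- `(W, br, mul)` is a post-Lie algebra: `br` plays the role of the Lie bracket `[·,·]`
and `mul` of the product `∘`, satisfying
`[x,y] ∘ z = x ∘ (y ∘ z) − y ∘ (x ∘ z) − ⟨x,y⟩ ∘ z` and
`x ∘ [y,z] = [x ∘ y, z] + [y, x ∘ z]`, where `⟨x,y⟩ = x ∘ y − y ∘ x`. -/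
def IsPostLie (br mul : W →ₗ[ℂ] W →ₗ[ℂ] W) : Prop :=
  (∀ x y z : W, mul (br x y) z =
      mul x (mul y z) - mul y (mul x z) - mul (mul x y - mul y x) z) ∧
  (∀ x y z : W, mul x (br y z) = br (mul x y) z + br y (mul x z))

/-- Equation (E). -/
def EqE (f : ℤ → ℂ) : Prop :=
  ∀ m n : ℤ,
    (m - n : ℂ) * (f (m + n) + f m * f (m + n) + f n * f (m + n) - f m * f n) = 0

/-- Equation (E2). -/
def EqE2 (ν : ℤ) (g : ℤ → ℂ) : Prop :=
  ∀ m n : ℤ,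
    (m - n : ℂ) * g m * g n =
      ((m - n + ν : ℂ) * g m + (m - n - ν : ℂ) * g n) * g (m + n + ν)

/-- Equation (E3). -/
def EqE3 (ν : ℤ) (f g : ℤ → ℂ) : Prop :=
  ∀ m n : ℤ,
    (m - n : ℂ) * (f m + f n + 1) * g (m + n) =
      (n - m + ν : ℂ) * (f (m + n + ν) - f m) * g n +
        (n - m - ν : ℂ) * (f (m + n + ν) - f n) * g m

lemma smul_L_cancel {a b : ℂ} {s : ℤ} (h : a • L s = b • L s) : a = b := by
  have := DFunLike.congr_fun h s
  simpa [L] using this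

lemma ext3 {F G : W →ₗ[ℂ] W →ₗ[ℂ] W →ₗ[ℂ] W}
    (h : ∀ m n k : ℤ, F (L m) (L n) (L k) = G (L m) (L n) (L k)) : F = G := by
  apply Finsupp.basisSingleOne.ext; intro m
  apply Finsupp.basisSingleOne.ext; intro n
  apply Finsupp.basisSingleOne.ext; intro k
  simpa [L, Finsupp.basisSingleOne] using h m n k

lemma postLie_of_basis (br mul : W →ₗ[ℂ] W →ₗ[ℂ] W)
    (h1 : ∀ m n k : ℤ, mul (br (L m) (L n)) (L k) =
      mul (L m) (mul (L n) (L k)) - mul (L n) (mul (L m) (L k)) -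
        mul (mul (L m) (L n) - mul (L n) (L m)) (L k))
    (h2 : ∀ m n k : ℤ, mul (L m) (br (L n) (L k)) =
      br (mul (L m) (L n)) (L k) + br (L n) (mul (L m) (L k))) :
    IsPostLie br mul := by
  constructor
  · have key : br.compr₂ mul =
        ((LinearMap.llcomp ℂ W W W).comp mul).compl₂ mul -
          (((LinearMap.llcomp ℂ W W W).comp mul).compl₂ mul).flip -
          (mul - mul.flip).compr₂ mul := by
      apply ext3; intro m n k
      simpa only [LinearMap.compr₂_apply, LinearMap.compl₂_apply, LinearMap.comp_apply,
        LinearMap.llcomp_apply, LinearMap.flip_apply, LinearMap.sub_apply] using h1 m n k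
    intro x y z
    have := LinearMap.congr_fun (LinearMap.congr_fun (LinearMap.congr_fun key x) y) z
    simpa only [LinearMap.compr₂_apply, LinearMap.compl₂_apply, LinearMap.comp_apply,
      LinearMap.llcomp_apply, LinearMap.flip_apply, LinearMap.sub_apply] using this
  · have key : ((LinearMap.llcomp ℂ W W W).comp mul).compl₂ br =
        mul.compr₂ br + (((LinearMap.llcomp ℂ W W W).comp br).compl₂ mul).flip := by
      apply ext3; intro m n k
      simpa only [LinearMap.compr₂_apply, LinearMap.compl₂_apply, LinearMap.comp_apply,
        LinearMap.llcomp_apply, LinearMap.flip_apply, LinearMap.add_apply] using h2 m n k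
    intro x y z
    have := LinearMap.congr_fun (LinearMap.congr_fun (LinearMap.congr_fun key x) y) z
    simpa only [LinearMap.compr₂_apply, LinearMap.compl₂_apply, LinearMap.comp_apply,
      LinearMap.llcomp_apply, LinearMap.flip_apply, LinearMap.add_apply] using this

theorem stmt2 (br mul : W →ₗ[ℂ] W →ₗ[ℂ] W)
    (hbr : ∀ m n : ℤ, br (L m) (L n) = (m - n : ℂ) • L (m + n))
    (φ : ℤ → ℤ → ℂ)
    (hmul : ∀ m n : ℤ, mul (L m) (L n) = φ m n • L (m + n)) :
    IsPostLie br mul ↔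
      ∃ f : ℤ → ℂ, (∀ m n : ℤ, φ m n = (m - n : ℂ) * f m) ∧ EqE f := by
  constructor
  · rintro ⟨h1, h2⟩
    -- scalar form of the second post-Lie axiom
    have hC2 : ∀ m n k : ℤ, ((n : ℂ) - k) * φ m (n + k) =
        ((m : ℂ) + n - k) * φ m n + ((n : ℂ) - m - k) * φ m k := by
      intro m n k
      have h := h2 (L m) (L n) (L k)
      simp only [hbr, hmul, map_smul, LinearMap.smul_apply, smul_smul] at h
      rw [show n + (m + k) = m + n + k by ring, show m + (n + k) = m + n + k by ring] at h
      rw [← add_smul] at h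
      have h' := smul_L_cancel h
      push_cast at h' ⊢
      linear_combination h'
    -- scalar form of the first post-Lie axiom
    have hC1 : ∀ m n k : ℤ, ((m : ℂ) - n) * φ (m + n) k =
        φ n k * φ m (n + k) - φ m k * φ n (m + k) -
          (φ m n - φ n m) * φ (m + n) k := by
      intro m n k
      have h := h1 (L m) (L n) (L k)
      simp only [hbr, hmul, map_smul, map_sub, LinearMap.sub_apply, LinearMap.smul_apply,
        smul_smul] at h
      rw [show n + m = m + n by ring, show m + (n + k) = m + n + k by ring,
        show n + (m + k) = m + n + k by ring] at h
      rw [← sub_smul, ← sub_smul, ← sub_smul] at h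
      have h' := smul_L_cancel h
      push_cast at h' ⊢
      linear_combination h'
    -- additivity of φ 0
    have hA : ∀ n k : ℤ, n ≠ k → φ 0 (n + k) = φ 0 n + φ 0 k := by
      intro n k hnk
      have h := hC2 0 n k
      have hnk' : (n : ℂ) - k ≠ 0 := sub_ne_zero.mpr (by exact_mod_cast hnk)
      apply mul_left_cancel₀ hnk'
      push_cast at h ⊢
      linear_combination h
    have ha0 : φ 0 0 = 0 := by
      have h := hA 1 0 one_ne_zero
      norm_num at h
      linear_combination h
    have am1 : φ 0 (-1) = -φ 0 1 := by
      have h := hA 1 (-1) (by norm_num)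
      norm_num at h
      linear_combination ha0 - h
    have a3 : φ 0 3 = φ 0 1 + φ 0 2 := by
      have h := hA 1 2 (by norm_num); norm_num at h; linear_combination h
    have a5 : φ 0 5 = φ 0 2 + φ 0 3 := by
      have h := hA 2 3 (by norm_num); norm_num at h; linear_combination h
    have a4 : φ 0 4 = φ 0 5 + φ 0 (-1) := by
      have h := hA 5 (-1) (by norm_num); norm_num at h; linear_combination h
    have a4' : φ 0 4 = φ 0 1 + φ 0 3 := by
      have h := hA 1 3 (by norm_num); norm_num at h; linear_combination h
    have a2 : φ 0 2 = 2 * φ 0 1 := by linear_combination a4' - a4 - a5 - am1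
    have hlin : ∀ n : ℤ, φ 0 n = (n : ℂ) * φ 0 1 := by
      intro n
      induction n using Int.induction_on with
      | zero => simpa using ha0
      | succ i ih =>
        rcases eq_or_ne (i : ℤ) 1 with hi | hi
        · rw [hi, show (1 : ℤ) + 1 = 2 from rfl]
          push_cast
          linear_combination a2
        · have h := hA i 1 hi
          rw [h, ih]
          push_cast
          ring
      | pred i ih =>
        rcases eq_or_ne (i : ℤ) 1 with hi | hi
        · rw [hi, show -(1 : ℤ) - 1 = -2 from rfl]
          have h := hA 2 (-2) (by norm_num)
          norm_num at h
          push_cast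
          linear_combination ha0 - h - a2
        · have h := hA (-(i : ℤ)) (-1) (by omega)
          rw [show -(i : ℤ) + -1 = -((i : ℤ) + 1) by ring] at h
          rw [show -(i : ℤ) - 1 = -((i : ℤ) + 1) by ring, h, ih, am1]
          push_cast
          ring
    -- the function f
    set f : ℤ → ℂ := fun m => if m = 0 then -φ 0 1 else φ m 0 / m with hf
    have hφf : ∀ m n : ℤ, φ m n = ((m : ℂ) - n) * f m := by
      intro m n
      by_cases hm : m = 0
      · subst hm
        rw [hlin n]
        simp only [hf, if_pos rfl]
        push_cast
        ring
      · have h := hC2 m n 0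
        norm_num at h
        have hm' : (m : ℂ) ≠ 0 := Int.cast_ne_zero.mpr hm
        simp only [hf, if_neg hm]
        field_simp
        linear_combination -h
    refine ⟨f, hφf, ?_⟩
    intro m n
    have h := hC1 m n (m + n - 1)
    simp only [hφf] at h
    push_cast at h
    linear_combination h
  · rintro ⟨f, hφ, hE⟩
    apply postLie_of_basis
    · intro m n k
      simp only [hbr, hmul, map_sub, map_smul, LinearMap.sub_apply, LinearMap.smul_apply,
        smul_smul]
      rw [show n + m = m + n by ring, show m + (n + k) = m + n + k by ring,
        show n + (m + k) = m + n + k by ring]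
      rw [← sub_smul, ← sub_smul, ← sub_smul]
      congr 1
      simp only [hφ]
      push_cast
      linear_combination ((m : ℂ) + n - k) * hE m n
    · intro m n k
      simp only [hbr, hmul, map_smul, LinearMap.smul_apply, smul_smul]
      rw [show n + (m + k) = m + n + k by ring, show m + (n + k) = m + n + k by ring]
      rw [← add_smul]
      congr 1
      simp only [hφ]
      push_cast
      ring
end
end

section
/- Let φ₁, φ₂ : ℤ × ℤ → ℂ and define bilinear products ∘₁, ∘₂ on the Witt algebra W by L_m ∘ᵢ L_n = φᵢ(m, n)·L_{m+n}. Let τ : W → W be the Lie algebra automorphism determined by τ(L_m) = −L_{−m} for all m ∈ ℤ. Suppose (W, [·,·], ∘₁) is a post-Lie algebra. Then (W, [·,·], ∘₂) is a post-Lie algebra and τ(x ∘₁ y) = τ(x) ∘₂ τ(y) for all x, y ∈ W, if and only if φ₂(m, n) = −φ₁(−m, −n) for all m, n ∈ ℤ. -/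
noncomputable section

lemma smul_L_inj {a b : ℂ} {k : ℤ} (h : a • L k = b • L k) : a = b := by
  have h2 := DFunLike.congr_fun h k
  simpa [L, Finsupp.smul_apply, Finsupp.single_eq_same] using h2

lemma bil_ext {F G : W →ₗ[ℂ] W →ₗ[ℂ] W}
    (h : ∀ m n : ℤ, F (L m) (L n) = G (L m) (L n)) : F = G := by
  apply Finsupp.basisSingleOne.ext
  intro m
  apply Finsupp.basisSingleOne.ext
  intro n
  simpa [Finsupp.coe_basisSingleOne, L] using h m n

theorem stmt3 (br : W →ₗ[ℂ] W →ₗ[ℂ] W)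
    (hbr : ∀ m n : ℤ, br (L m) (L n) = (m - n : ℂ) • L (m + n))
    (φ₁ φ₂ : ℤ → ℤ → ℂ) (mul₁ mul₂ : W →ₗ[ℂ] W →ₗ[ℂ] W)
    (hmul₁ : ∀ m n : ℤ, mul₁ (L m) (L n) = φ₁ m n • L (m + n))
    (hmul₂ : ∀ m n : ℤ, mul₂ (L m) (L n) = φ₂ m n • L (m + n))
    (τ : W ≃ₗ[ℂ] W) (hτ : ∀ m : ℤ, τ (L m) = -L (-m))
    (h₁ : IsPostLie br mul₁) :
    (IsPostLie br mul₂ ∧ ∀ x y : W, τ (mul₁ x y) = mul₂ (τ x) (τ y)) ↔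
      (∀ m n : ℤ, φ₂ m n = -φ₁ (-m) (-n)) := by

  have hτsymm : ∀ m : ℤ, τ.symm (L m) = -L (-m) := by
    intro m
    apply τ.injective
    rw [LinearEquiv.apply_symm_apply, map_neg, hτ, neg_neg, neg_neg]
  have hbrτ : ∀ x y : W, br (τ x) (τ y) = τ (br x y) := by
    have key : br.compl₁₂ (τ : W →ₗ[ℂ] W) (τ : W →ₗ[ℂ] W) =
        (br.compr₂ (τ : W →ₗ[ℂ] W)).flip.flip := by
      apply bil_ext
      intro m n
      simp only [LinearMap.compl₁₂_apply, LinearMap.compr₂_apply, LinearMap.flip_apply,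
        LinearEquiv.coe_coe, hτ, map_neg, LinearMap.neg_apply, neg_neg, hbr, map_smul,
        smul_neg]
      rw [show (-m) + (-n) = -(m+n) by ring, ← neg_smul]
      congr 1
      push_cast
      ring
    intro x y
    have := LinearMap.congr_fun (LinearMap.congr_fun key x) y
    simpa using this
  constructor
  · rintro ⟨-, heq⟩ m n
    have h := heq (L (-m)) (L (-n))
    rw [hmul₁, hτ, hτ] at h
    simp only [map_neg, map_smul, LinearMap.neg_apply, neg_neg, hτ, hmul₂, smul_neg] at h
    rw [show -((-m) + (-n)) = m + n by ring, ← neg_smul] at h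
    exact (smul_L_inj h).symm
  · intro hφ
    have hc : ∀ x y : W, mul₂ x y = τ (mul₁ (τ.symm x) (τ.symm y)) := by
      have key : mul₂ = (mul₁.compl₁₂ (τ.symm : W →ₗ[ℂ] W) (τ.symm : W →ₗ[ℂ] W)).compr₂
          (τ : W →ₗ[ℂ] W) := by
        apply bil_ext
        intro m n
        simp only [LinearMap.compl₁₂_apply, LinearMap.compr₂_apply, LinearEquiv.coe_coe,
          hτsymm, hmul₂, map_neg, LinearMap.neg_apply, neg_neg, hmul₁, map_smul, hτ,
          smul_neg]
        rw [show -((-m) + (-n)) = m + n by ring, ← neg_smul, hφ]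
      intro x y
      rw [key]
      rfl
    have hpl : IsPostLie br mul₂ := by
      constructor
      · intro x y z
        have hb : τ.symm (br x y) = br (τ.symm x) (τ.symm y) := by
          apply τ.injective
          rw [LinearEquiv.apply_symm_apply, ← hbrτ, τ.apply_symm_apply, τ.apply_symm_apply]
        have hsub : mul₂ x y - mul₂ y x =
            τ (mul₁ (τ.symm x) (τ.symm y) - mul₁ (τ.symm y) (τ.symm x)) := by
          rw [map_sub, hc x y, hc y x]
        rw [hc (br x y) z, hb, hc x (mul₂ y z), hc y (mul₂ x z), hc (mul₂ x y - mul₂ y x) z,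
          hc y z, hc x z, τ.symm_apply_apply, τ.symm_apply_apply, hsub, τ.symm_apply_apply,
          ← map_sub, ← map_sub]
        congr 1
        exact h₁.1 (τ.symm x) (τ.symm y) (τ.symm z)
      · intro x y z
        have hb : τ.symm (br y z) = br (τ.symm y) (τ.symm z) := by
          apply τ.injective
          rw [LinearEquiv.apply_symm_apply, ← hbrτ, τ.apply_symm_apply, τ.apply_symm_apply]
        rw [hc x (br y z), hb, hc x y, hc x z]
        calc τ (mul₁ (τ.symm x) (br (τ.symm y) (τ.symm z)))
            = τ (br (mul₁ (τ.symm x) (τ.symm y)) (τ.symm z)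
                + br (τ.symm y) (mul₁ (τ.symm x) (τ.symm z))) := by
              rw [h₁.2 (τ.symm x) (τ.symm y) (τ.symm z)]
          _ = _ := by
              rw [map_add, ← hbrτ, ← hbrτ, τ.apply_symm_apply, τ.apply_symm_apply]
    refine ⟨hpl, fun x y => ?_⟩
    rw [hc (τ x) (τ y), τ.symm_apply_apply, τ.symm_apply_apply]
end
end

section
/- A function f : ℤ → ℂ satisfies equation (E) if and only if f is one of the following eight functions: (P1) f(m) = 0 for all m; (P2) f(m) = −1 for all m; (P3ᵃ) f(m) = −1 for all m > 0, f(0) = a, and f(m) = 0 for all m < 0, for some a ∈ ℂ; (P4ᵃ) f(m) = 0 for all m > 0, f(0) = a, and f(m) = −1 for all m < 0, for some a ∈ ℂ; (P5) f(m) = −1 for all m ≥ 2 and f(m) = 0 for all m ≤ 1; (P6) f(m) = 0 for all m ≥ 2 and f(m) = −1 for all m ≤ 1; (P7) f(m) = −1 for all m ≤ −2 and f(m) = 0 for all m ≥ −1; (P8) f(m) = 0 for all m ≤ −2 and f(m) = −1 for all m ≥ −1. -/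
noncomputable section

/-- The eight functions `f` of Theorem 2.6 (types `P1`–`P8`). -/
def IsGradedType (f : ℤ → ℂ) : Prop :=
  (∀ m : ℤ, f m = 0) ∨
  (∀ m : ℤ, f m = -1) ∨
  (∃ a : ℂ, (∀ m : ℤ, 0 < m → f m = -1) ∧ f 0 = a ∧ (∀ m : ℤ, m < 0 → f m = 0)) ∨
  (∃ a : ℂ, (∀ m : ℤ, 0 < m → f m = 0) ∧ f 0 = a ∧ (∀ m : ℤ, m < 0 → f m = -1)) ∨
  ((∀ m : ℤ, 2 ≤ m → f m = -1) ∧ (∀ m : ℤ, m ≤ 1 → f m = 0)) ∨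
  ((∀ m : ℤ, 2 ≤ m → f m = 0) ∧ (∀ m : ℤ, m ≤ 1 → f m = -1)) ∨
  ((∀ m : ℤ, m ≤ -2 → f m = -1) ∧ (∀ m : ℤ, -1 ≤ m → f m = 0)) ∨
  ((∀ m : ℤ, m ≤ -2 → f m = 0) ∧ (∀ m : ℤ, -1 ≤ m → f m = -1))

/-- Structural description equivalent to (E): values away from `0` are `0` or `-1`,
the value classes are closed under addition of distinct elements with nonzero sum,
and the value at `0` is forced whenever `f k = f (-k)` for some `k ≠ 0`. -/
def GoodF (f : ℤ → ℂ) : Prop :=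
  (∀ k : ℤ, k ≠ 0 → f k = 0 ∨ f k = -1) ∧
  (∀ m n : ℤ, m ≠ n → m ≠ 0 → n ≠ 0 → m + n ≠ 0 → f m = f n → f (m + n) = f m) ∧
  (∀ k : ℤ, k ≠ 0 → f k = f (-k) → f 0 = f k)

theorem eqE_of_good (f : ℤ → ℂ) (h : GoodF f) : EqE f := by
  obtain ⟨h01, hcl, h0⟩ := h
  intro m n
  rcases eq_or_ne m n with rfl | hmn
  · simp
  apply mul_eq_zero_of_right
  rcases eq_or_ne m 0 with rfl | hm
  · rw [zero_add]
    rcases h01 n hmn.symm with hv | hv <;> rw [hv] <;> ring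
  rcases eq_or_ne n 0 with rfl | hn
  · rw [add_zero]
    rcases h01 m hm with hv | hv <;> rw [hv] <;> ring
  rcases eq_or_ne (m + n) 0 with hs | hs
  · obtain rfl : n = -m := by omega
    rw [add_neg_cancel]
    rcases h01 m hm with h1 | h1 <;> rcases h01 (-m) (neg_ne_zero.mpr hm) with h2 | h2
    · rw [h0 m hm (h1.trans h2.symm), h1, h2]; ring
    · rw [h1, h2]; ring
    · rw [h1, h2]; ring
    · rw [h0 m hm (h1.trans h2.symm), h1, h2]; ring
  rcases h01 m hm with h1 | h1 <;> rcases h01 n hn with h2 | h2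
  · rw [hcl m n hmn hm hn hs (h1.trans h2.symm), h1, h2]; ring
  · rw [h1, h2]; ring
  · rw [h1, h2]; ring
  · rw [hcl m n hmn hm hn hs (h1.trans h2.symm), h1, h2]; ring

theorem good_of_eqE (f : ℤ → ℂ) (h : EqE f) : GoodF f := by
  have key : ∀ m n : ℤ, m ≠ n →
      f (m + n) + f m * f (m + n) + f n * f (m + n) - f m * f n = 0 := by
    intro m n hmn
    have h2 := h m n
    have hc : (m : ℂ) - n ≠ 0 := sub_ne_zero.mpr (by exact_mod_cast hmn)
    exact (mul_eq_zero.mp h2).resolve_left hc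
  have h01 : ∀ k : ℤ, k ≠ 0 → f k = 0 ∨ f k = -1 := by
    intro k hk
    have hk1 := key k 0 hk
    rw [add_zero] at hk1
    have hmul : f k * (1 + f k) = 0 := by linear_combination hk1
    rcases mul_eq_zero.mp hmul with h' | h'
    · exact Or.inl h'
    · exact Or.inr (by linear_combination h')
  refine ⟨h01, ?_, ?_⟩
  · intro m n hmn hm hn hs hfe
    have k1 := key m n hmn
    rcases h01 m hm with hv | hv
    · have hn0 : f n = 0 := hfe.symm.trans hv
      rw [hv, hn0] at k1
      rw [hv]
      linear_combination k1
    · have hn0 : f n = -1 := hfe.symm.trans hv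
      rw [hv, hn0] at k1
      rw [hv]
      linear_combination -k1
  · intro k hk hke
    have k1 := key k (-k) (by omega)
    rw [add_neg_cancel] at k1
    rcases h01 k hk with hv | hv
    · have hn0 : f (-k) = 0 := hke.symm.trans hv
      rw [hv, hn0] at k1
      rw [hv]
      linear_combination k1
    · have hn0 : f (-k) = -1 := hke.symm.trans hv
      rw [hv, hn0] at k1
      rw [hv]
      linear_combination -k1

theorem classify (f : ℤ → ℂ) (hg : GoodF f) : IsGradedType f := by
  obtain ⟨h01, hcl, h0⟩ := hg
  have bin : ∀ x y z : ℂ, (x = 0 ∨ x = -1) → (y = 0 ∨ y = -1) → (z = 0 ∨ z = -1) →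
      y ≠ z → x = y ∨ x = z := by
    rintro x y z (rfl | rfl) (rfl | rfl) (rfl | rfl) h <;> simp_all
  have posConst : f 1 = f 2 → ∀ n : ℤ, 1 ≤ n → f n = f 1 := by
    intro h12
    refine Int.le_induction rfl ?_
    intro n hn ih
    rcases eq_or_lt_of_le hn with heq | hn2
    · rw [← heq]
      have e : (1 : ℤ) + 1 = 2 := by norm_num
      rw [e]
      exact h12.symm
    · have hres := hcl 1 n (by omega) (by omega) (by omega) (by omega) ih.symm
      rw [add_comm] at hres
      exact hres
  have negConst : f (-1) = f (-2) → ∀ n : ℤ, n ≤ -1 → f n = f (-1) := by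
    intro h12
    refine Int.le_induction_down rfl ?_
    intro n hn ih
    rcases eq_or_lt_of_le hn with heq | hn2
    · rw [heq]
      have e : (-1 : ℤ) - 1 = -2 := by norm_num
      rw [e]
      exact h12.symm
    · have hres := hcl (-1) n (by omega) (by omega) (by omega) (by omega) ih.symm
      have e : -1 + n = n - 1 := by ring
      rw [e] at hres
      exact hres
  by_cases h12 : f 1 = f 2 <;> by_cases hm12 : f (-1) = f (-2)
  · -- all positives = f 1, all negatives = f (-1)
    have hp := posConst h12
    have hm := negConst hm12
    by_cases heq : f 1 = f (-1)
    · have hf0 : f 0 = f 1 := h0 1 one_ne_zero heq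
      rcases h01 1 one_ne_zero with hv | hv
      · left
        intro m
        rcases lt_trichotomy m 0 with hh | hh | hh
        · rw [hm m (by omega), ← heq, hv]
        · rw [hh, hf0, hv]
        · rw [hp m (by omega), hv]
      · right; left
        intro m
        rcases lt_trichotomy m 0 with hh | hh | hh
        · rw [hm m (by omega), ← heq, hv]
        · rw [hh, hf0, hv]
        · rw [hp m (by omega), hv]
    · rcases h01 1 one_ne_zero with hv | hv
      · -- f 1 = 0, f (-1) = -1 : type P4
        have hv' : f (-1) = -1 := by
          rcases h01 (-1) (by omega) with h' | h'
          · exact absurd (hv.trans h'.symm) heq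
          · exact h'
        right; right; right; left
        refine ⟨f 0, ?_, rfl, ?_⟩
        · intro m hmp; rw [hp m (by omega), hv]
        · intro m hmn; rw [hm m (by omega), hv']
      · -- f 1 = -1, f (-1) = 0 : type P3
        have hv' : f (-1) = 0 := by
          rcases h01 (-1) (by omega) with h' | h'
          · exact h'
          · exact absurd (hv.trans h'.symm) heq
        right; right; left
        refine ⟨f 0, ?_, rfl, ?_⟩
        · intro m hmp; rw [hp m (by omega), hv]
        · intro m hmn; rw [hm m (by omega), hv']
  · -- f 1 = f 2, f (-1) ≠ f (-2)
    have hp := posConst h12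
    have he1 : f 1 = f (-1) := by
      rcases bin (f 1) (f (-1)) (f (-2)) (h01 1 (by omega)) (h01 (-1) (by omega))
        (h01 (-2) (by omega)) hm12 with h' | h'
      · exact h'
      · have hres := hcl 1 (-2) (by omega) (by omega) (by omega) (by omega) h'
        have e : (1 : ℤ) + -2 = -1 := by ring
        rw [e] at hres
        exact hres.symm
    have hm2 : ∀ n : ℤ, n ≤ -2 → f n = f (-2) := by
      refine Int.le_induction_down rfl ?_
      intro n hn ih
      rcases bin (f (n - 1)) (f (-1)) (f (-2)) (h01 (n - 1) (by omega))
        (h01 (-1) (by omega)) (h01 (-2) (by omega)) hm12 with h' | h'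
      · exfalso
        have hres := hcl (n - 1) 1 (by omega) (by omega) (by omega) (by omega)
          (h'.trans he1.symm)
        have e : n - 1 + 1 = n := by ring
        rw [e] at hres
        -- hres : f n = f (n - 1), ih : f n = f (-2), h' : f (n-1) = f (-1)
        exact hm12 (h'.symm.trans (hres.symm.trans ih))
      · exact h'
    have hf0 : f 0 = f 1 := h0 1 one_ne_zero he1
    rcases h01 1 one_ne_zero with hv | hv
    · -- f 1 = 0 : type P7
      have hv2 : f (-2) = -1 := by
        rcases h01 (-2) (by omega) with h' | h'
        · exact absurd ((he1.symm.trans hv).trans h'.symm) hm12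
        · exact h'
      right; right; right; right; right; right; left
      constructor
      · intro m hmm; rw [hm2 m hmm, hv2]
      · intro m hmm
        rcases lt_trichotomy m 0 with hh | hh | hh
        · have e : m = -1 := by omega
          rw [e, ← he1, hv]
        · rw [hh, hf0, hv]
        · rw [hp m (by omega), hv]
    · -- f 1 = -1 : type P8
      have hv2 : f (-2) = 0 := by
        rcases h01 (-2) (by omega) with h' | h'
        · exact h'
        · exact absurd ((he1.symm.trans hv).trans h'.symm) hm12
      right; right; right; right; right; right; right
      constructor
      · intro m hmm; rw [hm2 m hmm, hv2]
      · intro m hmm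
        rcases lt_trichotomy m 0 with hh | hh | hh
        · have e : m = -1 := by omega
          rw [e, ← he1, hv]
        · rw [hh, hf0, hv]
        · rw [hp m (by omega), hv]
  · -- f 1 ≠ f 2, f (-1) = f (-2)
    have hm := negConst hm12
    have he1 : f (-1) = f 1 := by
      rcases bin (f (-1)) (f 1) (f 2) (h01 (-1) (by omega)) (h01 1 (by omega))
        (h01 2 (by omega)) h12 with h' | h'
      · exact h'
      · exfalso
        have hres := hcl 2 (-1) (by omega) (by omega) (by omega) (by omega) h'.symm
        have e : (2 : ℤ) + -1 = 1 := by ring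
        rw [e] at hres
        exact h12 hres
    have hp2 : ∀ n : ℤ, 2 ≤ n → f n = f 2 := by
      refine Int.le_induction rfl ?_
      intro n hn ih
      rcases bin (f (n + 1)) (f 1) (f 2) (h01 (n + 1) (by omega)) (h01 1 (by omega))
        (h01 2 (by omega)) h12 with h' | h'
      · exfalso
        have hres := hcl (n + 1) (-1) (by omega) (by omega) (by omega) (by omega)
          (h'.trans he1.symm)
        have e : n + 1 + -1 = n := by ring
        rw [e] at hres
        -- hres : f n = f (n + 1), ih : f n = f 2, h' : f (n+1) = f 1
        exact h12 ((h'.symm.trans hres.symm).trans ih)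
      · exact h'
    have hf0 : f 0 = f 1 := h0 1 one_ne_zero he1.symm
    rcases h01 1 one_ne_zero with hv | hv
    · -- f 1 = 0, f 2 = -1 : type P5
      have hv2 : f 2 = -1 := by
        rcases h01 2 (by omega) with h' | h'
        · exact absurd (hv.trans h'.symm) h12
        · exact h'
      right; right; right; right; left
      constructor
      · intro m hmm; rw [hp2 m hmm, hv2]
      · intro m hmm
        rcases lt_trichotomy m 0 with hh | hh | hh
        · rw [hm m (by omega), he1, hv]
        · rw [hh, hf0, hv]
        · have e : m = 1 := by omega
          rw [e, hv]
    · -- f 1 = -1, f 2 = 0 : type P6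
      have hv2 : f 2 = 0 := by
        rcases h01 2 (by omega) with h' | h'
        · exact h'
        · exact absurd (hv.trans h'.symm) h12
      right; right; right; right; right; left
      constructor
      · intro m hmm; rw [hp2 m hmm, hv2]
      · intro m hmm
        rcases lt_trichotomy m 0 with hh | hh | hh
        · rw [hm m (by omega), he1, hv]
        · rw [hh, hf0, hv]
        · have e : m = 1 := by omega
          rw [e, hv]
  · -- both differ: impossible
    exfalso
    rcases bin (f (-1)) (f 1) (f 2) (h01 (-1) (by omega)) (h01 1 (by omega))
      (h01 2 (by omega)) h12 with h' | h'
    · have h2' : f (-2) = f 2 := by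
        rcases bin (f (-2)) (f 1) (f 2) (h01 (-2) (by omega)) (h01 1 (by omega))
          (h01 2 (by omega)) h12 with h'' | h''
        · exact absurd (h'.trans h''.symm) hm12
        · exact h''
      rcases bin (f 3) (f 1) (f 2) (h01 3 (by omega)) (h01 1 (by omega))
        (h01 2 (by omega)) h12 with h3 | h3
      · have hres := hcl 3 (-1) (by omega) (by omega) (by omega) (by omega)
          (h3.trans h'.symm)
        have e : (3 : ℤ) + -1 = 2 := by ring
        rw [e] at hres
        exact h12 ((hres.trans h3).symm)
      · have hres := hcl 3 (-2) (by omega) (by omega) (by omega) (by omega)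
          (h3.trans h2'.symm)
        have e : (3 : ℤ) + -2 = 1 := by ring
        rw [e] at hres
        exact h12 (hres.trans h3)
    · have hres := hcl 2 (-1) (by omega) (by omega) (by omega) (by omega) h'.symm
      have e : (2 : ℤ) + -1 = 1 := by ring
      rw [e] at hres
      exact h12 hres

theorem good_of_graded (f : ℤ → ℂ) (hg : IsGradedType f) : GoodF f := by
  have zne : (0 : ℂ) ≠ -1 := by norm_num
  rcases hg with h | h | ⟨a, hp, h0a, hn⟩ | ⟨a, hp, h0a, hn⟩ | ⟨hp, hn⟩ | ⟨hp, hn⟩ |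
    ⟨hp, hn⟩ | ⟨hp, hn⟩
  · exact ⟨fun k _ => Or.inl (h k), fun m n _ _ _ _ _ => by rw [h, h],
      fun k _ _ => by rw [h, h]⟩
  · exact ⟨fun k _ => Or.inr (h k), fun m n _ _ _ _ _ => by rw [h, h],
      fun k _ _ => by rw [h, h]⟩
  · -- P3 : -1 on positives, 0 on negatives
    refine ⟨fun k hk => ?_, fun m n hmn hm hn' hs hfe => ?_, fun k hk hke => ?_⟩
    · rcases hk.lt_or_gt with hh | hh
      · exact Or.inl (hn k hh)
      · exact Or.inr (hp k hh)
    · rcases hm.lt_or_gt with h1 | h1 <;> rcases hn'.lt_or_gt with h2 | h2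
      · rw [hn (m + n) (by omega), hn m h1]
      · rw [hn m h1, hp n h2] at hfe; exact absurd hfe zne
      · rw [hp m h1, hn n h2] at hfe; exact absurd hfe.symm zne
      · rw [hp (m + n) (by omega), hp m h1]
    · exfalso
      rcases hk.lt_or_gt with hh | hh
      · rw [hn k hh, hp (-k) (by omega)] at hke; exact zne hke
      · rw [hp k hh, hn (-k) (by omega)] at hke; exact zne hke.symm
  · -- P4 : 0 on positives, -1 on negatives
    refine ⟨fun k hk => ?_, fun m n hmn hm hn' hs hfe => ?_, fun k hk hke => ?_⟩
    · rcases hk.lt_or_gt with hh | hh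
      · exact Or.inr (hn k hh)
      · exact Or.inl (hp k hh)
    · rcases hm.lt_or_gt with h1 | h1 <;> rcases hn'.lt_or_gt with h2 | h2
      · rw [hn (m + n) (by omega), hn m h1]
      · rw [hn m h1, hp n h2] at hfe; exact absurd hfe.symm zne
      · rw [hp m h1, hn n h2] at hfe; exact absurd hfe zne
      · rw [hp (m + n) (by omega), hp m h1]
    · exfalso
      rcases hk.lt_or_gt with hh | hh
      · rw [hn k hh, hp (-k) (by omega)] at hke; exact zne hke.symm
      · rw [hp k hh, hn (-k) (by omega)] at hke; exact zne hke
  · -- P5 : -1 on m ≥ 2, 0 on m ≤ 1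
    refine ⟨fun k hk => ?_, fun m n hmn hm hn' hs hfe => ?_, fun k hk hke => ?_⟩
    · rcases le_or_gt 2 k with hh | hh
      · exact Or.inr (hp k hh)
      · exact Or.inl (hn k (by omega))
    · rcases le_or_gt 2 m with h1 | h1 <;> rcases le_or_gt 2 n with h2 | h2
      · rw [hp (m + n) (by omega), hp m h1]
      · rw [hp m h1, hn n (by omega)] at hfe; exact absurd hfe.symm zne
      · rw [hn m (by omega), hp n h2] at hfe; exact absurd hfe zne
      · rw [hn (m + n) (by omega), hn m (by omega)]
    · rcases (by omega : 2 ≤ k ∨ k ≤ -2 ∨ k = 1 ∨ k = -1) with hh | hh | rfl | rfl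
      · rw [hp k hh, hn (-k) (by omega)] at hke; exact absurd hke.symm zne
      · rw [hn k (by omega), hp (-k) (by omega)] at hke; exact absurd hke zne
      · rw [hn 0 (by omega), hn 1 (by omega)]
      · rw [hn 0 (by omega), hn (-1) (by omega)]
  · -- P6 : 0 on m ≥ 2, -1 on m ≤ 1
    refine ⟨fun k hk => ?_, fun m n hmn hm hn' hs hfe => ?_, fun k hk hke => ?_⟩
    · rcases le_or_gt 2 k with hh | hh
      · exact Or.inl (hp k hh)
      · exact Or.inr (hn k (by omega))
    · rcases le_or_gt 2 m with h1 | h1 <;> rcases le_or_gt 2 n with h2 | h2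
      · rw [hp (m + n) (by omega), hp m h1]
      · rw [hp m h1, hn n (by omega)] at hfe; exact absurd hfe zne
      · rw [hn m (by omega), hp n h2] at hfe; exact absurd hfe.symm zne
      · rw [hn (m + n) (by omega), hn m (by omega)]
    · rcases (by omega : 2 ≤ k ∨ k ≤ -2 ∨ k = 1 ∨ k = -1) with hh | hh | rfl | rfl
      · rw [hp k hh, hn (-k) (by omega)] at hke; exact absurd hke zne
      · rw [hn k (by omega), hp (-k) (by omega)] at hke; exact absurd hke.symm zne
      · rw [hn 0 (by omega), hn 1 (by omega)]
      · rw [hn 0 (by omega), hn (-1) (by omega)]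
  · -- P7 : -1 on m ≤ -2, 0 on m ≥ -1
    refine ⟨fun k hk => ?_, fun m n hmn hm hn' hs hfe => ?_, fun k hk hke => ?_⟩
    · rcases le_or_gt k (-2) with hh | hh
      · exact Or.inr (hp k hh)
      · exact Or.inl (hn k (by omega))
    · rcases le_or_gt m (-2) with h1 | h1 <;> rcases le_or_gt n (-2) with h2 | h2
      · rw [hp (m + n) (by omega), hp m h1]
      · rw [hp m h1, hn n (by omega)] at hfe; exact absurd hfe.symm zne
      · rw [hn m (by omega), hp n h2] at hfe; exact absurd hfe zne
      · rw [hn (m + n) (by omega), hn m (by omega)]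
    · rcases (by omega : 2 ≤ k ∨ k ≤ -2 ∨ k = 1 ∨ k = -1) with hh | hh | rfl | rfl
      · rw [hn k (by omega), hp (-k) (by omega)] at hke; exact absurd hke zne
      · rw [hp k hh, hn (-k) (by omega)] at hke; exact absurd hke.symm zne
      · rw [hn 0 (by omega), hn 1 (by omega)]
      · rw [hn 0 (by omega), hn (-1) (by omega)]
  · -- P8 : 0 on m ≤ -2, -1 on m ≥ -1
    refine ⟨fun k hk => ?_, fun m n hmn hm hn' hs hfe => ?_, fun k hk hke => ?_⟩
    · rcases le_or_gt k (-2) with hh | hh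
      · exact Or.inl (hp k hh)
      · exact Or.inr (hn k (by omega))
    · rcases le_or_gt m (-2) with h1 | h1 <;> rcases le_or_gt n (-2) with h2 | h2
      · rw [hp (m + n) (by omega), hp m h1]
      · rw [hp m h1, hn n (by omega)] at hfe; exact absurd hfe zne
      · rw [hn m (by omega), hp n h2] at hfe; exact absurd hfe.symm zne
      · rw [hn (m + n) (by omega), hn m (by omega)]
    · rcases (by omega : 2 ≤ k ∨ k ≤ -2 ∨ k = 1 ∨ k = -1) with hh | hh | rfl | rfl
      · rw [hn k (by omega), hp (-k) (by omega)] at hke; exact absurd hke.symm zne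
      · rw [hp k hh, hn (-k) (by omega)] at hke; exact absurd hke zne
      · rw [hn 0 (by omega), hn 1 (by omega)]
      · rw [hn 0 (by omega), hn (-1) (by omega)]

theorem stmt4 (f : ℤ → ℂ) : EqE f ↔ IsGradedType f :=
  ⟨fun h => classify f (good_of_eqE f h), fun h => eqE_of_good f (good_of_graded f h)⟩
end
end

section
/- Let φ : ℤ × ℤ → ℂ and define a bilinear product ∘ on the Witt algebra W by L_m ∘ L_n = φ(m, n)·L_{m+n}. Then (W, [·,·], ∘) is a post-Lie algebra if and only if φ(m, n) = (m − n)·f(m) for all m, n ∈ ℤ, where f : ℤ → ℂ is one of the following eight functions: (P1) f ≡ 0; (P2) f ≡ −1; (P3ᵃ) f(m) = −1 for m > 0, f(0) = a, f(m) = 0 for m < 0, for some a ∈ ℂ; (P4ᵃ) f(m) = 0 for m > 0, f(0) = a, f(m) = −1 for m < 0, for some a ∈ ℂ; (P5) f(m) = −1 for m ≥ 2, f(m) = 0 for m ≤ 1; (P6) f(m) = 0 for m ≥ 2, f(m) = −1 for m ≤ 1; (P7) f(m) = −1 for m ≤ −2, f(m) = 0 for m ≥ −1; (P8) f(m) = 0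 for m ≤ −2, f(m) = −1 for m ≥ −1. -/
noncomputable section

lemma ext3_s5 {T T' : W →ₗ[ℂ] W →ₗ[ℂ] W →ₗ[ℂ] W}
    (h : ∀ a b c : ℤ, T (L a) (L b) (L c) = T' (L a) (L b) (L c)) : T = T' := by
  ext a b c x
  simp only [LinearMap.coe_comp, Function.comp_apply, Finsupp.lsingle_apply]
  exact DFunLike.congr_fun (h a b c) x

def A1c (φ : ℤ → ℤ → ℂ) : Prop := ∀ m n p : ℤ,
  (m-n:ℂ) * φ (m+n) p = φ n p * φ m (n+p) - φ m p * φ n (m+p) - (φ m n - φ n m) * φ (m+n) p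
def A2c (φ : ℤ → ℤ → ℂ) : Prop := ∀ m n p : ℤ,
  (n-p:ℂ) * φ m (n+p) = (m+n-p:ℂ) * φ m n + (n-m-p:ℂ) * φ m p

theorem isPostLie_iff (br mul : W →ₗ[ℂ] W →ₗ[ℂ] W)
    (hbr : ∀ m n : ℤ, br (L m) (L n) = (m - n : ℂ) • L (m + n))
    (φ : ℤ → ℤ → ℂ)
    (hmul : ∀ m n : ℤ, mul (L m) (L n) = φ m n • L (m + n)) :
    IsPostLie br mul ↔ A1c φ ∧ A2c φ := by
  constructor
  · rintro ⟨h1, h2⟩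
    constructor
    · intro m n p
      have e := h1 (L m) (L n) (L p)
      simp only [hbr, hmul, map_smul, map_sub, LinearMap.smul_apply, LinearMap.sub_apply,
        hmul, smul_smul] at e
      rw [show m+(n+p) = m+n+p by ring, show n+(m+p) = m+n+p by ring,
        show n+m = m+n by ring] at e
      have e2 := congrArg (fun v : W => v (m+n+p)) e
      simp only [L, Finsupp.smul_apply, Finsupp.sub_apply, Finsupp.add_apply,
        Finsupp.single_eq_same, smul_eq_mul, mul_one] at e2
      linear_combination e2
    · intro m n p
      have e := h2 (L m) (L n) (L p)
      simp only [hbr, hmul, map_smul, map_add, LinearMap.smul_apply, LinearMap.add_apply,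
        hbr, smul_smul] at e
      rw [show m+(n+p) = m+n+p by ring, show n+(m+p) = m+n+p by ring] at e
      have e2 := congrArg (fun v : W => v (m+n+p)) e
      simp only [L, Finsupp.smul_apply, Finsupp.sub_apply, Finsupp.add_apply,
        Finsupp.single_eq_same, smul_eq_mul, mul_one] at e2
      push_cast at e2 ⊢
      linear_combination e2
  · rintro ⟨hA1, hA2⟩
    constructor
    · intro x y z
      -- key : mul (br x y) z + mul y (mul x z) + mul (mul x y) z
      --        = mul x (mul y z) + mul (mul y x) z
      have key : LinearMap.compr₂ br mul
          + ((((LinearMap.llcomp ℂ W W W).comp mul).compl₂ mul).flip)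
          + LinearMap.compr₂ mul mul
          = (((LinearMap.llcomp ℂ W W W).comp mul).compl₂ mul)
          + LinearMap.compr₂ mul.flip mul := by
        refine ext3_s5 fun a b c => ?_
        simp only [LinearMap.compr₂_apply, LinearMap.compl₂_apply, LinearMap.llcomp_apply,
          LinearMap.flip_apply, LinearMap.add_apply, LinearMap.coe_comp, Function.comp_apply,
          LinearMap.comp_apply]
        simp only [hbr, hmul, map_smul, LinearMap.smul_apply, hmul, smul_smul]
        rw [show a+(b+c) = a+b+c by ring, show b+(a+c) = a+b+c by ring,
          show b+a = a+b by ring]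
        rw [← add_smul, ← add_smul, ← add_smul]
        congr 1
        linear_combination hA1 a b c
      have h := DFunLike.congr_fun (DFunLike.congr_fun (DFunLike.congr_fun key x) y) z
      simp only [LinearMap.compr₂_apply, LinearMap.compl₂_apply, LinearMap.llcomp_apply,
        LinearMap.flip_apply, LinearMap.add_apply, LinearMap.coe_comp, Function.comp_apply,
        LinearMap.comp_apply] at h
      rw [map_sub, LinearMap.sub_apply]
      ext i
      have hi := congrArg (fun v : W => v i) h
      simp only [Finsupp.add_apply] at hi
      simp only [Finsupp.sub_apply]
      linear_combination hi
    · intro x y z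
      have key : (((LinearMap.llcomp ℂ W W W).comp mul).compl₂ br) =
          LinearMap.compr₂ mul br
          + ((((LinearMap.llcomp ℂ W W W).comp br).compl₂ mul).flip) := by
        refine ext3_s5 fun a b c => ?_
        simp only [LinearMap.compr₂_apply, LinearMap.compl₂_apply, LinearMap.llcomp_apply,
          LinearMap.flip_apply, LinearMap.add_apply, LinearMap.coe_comp, Function.comp_apply,
          LinearMap.comp_apply]
        simp only [hbr, hmul, map_smul, LinearMap.smul_apply, hbr, smul_smul]
        rw [show a+(b+c) = a+b+c by ring, show b+(a+c) = a+b+c by ring]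
        rw [← add_smul]
        congr 1
        have := hA2 a b c
        push_cast
        linear_combination this
      have h := DFunLike.congr_fun (DFunLike.congr_fun (DFunLike.congr_fun key x) y) z
      simpa only [LinearMap.compr₂_apply, LinearMap.compl₂_apply, LinearMap.llcomp_apply,
        LinearMap.flip_apply, LinearMap.add_apply, LinearMap.coe_comp, Function.comp_apply,
        LinearMap.comp_apply] using h

lemma intCast_ne {m n : ℤ} (h : m ≠ n) : (m : ℂ) - n ≠ 0 := by
  intro hc
  exact h (by exact_mod_cast sub_eq_zero.mp hc)

lemma A2c_exists {φ : ℤ → ℤ → ℂ} (hA2 : A2c φ) :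
    ∃ f : ℤ → ℂ, ∀ m n : ℤ, φ m n = (m - n : ℂ) * f m := by
  have hm : ∀ m n : ℤ, (m:ℂ) * φ m n = ((m:ℂ) - n) * φ m 0 := by
    intro m n
    have := hA2 m n 0
    rw [add_zero] at this
    push_cast at this
    linear_combination -this
  have hadd : ∀ n p : ℤ, n ≠ p → φ 0 (n+p) = φ 0 n + φ 0 p := by
    intro n p h
    have := hA2 0 n p
    push_cast at this
    have h2 := intCast_ne h
    have this2 : ((n:ℂ) - p) * φ 0 (n+p) = ((n:ℂ)-p) * (φ 0 n + φ 0 p) := by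
      linear_combination this
    exact mul_left_cancel₀ h2 this2
  have g0 : φ 0 0 = 0 := by
    have := hadd 0 1 (by norm_num)
    simpa using this
  have gneg : ∀ n : ℤ, n ≠ 0 → φ 0 (-n) = - φ 0 n := by
    intro n h
    have := hadd n (-n) (by omega)
    rw [show n + -n = 0 by ring, g0] at this
    linear_combination -this
  have g2 : φ 0 2 = 2 * φ 0 1 := by
    have h1 := hadd (-1) (-2) (by norm_num)
    have h2 := hadd (-1) (-3) (by norm_num)
    have h3 := hadd 2 (-4) (by norm_num)
    rw [show (-1:ℤ) + -2 = -3 by ring] at h1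
    rw [show (-1:ℤ) + -3 = -4 by ring] at h2
    rw [show (2:ℤ) + -4 = -2 by ring] at h3
    have e1 := gneg 1 (by norm_num)
    have e2 := gneg 2 (by norm_num)
    have e3 := gneg 3 (by norm_num)
    have e4 := gneg 4 (by norm_num)
    linear_combination -h1 - h2 - h3 - 2*e1
  have gk : ∀ k : ℕ, φ 0 (k:ℤ) = (k:ℂ) * φ 0 1 := by
    intro k
    induction k with
    | zero => simpa using g0
    | succ k ih =>
      rcases Nat.eq_or_lt_of_le (Nat.zero_le k) with hk | hkpos
      · simp [← hk]
      rcases eq_or_ne k 1 with hk1 | hk1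
      · subst hk1; push_cast; linear_combination g2
      · have := hadd k 1 (by exact_mod_cast hk1)
        push_cast
        push_cast at this ih
        linear_combination this + ih
  have gall : ∀ n : ℤ, φ 0 n = (n:ℂ) * φ 0 1 := by
    intro n
    rcases le_or_gt 0 n with h | h
    · lift n to ℕ using h; exact_mod_cast gk n
    · have hn : (0:ℤ) ≤ -n := by omega
      have := gneg (-n) (by omega)
      rw [neg_neg] at this
      have h2 : φ 0 (-n) = ((-n : ℤ):ℂ) * φ 0 1 := by
        lift -n to ℕ using hn with k hk
        exact_mod_cast gk k
      push_cast at h2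
      linear_combination this - h2
  refine ⟨fun m => if m = 0 then - φ 0 1 else φ m 0 / m, fun m n => ?_⟩
  beta_reduce
  rcases eq_or_ne m 0 with rfl | hm0
  · rw [if_pos rfl, gall n]
    push_cast
    ring
  · rw [if_neg hm0]
    have h := hm m n
    have : (m:ℂ) ≠ 0 := by exact_mod_cast hm0
    field_simp
    linear_combination h
lemma exists_A2c {φ : ℤ → ℤ → ℂ} {f : ℤ → ℂ}
    (hφ : ∀ m n : ℤ, φ m n = (m - n : ℂ) * f m) : A2c φ := by
  intro m n p
  rw [hφ, hφ, hφ]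
  push_cast
  ring

lemma A1c_iff_EqE {φ : ℤ → ℤ → ℂ} {f : ℤ → ℂ}
    (hφ : ∀ m n : ℤ, φ m n = (m - n : ℂ) * f m) : A1c φ ↔ EqE f := by
  constructor
  · intro hA1 m n
    rcases eq_or_ne m n with rfl | hmn
    · rw [sub_self, zero_mul]
    · have e := hA1 m n (m+n-1)
      simp only [hφ] at e
      push_cast at e
      linear_combination e
  · intro hE m n p
    simp only [hφ]
    push_cast
    linear_combination ((m:ℂ)+n-p) * hE m n

section rules
variable {f : ℤ → ℂ} (hE : EqE f)
include hE

lemma dich : ∀ m : ℤ, m ≠ 0 → f m = 0 ∨ f m = -1 := by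
  intro m hm
  have h := hE m 0
  rw [add_zero] at h
  push_cast at h
  rcases mul_eq_zero.mp h with h' | h'
  · exact absurd h' (by simpa using intCast_ne hm)
  · have h2 : f m * (1 + f m) = 0 := by linear_combination h'
    rcases mul_eq_zero.mp h2 with h3 | h3
    · exact Or.inl h3
    · exact Or.inr (by linear_combination h3)

lemma ruleA : ∀ m n : ℤ, m ≠ n → f m = -1 → f n = -1 → f (m + n) = -1 := by
  intro m n hmn hm hn
  have h := hE m n
  rw [hm, hn] at h
  rcases mul_eq_zero.mp h with h' | h'
  · exact absurd h' (intCast_ne hmn)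
  · linear_combination -h'

lemma ruleB : ∀ m n : ℤ, m ≠ n → f m = 0 → f n = 0 → f (m + n) = 0 := by
  intro m n hmn hm hn
  have h := hE m n
  rw [hm, hn] at h
  rcases mul_eq_zero.mp h with h' | h'
  · exact absurd h' (intCast_ne hmn)
  · linear_combination h'

end rules

lemma EqE_dual {f : ℤ → ℂ} (hE : EqE f) : EqE (fun m => -1 - f m) := by
  intro m n
  have h := hE m n
  simp only
  linear_combination h

lemma EqE_refl {f : ℤ → ℂ} (hE : EqE f) : EqE (fun m => f (-m)) := by
  intro m n
  have h := hE (-m) (-n)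
  push_cast at h
  simp only
  rw [show (-(m+n) : ℤ) = -m + -n by ring]
  linear_combination -h

lemma graded_dual {f : ℤ → ℂ} (h : IsGradedType (fun m => -1 - f m)) : IsGradedType f := by
  rcases h with h | h | ⟨a,hp,h0,hn⟩ | ⟨a,hp,h0,hn⟩ | ⟨hp,hn⟩ | ⟨hp,hn⟩ | ⟨hp,hn⟩ | ⟨hp,hn⟩
  · exact Or.inr (Or.inl (fun m => by linear_combination -(h m)))
  · exact Or.inl (fun m => by linear_combination -(h m))
  · refine Or.inr (Or.inr (Or.inr (Or.inl ⟨f 0, fun m hm => by linear_combination -(hp m hm),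
      rfl, fun m hm => by linear_combination -(hn m hm)⟩)))
  · refine Or.inr (Or.inr (Or.inl ⟨f 0, fun m hm => by linear_combination -(hp m hm),
      rfl, fun m hm => by linear_combination -(hn m hm)⟩))
  · exact Or.inr (Or.inr (Or.inr (Or.inr (Or.inr (Or.inl
      ⟨fun m hm => by linear_combination -(hp m hm), fun m hm => by linear_combination -(hn m hm)⟩)))))
  · exact Or.inr (Or.inr (Or.inr (Or.inr (Or.inl
      ⟨fun m hm => by linear_combination -(hp m hm), fun m hm => by linear_combination -(hn m hm)⟩))))
  · exact Or.inr (Or.inr (Or.inr (Or.inr (Or.inr (Or.inr (Or.inr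
      ⟨fun m hm => by linear_combination -(hp m hm), fun m hm => by linear_combination -(hn m hm)⟩))))))
  · exact Or.inr (Or.inr (Or.inr (Or.inr (Or.inr (Or.inr (Or.inl
      ⟨fun m hm => by linear_combination -(hp m hm), fun m hm => by linear_combination -(hn m hm)⟩))))))

/-- Case `f 1 = 0, f (-1) = 0`, with a witness `f n₀ = -1`, `n₀ ≥ 2`: P5 clause. -/
lemma case00pos {f : ℤ → ℂ} (hE : EqE f) (h1 : f 1 = 0) (h9 : f (-1) = 0)
    (n₀ : ℤ) (hge : 2 ≤ n₀) (hf : f n₀ = -1) :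
    (∀ m : ℤ, 2 ≤ m → f m = -1) ∧ (∀ m : ℤ, m ≤ 1 → f m = 0) := by
  have h0 : f 0 = 0 := by
    have := ruleB hE 1 (-1) (by norm_num) h1 h9
    norm_num at this
    exact this
  have up : ∀ k : ℕ, f (n₀ + k) = -1 := by
    intro k
    induction k with
    | zero => simpa using hf
    | succ k ih =>
      rcases dich hE (n₀ + (k+1 : ℕ)) (by push_cast; omega) with h | h
      · exfalso
        have h2 := ruleB hE (n₀ + (k+1 : ℕ)) (-1) (by push_cast; omega) h h9
        push_cast at h2 ih
        rw [show (n₀ + ((k:ℤ)+1) + -1) = n₀ + k by ring] at h2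
        rw [ih] at h2
        norm_num at h2
      · exact h
  have down : ∀ k : ℕ, 2 ≤ n₀ - k → f (n₀ - k) = -1 := by
    intro k
    induction k with
    | zero => intro _; simpa using hf
    | succ k ih =>
      intro hk
      rcases dich hE (n₀ - (k+1 : ℕ)) (by push_cast at hk ⊢; omega) with h | h
      · exfalso
        have h2 := ruleB hE (n₀ - (k+1 : ℕ)) 1 (by push_cast at hk ⊢; omega) h h1
        push_cast at h2 hk
        rw [show (n₀ - ((k:ℤ)+1) + 1) = n₀ - (k:ℤ) by ring] at h2
        rw [ih (by omega)] at h2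
        norm_num at h2
      · exact h
  have allpos : ∀ m : ℤ, 2 ≤ m → f m = -1 := by
    intro m hm
    rcases le_or_gt n₀ m with h | h
    · have h2 := up (m - n₀).toNat
      rwa [show n₀ + ((m - n₀).toNat : ℤ) = m by omega] at h2
    · have h2 := down (n₀ - m).toNat (by omega)
      rwa [show n₀ - ((n₀ - m).toNat : ℤ) = m by omega] at h2
  have h2' : f 2 = -1 := allpos 2 le_rfl
  have negs : ∀ k : ℕ, f (-(k:ℤ)) = 0 := by
    intro k
    induction k using Nat.strong_induction_on with
    | _ k ih =>
      match k with
      | 0 => simpa using h0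
      | 1 => simpa using h9
      | (k+2) =>
        push_cast
        rcases dich hE (-((k:ℤ)+2)) (by omega) with h | h
        · exact h
        · exfalso
          have hA := ruleA hE (-((k:ℤ)+2)) 2 (by omega) h h2'
          rw [show (-((k:ℤ)+2) + 2) = -(k:ℤ) by ring] at hA
          have hik := ih k (by omega)
          rw [hik] at hA
          norm_num at hA
  refine ⟨allpos, fun m hm => ?_⟩
  rcases eq_or_lt_of_le hm with rfl | hm'
  · exact h1
  · have h2 := negs (-m).toNat
    rwa [show (-(((-m).toNat : ℤ))) = m by omega] at h2

lemma case00 {f : ℤ → ℂ} (hE : EqE f) (h1 : f 1 = 0) (h9 : f (-1) = 0) :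
    IsGradedType f := by
  have h0 : f 0 = 0 := by
    have := ruleB hE 1 (-1) (by norm_num) h1 h9
    norm_num at this
    exact this
  by_cases hall : ∀ m, f m = 0
  · exact Or.inl hall
  push_neg at hall
  obtain ⟨n₀, hn₀⟩ := hall
  have hne : n₀ ≠ 0 := by rintro rfl; exact hn₀ h0
  have hfn : f n₀ = -1 := (dich hE n₀ hne).resolve_left hn₀
  have hne1 : n₀ ≠ 1 := by rintro rfl; exact hn₀ h1
  have hne9 : n₀ ≠ -1 := by rintro rfl; exact hn₀ h9
  rcases le_or_gt 2 n₀ with h | h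
  · exact Or.inr (Or.inr (Or.inr (Or.inr (Or.inl (case00pos hE h1 h9 n₀ h hfn)))))
  · have hle : 2 ≤ -n₀ := by omega
    have hg := case00pos (EqE_refl hE) (by simpa using h9) (by simpa using h1)
      (-n₀) hle (by simpa using hfn)
    refine Or.inr (Or.inr (Or.inr (Or.inr (Or.inr (Or.inr (Or.inl ⟨fun m hm => ?_, fun m hm => ?_⟩))))))
    · have := hg.1 (-m) (by omega)
      simpa using this
    · have := hg.2 (-m) (by omega)
      simpa using this

/-- Case `f 1 = -1, f (-1) = 0`: P3. -/
lemma caseP3 {f : ℤ → ℂ} (hE : EqE f) (h1 : f 1 = -1) (h9 : f (-1) = 0) :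
    IsGradedType f := by
  have pos : ∀ k : ℕ, f (1 + k) = -1 := by
    intro k
    induction k with
    | zero => simpa using h1
    | succ k ih =>
      rcases dich hE (1 + (k+1 : ℕ)) (by push_cast; omega) with h | h
      · exfalso
        have h2 := ruleB hE (1 + (k+1 : ℕ)) (-1) (by push_cast; omega) h h9
        push_cast at h2 ih
        rw [show ((1:ℤ) + ((k:ℤ)+1) + -1) = 1 + (k:ℤ) by ring] at h2
        rw [ih] at h2
        norm_num at h2
      · exact h
  have neg : ∀ k : ℕ, f (-1 - k) = 0 := by
    intro k
    induction k with
    | zero => simpa using h9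
    | succ k ih =>
      rcases dich hE (-1 - (k+1 : ℕ)) (by push_cast; omega) with h | h
      · exact h
      · exfalso
        have h2 := ruleA hE (-1 - (k+1 : ℕ)) 1 (by push_cast; omega) h h1
        push_cast at h2 ih
        rw [show ((-1:ℤ) - ((k:ℤ)+1) + 1) = -1 - (k:ℤ) by ring] at h2
        rw [ih] at h2
        norm_num at h2
  refine Or.inr (Or.inr (Or.inl ⟨f 0, fun m hm => ?_, rfl, fun m hm => ?_⟩))
  · have h2 := pos (m - 1).toNat
    rwa [show (1 + ((m - 1).toNat : ℤ)) = m by omega] at h2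
  · have h2 := neg (-1 - m).toNat
    rwa [show ((-1:ℤ) - ((-1 - m).toNat : ℤ)) = m by omega] at h2

lemma EqE_graded {f : ℤ → ℂ} (hE : EqE f) : IsGradedType f := by
  rcases dich hE 1 one_ne_zero with h1 | h1 <;>
    rcases dich hE (-1) (by norm_num) with h9 | h9
  · exact case00 hE h1 h9
  · -- f 1 = 0, f (-1) = -1 : P4 via dual of P3
    have := caseP3 (EqE_dual hE) (by simp [h1]) (by simp [h9])
    exact graded_dual this
  · exact caseP3 hE h1 h9
  · -- both -1: dual of case00
    have := case00 (EqE_dual hE) (by simp [h1]) (by simp [h9])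
    exact graded_dual this

lemma key_EqE {f : ℤ → ℂ} (H0 : ∀ m : ℤ, m ≠ 0 → f m = 0 ∨ f m = -1)
    (HA : ∀ m n : ℤ, m ≠ n → f m = -1 → f n = -1 → f (m + n) = -1)
    (HB : ∀ m n : ℤ, m ≠ n → f m = 0 → f n = 0 → f (m + n) = 0) : EqE f := by
  intro m n
  rcases eq_or_ne m n with rfl | hmn
  · rw [sub_self, zero_mul]
  suffices h : f (m+n) + f m * f (m+n) + f n * f (m+n) - f m * f n = 0 by
    rw [h, mul_zero]
  rcases eq_or_ne m 0 with rfl | hm0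
  · rw [zero_add]
    rcases H0 n (by omega) with h | h <;> rw [h] <;> ring
  rcases eq_or_ne n 0 with rfl | hn0
  · rw [add_zero]
    rcases H0 m hm0 with h | h <;> rw [h] <;> ring
  rcases H0 m hm0 with hm | hm <;> rcases H0 n hn0 with hn | hn
  · rw [HB m n hmn hm hn, hm, hn]; ring
  · rw [hm, hn]; ring
  · rw [hm, hn]; ring
  · rw [HA m n hmn hm hn, hm, hn]; ring

lemma graded_EqE {f : ℤ → ℂ} (h : IsGradedType f) : EqE f := by
  have neg1_ne : (-1 : ℂ) ≠ 0 := by norm_num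
  rcases h with h | h | ⟨a,hp,h0,hn⟩ | ⟨a,hp,h0,hn⟩ | ⟨hp,hn⟩ | ⟨hp,hn⟩ | ⟨hp,hn⟩ | ⟨hp,hn⟩
  · exact key_EqE (fun m _ => Or.inl (h m))
      (fun m n _ hm _ => absurd (h m ▸ hm) (by norm_num))
      (fun m n _ _ _ => h _)
  · exact key_EqE (fun m _ => Or.inr (h m))
      (fun m n _ _ _ => h _)
      (fun m n _ hm _ => absurd (h m ▸ hm).symm (by norm_num))
  · refine key_EqE (fun m hm => ?_) (fun m n hmn hm hn' => ?_) (fun m n hmn hm hn' => ?_)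
    · rcases lt_trichotomy m 0 with h | h | h
      · exact Or.inl (hn m h)
      · omega
      · exact Or.inr (hp m h)
    · have h1 : 0 ≤ m := by by_contra h'; rw [hn m (by omega)] at hm; norm_num at hm
      have h2 : 0 ≤ n := by by_contra h'; rw [hn n (by omega)] at hn'; norm_num at hn'
      exact hp _ (by omega)
    · have h1 : m ≤ 0 := by by_contra h'; rw [hp m (by omega)] at hm; norm_num at hm
      have h2 : n ≤ 0 := by by_contra h'; rw [hp n (by omega)] at hn'; norm_num at hn'
      exact hn _ (by omega)
  · refine key_EqE (fun m hm => ?_) (fun m n hmn hm hn' => ?_) (fun m n hmn hm hn' => ?_)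
    · rcases lt_trichotomy m 0 with h | h | h
      · exact Or.inr (hn m h)
      · omega
      · exact Or.inl (hp m h)
    · have h1 : m ≤ 0 := by by_contra h'; rw [hp m (by omega)] at hm; norm_num at hm
      have h2 : n ≤ 0 := by by_contra h'; rw [hp n (by omega)] at hn'; norm_num at hn'
      exact hn _ (by omega)
    · have h1 : 0 ≤ m := by by_contra h'; rw [hn m (by omega)] at hm; norm_num at hm
      have h2 : 0 ≤ n := by by_contra h'; rw [hn n (by omega)] at hn'; norm_num at hn'
      exact hp _ (by omega)
  · refine key_EqE (fun m _ => ?_) (fun m n hmn hm hn' => ?_) (fun m n hmn hm hn' => ?_)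
    · rcases le_or_gt m 1 with h | h
      · exact Or.inl (hn m h)
      · exact Or.inr (hp m (by omega))
    · have h1 : 2 ≤ m := by by_contra h'; rw [hn m (by omega)] at hm; norm_num at hm
      have h2 : 2 ≤ n := by by_contra h'; rw [hn n (by omega)] at hn'; norm_num at hn'
      exact hp _ (by omega)
    · have h1 : m ≤ 1 := by by_contra h'; rw [hp m (by omega)] at hm; norm_num at hm
      have h2 : n ≤ 1 := by by_contra h'; rw [hp n (by omega)] at hn'; norm_num at hn'
      exact hn _ (by omega)
  · refine key_EqE (fun m _ => ?_) (fun m n hmn hm hn' => ?_) (fun m n hmn hm hn' => ?_)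
    · rcases le_or_gt m 1 with h | h
      · exact Or.inr (hn m h)
      · exact Or.inl (hp m (by omega))
    · have h1 : m ≤ 1 := by by_contra h'; rw [hp m (by omega)] at hm; norm_num at hm
      have h2 : n ≤ 1 := by by_contra h'; rw [hp n (by omega)] at hn'; norm_num at hn'
      exact hn _ (by omega)
    · have h1 : 2 ≤ m := by by_contra h'; rw [hn m (by omega)] at hm; norm_num at hm
      have h2 : 2 ≤ n := by by_contra h'; rw [hn n (by omega)] at hn'; norm_num at hn'
      exact hp _ (by omega)
  · refine key_EqE (fun m _ => ?_) (fun m n hmn hm hn' => ?_) (fun m n hmn hm hn' => ?_)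
    · rcases le_or_gt m (-2) with h | h
      · exact Or.inr (hp m h)
      · exact Or.inl (hn m (by omega))
    · have h1 : m ≤ -2 := by by_contra h'; rw [hn m (by omega)] at hm; norm_num at hm
      have h2 : n ≤ -2 := by by_contra h'; rw [hn n (by omega)] at hn'; norm_num at hn'
      exact hp _ (by omega)
    · have h1 : -1 ≤ m := by by_contra h'; rw [hp m (by omega)] at hm; norm_num at hm
      have h2 : -1 ≤ n := by by_contra h'; rw [hp n (by omega)] at hn'; norm_num at hn'
      exact hn _ (by omega)
  · refine key_EqE (fun m _ => ?_) (fun m n hmn hm hn' => ?_) (fun m n hmn hm hn' => ?_)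
    · rcases le_or_gt m (-2) with h | h
      · exact Or.inl (hp m h)
      · exact Or.inr (hn m (by omega))
    · have h1 : -1 ≤ m := by by_contra h'; rw [hp m (by omega)] at hm; norm_num at hm
      have h2 : -1 ≤ n := by by_contra h'; rw [hp n (by omega)] at hn'; norm_num at hn'
      exact hn _ (by omega)
    · have h1 : m ≤ -2 := by by_contra h'; rw [hn m (by omega)] at hm; norm_num at hm
      have h2 : n ≤ -2 := by by_contra h'; rw [hn n (by omega)] at hn'; norm_num at hn'
      exact hp _ (by omega)


theorem stmt5 (br mul : W →ₗ[ℂ] W →ₗ[ℂ] W)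
    (hbr : ∀ m n : ℤ, br (L m) (L n) = (m - n : ℂ) • L (m + n))
    (φ : ℤ → ℤ → ℂ)
    (hmul : ∀ m n : ℤ, mul (L m) (L n) = φ m n • L (m + n)) :
    IsPostLie br mul ↔
      ∃ f : ℤ → ℂ, (∀ m n : ℤ, φ m n = (m - n : ℂ) * f m) ∧ IsGradedType f := by
  rw [isPostLie_iff br mul hbr φ hmul]
  constructor
  · rintro ⟨hA1, hA2⟩
    obtain ⟨f, hf⟩ := A2c_exists hA2
    exact ⟨f, hf, EqE_graded ((A1c_iff_EqE hf).mp hA1)⟩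
  · rintro ⟨f, hf, hg⟩
    exact ⟨(A1c_iff_EqE hf).mpr (graded_EqE hg), exists_A2c hf⟩
end
end

section
/- Let f : ℤ → ℂ satisfy equation (E). Then the bilinear bracket defined on the free ℂ-module with basis {L_m : m ∈ ℤ} by {L_m, L_n} := (m − n)·(f(m) + f(n) + 1)·L_{m+n} is a Lie bracket, i.e. it is antisymmetric and satisfies the Jacobi identity. -/
noncomputable section

theorem stmt6 (f : ℤ → ℂ) (hf : EqE f) (b : W →ₗ[ℂ] W →ₗ[ℂ] W)
    (hb : ∀ m n : ℤ,
      b (L m) (L n) = ((m - n : ℂ) * (f m + f n + 1)) • L (m + n)) :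
    (∀ x y : W, b x y = -b y x) ∧
    (∀ x y z : W, b x (b y z) + b y (b z x) + b z (b x y) = 0) := by
  have hsingle : ∀ (a : ℤ) (c : ℂ), Finsupp.single a c = c • L a := by
    intro a c
    rw [L, Finsupp.smul_single, smul_eq_mul, mul_one]
  -- antisymmetry on basis
  have anti0 : ∀ m n : ℤ, b (L m) (L n) = -b (L n) (L m) := by
    intro m n
    rw [hb, hb, show n + m = m + n from add_comm n m, ← neg_smul]
    congr 1
    ring
  -- antisymmetry in general
  have anti1 : ∀ (m : ℤ) (y : W), b (L m) y = -b y (L m) := by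
    intro m y
    induction y using Finsupp.induction_linear with
    | zero => simp
    | add u v hu hv => simp only [map_add, LinearMap.add_apply, hu, hv]; abel
    | single a c =>
        rw [hsingle, map_smul, map_smul, LinearMap.smul_apply, anti0, smul_neg]
  have anti : ∀ x y : W, b x y = -b y x := by
    intro x y
    induction x using Finsupp.induction_linear with
    | zero => simp
    | add u v hu hv => simp only [map_add, LinearMap.add_apply, hu, hv]; abel
    | single a c =>
        rw [hsingle, map_smul, map_smul, LinearMap.smul_apply, anti1, smul_neg]
  refine ⟨anti, ?_⟩
  -- Jacobi on basis
  have jac0 : ∀ m n p : ℤ,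
      b (L m) (b (L n) (L p)) + b (L n) (b (L p) (L m)) + b (L p) (b (L m) (L n)) = 0 := by
    intro m n p
    rw [hb, hb, hb, map_smul, map_smul, map_smul, hb, hb, hb,
      show p + m = m + p from add_comm p m,
      show n + (m + p) = m + (n + p) by ring,
      show p + (m + n) = m + (n + p) by ring,
      smul_smul, smul_smul, smul_smul, ← add_smul, ← add_smul]
    convert zero_smul ℂ (L (m + (n + p))) using 2
    have h1 := hf n p
    have h2 := hf m p
    have h3 := hf m n
    push_cast at h1 h2 h3 ⊢
    linear_combination ((m : ℂ) - n - p) * h1 + ((m : ℂ) + p - n) * h2 +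
      ((p : ℂ) - m - n) * h3
  -- extend in the last variable
  have jac1 : ∀ (m n : ℤ) (z : W),
      b (L m) (b (L n) z) + b (L n) (b z (L m)) + b z (b (L m) (L n)) = 0 := by
    intro m n z
    induction z using Finsupp.induction_linear with
    | zero => simp
    | add u v hu hv =>
        simp only [map_add, LinearMap.add_apply]
        calc _ = (b (L m) (b (L n) u) + b (L n) (b u (L m)) + b u (b (L m) (L n)))
              + (b (L m) (b (L n) v) + b (L n) (b v (L m)) + b v (b (L m) (L n))) := by abel
        _ = 0 := by rw [hu, hv, add_zero]
    | single a c =>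
        rw [hsingle]
        simp only [map_smul, LinearMap.smul_apply, ← smul_add, jac0 m n a, smul_zero]
  -- extend in the middle variable
  have jac2 : ∀ (m : ℤ) (y z : W),
      b (L m) (b y z) + b y (b z (L m)) + b z (b (L m) y) = 0 := by
    intro m y z
    induction y using Finsupp.induction_linear with
    | zero => simp
    | add u v hu hv =>
        simp only [map_add, LinearMap.add_apply]
        calc _ = (b (L m) (b u z) + b u (b z (L m)) + b z (b (L m) u))
              + (b (L m) (b v z) + b v (b z (L m)) + b z (b (L m) v)) := by abel
        _ = 0 := by rw [hu, hv, add_zero]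
    | single a c =>
        rw [hsingle]
        simp only [map_smul, LinearMap.smul_apply, ← smul_add, jac1 m a z, smul_zero]
  intro x y z
  induction x using Finsupp.induction_linear with
  | zero => simp
  | add u v hu hv =>
      simp only [map_add, LinearMap.add_apply]
      calc _ = (b u (b y z) + b y (b z u) + b z (b u y))
            + (b v (b y z) + b y (b z v) + b z (b v y)) := by abel
      _ = 0 := by rw [hu, hv, add_zero]
  | single a c =>
      rw [hsingle]
      simp only [map_smul, LinearMap.smul_apply, ← smul_add, jac2 a y z, smul_zero]
end
end

section
/- Fix a nonzero integer ν, let φ, ϱ : ℤ × ℤ → ℂ with ϱ not identically zero, and define a bilinear product ∘ on the Witt algebra W by L_m ∘ L_n = φ(m, n)·L_{m+n} + ϱ(m, n)·L_{m+n+ν} for all m, n ∈ ℤ. Then (W, [·,·], ∘) is a post-Lie algebra if and only if there exist functions f, g : ℤ → ℂ such that φ(m, n) = (m − n)·f(m) and ϱ(m, n) = (m − n + ν)·g(m) for all m, n ∈ ℤ, f satisfies equation (E), and (f, g, ν) satisfy equations (E2) and (E3). -/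
noncomputable section

lemma Lcomb2 {i j : ℤ} (hij : i ≠ j) {a b c d : ℂ}
    (h : a • L i + b • L j = c • L i + d • L j) : a = c ∧ b = d := by
  constructor
  · have := congrArg (fun w : W => w i) h
    simpa [L, Finsupp.single_apply, hij.symm] using this
  · have := congrArg (fun w : W => w j) h
    simpa [L, Finsupp.single_apply, hij] using this

lemma Lcomb3 {i j k : ℤ} (hij : i ≠ j) (hik : i ≠ k) (hjk : j ≠ k)
    {a b c d e f : ℂ}
    (h : a • L i + b • L j + c • L k = d • L i + e • L j + f • L k) :
    a = d ∧ b = e ∧ c = f := by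
  refine ⟨?_, ?_, ?_⟩
  · have := congrArg (fun w : W => w i) h
    simpa [L, Finsupp.single_apply, hij.symm, hik.symm] using this
  · have := congrArg (fun w : W => w j) h
    simpa [L, Finsupp.single_apply, hij, hjk.symm] using this
  · have := congrArg (fun w : W => w k) h
    simpa [L, Finsupp.single_apply, hik, hjk] using this

lemma lin_of_off (u : ℤ → ℂ) (h : ∀ n p : ℤ, n ≠ p → u (n + p) = u n + u p) :
    ∀ n : ℤ, u n = n * u 1 := by
  have h0 : u 0 = 0 := by
    have := h 1 0 (by omega); simpa using this
  have hneg : ∀ k : ℕ, u (-(k : ℤ)) = -(k : ℤ) * u 1 := by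
    intro k; induction k with
    | zero => simpa using h0
    | succ k ih =>
      have hh := h (-(k : ℤ) - 1) 1 (by omega)
      have e : -(k : ℤ) - 1 + 1 = -(k : ℤ) := by ring
      rw [e] at hh
      have e2 : -((k : ℤ) + 1) = -(k : ℤ) - 1 := by ring
      push_cast
      rw [e2]
      linear_combination ih - hh
  intro n
  rcases lt_trichotomy n 0 with hn | hn | hn
  · obtain ⟨k, rfl⟩ : ∃ k : ℕ, n = -(k : ℤ) := ⟨n.natAbs, by omega⟩
    have := hneg k; push_cast at this ⊢; exact this
  · simp [hn, h0]
  · have hodd := h n (-n) (by omega)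
    simp at hodd
    rw [h0] at hodd
    obtain ⟨k, hk⟩ : ∃ k : ℕ, -n = -(k : ℤ) := ⟨n.natAbs, by omega⟩
    have h2 := hneg k
    rw [← hk] at h2
    have hc : ((k : ℕ) : ℂ) = (n : ℂ) := by exact_mod_cast (by omega : ((k:ℕ):ℤ) = n)
    push_cast at h2 hc
    rw [hc] at h2
    linear_combination -hodd - h2

section Main

variable (ν : ℤ) (br mul : W →ₗ[ℂ] W →ₗ[ℂ] W) (φ ϱ : ℤ → ℤ → ℂ)

/-- Forward extraction from axiom 2. -/
lemma extract2 (hν : ν ≠ 0)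
    (hbr : ∀ m n : ℤ, br (L m) (L n) = (m - n : ℂ) • L (m + n))
    (hmul : ∀ m n : ℤ,
      mul (L m) (L n) = φ m n • L (m + n) + ϱ m n • L (m + n + ν))
    (hax2 : ∀ x y z : W, mul x (br y z) = br (mul x y) z + br y (mul x z))
    (m n p : ℤ) :
    ((n : ℂ) - p) * φ m (n + p)
        = φ m n * ((m : ℂ) + n - p) + φ m p * ((n : ℂ) - m - p) ∧
      ((n : ℂ) - p) * ϱ m (n + p)
        = ϱ m n * ((m : ℂ) + n + ν - p) + ϱ m p * ((n : ℂ) - m - p - ν) := by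
  have hw := hax2 (L m) (L n) (L p)
  simp only [hbr, hmul, map_add, map_sub, map_smul, LinearMap.add_apply,
    LinearMap.sub_apply, LinearMap.smul_apply, smul_add, smul_sub, smul_smul] at hw
  have ea : m + (n + p) = m + n + p := by ring
  have ec : m + n + ν + p = m + n + p + ν := by ring
  have ed : n + (m + p) = m + n + p := by ring
  have ee : n + (m + p + ν) = m + n + p + ν := by ring
  rw [ea, ec, ed, ee] at hw
  push_cast at hw
  have key : (((n : ℂ) - p) * φ m (n + p)) • L (m + n + p)
        + (((n : ℂ) - p) * ϱ m (n + p)) • L (m + n + p + ν)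
      = (φ m n * ((m : ℂ) + n - p) + φ m p * ((n : ℂ) - m - p)) • L (m + n + p)
        + (ϱ m n * ((m : ℂ) + n + ν - p) + ϱ m p * ((n : ℂ) - m - p - ν))
            • L (m + n + p + ν) := by
    linear_combination (norm := module) hw
  exact Lcomb2 (by omega) key

/-- Forward extraction from axiom 1. -/
lemma extract1 (hν : ν ≠ 0)
    (hbr : ∀ m n : ℤ, br (L m) (L n) = (m - n : ℂ) • L (m + n))
    (hmul : ∀ m n : ℤ,
      mul (L m) (L n) = φ m n • L (m + n) + ϱ m n • L (m + n + ν))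
    (hax1 : ∀ x y z : W, mul (br x y) z =
      mul x (mul y z) - mul y (mul x z) - mul (mul x y - mul y x) z)
    (m n p : ℤ) :
    (((m : ℂ) - n) * φ (m + n) p
        = φ n p * φ m (n + p) - φ m p * φ n (m + p)
          - φ m n * φ (m + n) p + φ n m * φ (m + n) p) ∧
      (((m : ℂ) - n) * ϱ (m + n) p
        = φ n p * ϱ m (n + p) + ϱ n p * φ m (n + p + ν)
          - φ m p * ϱ n (m + p) - ϱ m p * φ n (m + p + ν)
          - φ m n * ϱ (m + n) p - ϱ m n * φ (m + n + ν) p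
          + φ n m * ϱ (m + n) p + ϱ n m * φ (m + n + ν) p) ∧
      ((0 : ℂ)
        = ϱ n p * ϱ m (n + p + ν) - ϱ m p * ϱ n (m + p + ν)
          - ϱ m n * ϱ (m + n + ν) p + ϱ n m * ϱ (m + n + ν) p) := by
  have hw := hax1 (L m) (L n) (L p)
  simp only [hbr, hmul, map_add, map_sub, map_smul, LinearMap.add_apply,
    LinearMap.sub_apply, LinearMap.smul_apply, smul_add, smul_sub, smul_smul] at hw
  have eh : n + m = m + n := by ring
  have ea : m + (n + p) = m + n + p := by ring
  have em : m + (n + p + ν) = m + n + p + ν := by ring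
  have ed : n + (m + p) = m + n + p := by ring
  have en : n + (m + p + ν) = m + n + p + ν := by ring
  have ec : m + n + ν + p = m + n + p + ν := by ring
  rw [eh, ea, em, ed, en, ec] at hw
  push_cast at hw
  have key : (((m : ℂ) - n) * φ (m + n) p) • L (m + n + p)
        + (((m : ℂ) - n) * ϱ (m + n) p) • L (m + n + p + ν)
        + (0 : ℂ) • L (m + n + p + ν + ν)
      = (φ n p * φ m (n + p) - φ m p * φ n (m + p)
          - φ m n * φ (m + n) p + φ n m * φ (m + n) p) • L (m + n + p)
        + (φ n p * ϱ m (n + p) + ϱ n p * φ m (n + p + ν)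
          - φ m p * ϱ n (m + p) - ϱ m p * φ n (m + p + ν)
          - φ m n * ϱ (m + n) p - ϱ m n * φ (m + n + ν) p
          + φ n m * ϱ (m + n) p + ϱ n m * φ (m + n + ν) p) • L (m + n + p + ν)
        + (ϱ n p * ϱ m (n + p + ν) - ϱ m p * ϱ n (m + p + ν)
          - ϱ m n * ϱ (m + n + ν) p + ϱ n m * ϱ (m + n + ν) p)
            • L (m + n + p + ν + ν) := by
    linear_combination (norm := module) hw
  exact Lcomb3 (by omega) (by omega) (by omega) key


/-- Backward: axiom 2 on basis vectors. -/
lemma base2 (hν : ν ≠ 0)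
    (hbr : ∀ m n : ℤ, br (L m) (L n) = (m - n : ℂ) • L (m + n))
    (hmul : ∀ m n : ℤ,
      mul (L m) (L n) = φ m n • L (m + n) + ϱ m n • L (m + n + ν))
    (f g : ℤ → ℂ)
    (hf : ∀ m n : ℤ, φ m n = ((m : ℂ) - n) * f m)
    (hg : ∀ m n : ℤ, ϱ m n = ((m : ℂ) - n + ν) * g m)
    (m n p : ℤ) :
    mul (L m) (br (L n) (L p)) = br (mul (L m) (L n)) (L p) + br (L n) (mul (L m) (L p)) := by
  simp only [hbr, hmul, map_add, map_sub, map_smul, LinearMap.add_apply,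
    LinearMap.sub_apply, LinearMap.smul_apply, smul_add, smul_sub, smul_smul]
  have ea : m + (n + p) = m + n + p := by ring
  have ec : m + n + ν + p = m + n + p + ν := by ring
  have ed : n + (m + p) = m + n + p := by ring
  have ee : n + (m + p + ν) = m + n + p + ν := by ring
  rw [ea, ec, ed, ee]
  simp only [hf, hg]
  match_scalars <;> push_cast <;> ring

/-- Backward: axiom 1 on basis vectors, in expanded form. -/
lemma base1 (hν : ν ≠ 0)
    (hbr : ∀ m n : ℤ, br (L m) (L n) = (m - n : ℂ) • L (m + n))
    (hmul : ∀ m n : ℤ,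
      mul (L m) (L n) = φ m n • L (m + n) + ϱ m n • L (m + n + ν))
    (f g : ℤ → ℂ)
    (hf : ∀ m n : ℤ, φ m n = ((m : ℂ) - n) * f m)
    (hg : ∀ m n : ℤ, ϱ m n = ((m : ℂ) - n + ν) * g m)
    (hE : EqE f) (hE2 : EqE2 ν g) (hE3 : EqE3 ν f g)
    (m n p : ℤ) :
    mul (br (L m) (L n)) (L p) =
      mul (L m) (mul (L n) (L p)) - mul (L n) (mul (L m) (L p))
        - mul (mul (L m) (L n)) (L p) + mul (mul (L n) (L m)) (L p) := by
  simp only [hbr, hmul, map_add, map_sub, map_smul, LinearMap.add_apply,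
    LinearMap.sub_apply, LinearMap.smul_apply, smul_add, smul_sub, smul_smul]
  have eh : n + m = m + n := by ring
  have ea : m + (n + p) = m + n + p := by ring
  have em : m + (n + p + ν) = m + n + p + ν := by ring
  have ed : n + (m + p) = m + n + p := by ring
  have en : n + (m + p + ν) = m + n + p + ν := by ring
  have ec : m + n + ν + p = m + n + p + ν := by ring
  rw [eh, ea, em, ed, en, ec]
  simp only [hf, hg]
  match_scalars <;> push_cast
  · linear_combination ((m : ℂ) + n - p) * hE m n
  · linear_combination ((m : ℂ) + n + ν - p) * hE3 m n
  · linear_combination (-((m : ℂ) + n + ν + ν - p)) * hE2 m n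

lemma postlie_of (hν : ν ≠ 0)
    (hbr : ∀ m n : ℤ, br (L m) (L n) = (m - n : ℂ) • L (m + n))
    (hmul : ∀ m n : ℤ,
      mul (L m) (L n) = φ m n • L (m + n) + ϱ m n • L (m + n + ν))
    (f g : ℤ → ℂ)
    (hf : ∀ m n : ℤ, φ m n = ((m : ℂ) - n) * f m)
    (hg : ∀ m n : ℤ, ϱ m n = ((m : ℂ) - n + ν) * g m)
    (hE : EqE f) (hE2 : EqE2 ν g) (hE3 : EqE3 ν f g) :
    IsPostLie br mul := by
  constructor
  · have base := base1 ν br mul φ ϱ hν hbr hmul f g hf hg hE hE2 hE3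
    suffices h : ∀ x y z : W, mul (br x y) z =
        mul x (mul y z) - mul y (mul x z) - mul (mul x y) z + mul (mul y x) z by
      intro x y z
      rw [h]
      simp only [map_sub, LinearMap.sub_apply]
      abel
    intro x y z
    induction x using Finsupp.induction_linear with
    | zero => simp
    | add x1 x2 ih1 ih2 =>
      simp only [map_add, LinearMap.add_apply]
      rw [ih1, ih2]; abel
    | single a c =>
      induction y using Finsupp.induction_linear with
      | zero => simp
      | add y1 y2 ih1 ih2 =>
        simp only [map_add, LinearMap.add_apply]
        rw [ih1, ih2]; abel
      | single b d =>
        induction z using Finsupp.induction_linear with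
        | zero => simp
        | add z1 z2 ih1 ih2 =>
          simp only [map_add, LinearMap.add_apply]
          rw [ih1, ih2]; abel
        | single e w =>
          have sa : (Finsupp.single a c : W) = c • L a := by rw [L, Finsupp.smul_single, smul_eq_mul, mul_one]
          have sb : (Finsupp.single b d : W) = d • L b := by rw [L, Finsupp.smul_single, smul_eq_mul, mul_one]
          have sc' : (Finsupp.single e w : W) = w • L e := by rw [L, Finsupp.smul_single, smul_eq_mul, mul_one]
          rw [sa, sb, sc']
          simp only [map_smul, LinearMap.smul_apply, smul_sub, smul_add, smul_smul]
          rw [base a b e]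
          module
  · have base := base2 ν br mul φ ϱ hν hbr hmul f g hf hg
    intro x y z
    induction x using Finsupp.induction_linear with
    | zero => simp
    | add x1 x2 ih1 ih2 =>
      simp only [map_add, LinearMap.add_apply]
      rw [ih1, ih2]; abel
    | single a c =>
      induction y using Finsupp.induction_linear with
      | zero => simp
      | add y1 y2 ih1 ih2 =>
        simp only [map_add, LinearMap.add_apply]
        rw [ih1, ih2]; abel
      | single b d =>
        induction z using Finsupp.induction_linear with
        | zero => simp
        | add z1 z2 ih1 ih2 =>
          simp only [map_add, LinearMap.add_apply]
          rw [ih1, ih2]; abel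
        | single e w =>
          have sa : (Finsupp.single a c : W) = c • L a := by rw [L, Finsupp.smul_single, smul_eq_mul, mul_one]
          have sb : (Finsupp.single b d : W) = d • L b := by rw [L, Finsupp.smul_single, smul_eq_mul, mul_one]
          have sc' : (Finsupp.single e w : W) = w • L e := by rw [L, Finsupp.smul_single, smul_eq_mul, mul_one]
          rw [sa, sb, sc']
          simp only [map_smul, LinearMap.smul_apply, smul_add, smul_smul]
          rw [base a b e]
          module

end Main

theorem stmt7 (ν : ℤ) (hν : ν ≠ 0) (br mul : W →ₗ[ℂ] W →ₗ[ℂ] W)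
    (hbr : ∀ m n : ℤ, br (L m) (L n) = (m - n : ℂ) • L (m + n))
    (φ ϱ : ℤ → ℤ → ℂ) (hϱ : ∃ m n : ℤ, ϱ m n ≠ 0)
    (hmul : ∀ m n : ℤ,
      mul (L m) (L n) = φ m n • L (m + n) + ϱ m n • L (m + n + ν)) :
    IsPostLie br mul ↔
      ∃ f g : ℤ → ℂ,
        (∀ m n : ℤ, φ m n = (m - n : ℂ) * f m) ∧
        (∀ m n : ℤ, ϱ m n = (m - n + ν : ℂ) * g m) ∧
        EqE f ∧ EqE2 ν g ∧ EqE3 ν f g := by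
  constructor
  · intro hpl
    obtain ⟨hax1, hax2⟩ := hpl
    have hA := fun m n p => (extract2 ν br mul φ ϱ hν hbr hmul hax2 m n p).1
    have hB := fun m n p => (extract2 ν br mul φ ϱ hν hbr hmul hax2 m n p).2
    have hc1 := fun m n p => (extract1 ν br mul φ ϱ hν hbr hmul hax1 m n p).1
    have hc3 := fun m n p => (extract1 ν br mul φ ϱ hν hbr hmul hax1 m n p).2.1
    have hc2 := fun m n p => (extract1 ν br mul φ ϱ hν hbr hmul hax1 m n p).2.2
    obtain ⟨f, hf⟩ : ∃ f : ℤ → ℂ, ∀ m n : ℤ, φ m n = ((m : ℂ) - n) * f m := by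
      refine ⟨fun m => if m = 0 then -φ 0 1 else φ m 0 / m, ?_⟩
      intro m n
      by_cases hm : m = 0
      · subst hm
        simp only [if_pos rfl]
        have hoff : ∀ a b : ℤ, a ≠ b → φ 0 (a + b) = φ 0 a + φ 0 b := by
          intro a b hab
          have h := hA 0 a b
          push_cast at h
          have hab' : ((a : ℂ) - b) ≠ 0 :=
            sub_ne_zero_of_ne (by exact_mod_cast hab)
          refine mul_left_cancel₀ hab' ?_
          linear_combination h
        have hlin := lin_of_off (fun t => φ 0 t) hoff n
        push_cast
        linear_combination hlin
      · simp only [if_neg hm]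
        have h := hA m n 0
        rw [add_zero] at h
        push_cast at h
        have hm' : ((m : ℂ)) ≠ 0 := Int.cast_ne_zero.mpr hm
        field_simp
        first
          | linear_combination h
          | linear_combination -h
          | linear_combination ((m : ℂ)) * h
          | linear_combination (-(m : ℂ)) * h
    obtain ⟨g, hg⟩ : ∃ g : ℤ → ℂ, ∀ m n : ℤ, ϱ m n = ((m : ℂ) - n + ν) * g m := by
      refine ⟨fun m => if m = -ν then -ϱ (-ν) 1 else ϱ m 0 / ((m : ℂ) + ν), ?_⟩
      intro m n
      by_cases hm : m = -ν
      · subst hm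
        simp only [if_pos rfl]
        have hoff : ∀ a b : ℤ, a ≠ b → ϱ (-ν) (a + b) = ϱ (-ν) a + ϱ (-ν) b := by
          intro a b hab
          have h := hB (-ν) a b
          push_cast at h
          have hab' : ((a : ℂ) - b) ≠ 0 :=
            sub_ne_zero_of_ne (by exact_mod_cast hab)
          refine mul_left_cancel₀ hab' ?_
          linear_combination h
        have hlin := lin_of_off (fun t => ϱ (-ν) t) hoff n
        push_cast
        linear_combination hlin
      · simp only [if_neg hm]
        have h := hB m n 0
        rw [add_zero] at h
        push_cast at h
        have hm' : ((m : ℂ) + ν) ≠ 0 := by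
          have h2 : ((m + ν : ℤ) : ℂ) ≠ 0 := Int.cast_ne_zero.mpr (by omega)
          push_cast at h2
          exact h2
        field_simp
        first
          | linear_combination h
          | linear_combination -h
          | linear_combination ((m : ℂ) + ν) * h
          | linear_combination (-((m : ℂ) + ν)) * h
    refine ⟨f, g, hf, hg, ?_, ?_, ?_⟩
    · intro m n
      have h := hc1 m n (m + n - 1)
      simp only [hf] at h
      push_cast at h
      first | linear_combination h | linear_combination -h
    · intro m n
      have h := hc2 m n (m + n + ν + ν - 1)
      simp only [hg] at h
      push_cast at h
      first | linear_combination h | linear_combination -h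
    · intro m n
      have h := hc3 m n (m + n + ν - 1)
      simp only [hf, hg] at h
      push_cast at h
      first | linear_combination h | linear_combination -h
  · rintro ⟨f, g, hf, hg, hE, hE2, hE3⟩
    exact postlie_of ν br mul φ ϱ hν hbr hmul f g hf hg hE hE2 hE3
end
end

section
/- Let ν be a nonzero integer and f, g : ℤ → ℂ. Suppose either f(m) = 0 for all m ∈ ℤ, or f(m) = −1 for all m ∈ ℤ. If (f, g, ν) satisfy equation (E3), then g(m) = 0 for all m ∈ ℤ. -/
noncomputable section

theorem stmt9 (ν : ℤ) (hν : ν ≠ 0) (f g : ℤ → ℂ)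
    (hf : (∀ m : ℤ, f m = 0) ∨ (∀ m : ℤ, f m = -1))
    (h3 : EqE3 ν f g) :
    ∀ m : ℤ, g m = 0 := by
  intro k
  have key : ∀ m n : ℤ, (m - n : ℂ) * g (m + n) = 0 := by
    intro m n
    have h := h3 m n
    rcases hf with hf | hf <;> simp only [hf] at h
    · linear_combination h
    · linear_combination -h
  have h1 := key (k + 1) (-1)
  have h2 := key (k + 2) (-2)
  rw [show k + 1 + -1 = k from by ring] at h1
  rw [show k + 2 + -2 = k from by ring] at h2
  rcases mul_eq_zero.1 h1 with h | h
  · rcases mul_eq_zero.1 h2 with h' | h'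
    · exfalso
      have : (2:ℂ) = 0 := by push_cast at h h'; linear_combination h' - h
      norm_num at this
    · exact h'
  · exact h
end
end

section
/- Let ν be a nonzero integer, a ∈ ℂ, and let f : ℤ → ℂ be given by f(m) = −1 for m > 0, f(0) = a, and f(m) = 0 for m < 0. Let g : ℤ → ℂ be such that (f, g, ν) satisfy equations (E2) and (E3). Then: (i) if ν > 0, then g(m) = 0 for all m ≥ 3 and g(m) = 0 for all m ≤ min(−3, −1 − ν); (ii) if ν < 0, then g(m) = 0 for all m ≥ max(3, 1 − ν) and g(m) = 0 for all m ≤ −3. -/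
noncomputable section

theorem stmt10 (ν : ℤ) (hν : ν ≠ 0) (a : ℂ) (f g : ℤ → ℂ)
    (hfpos : ∀ m : ℤ, 0 < m → f m = -1) (hf0 : f 0 = a)
    (hfneg : ∀ m : ℤ, m < 0 → f m = 0)
    (h2 : EqE2 ν g) (h3 : EqE3 ν f g) :
    (0 < ν →
      (∀ m : ℤ, 3 ≤ m → g m = 0) ∧ (∀ m : ℤ, m ≤ min (-3) (-1 - ν) → g m = 0)) ∧
    (ν < 0 →
      (∀ m : ℤ, max 3 (1 - ν) ≤ m → g m = 0) ∧ (∀ m : ℤ, m ≤ -3 → g m = 0)) := by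
  have key_pos : ∀ M : ℤ, 3 ≤ M → 0 < M + ν → g M = 0 := by
    intro M hM hMν
    have h := h3 1 (M - 1)
    have e1 : (1 : ℤ) + (M - 1) = M := by ring
    rw [e1, hfpos 1 (by norm_num), hfpos (M - 1) (by omega), hfpos (M + ν) hMν] at h
    push_cast at h
    have hne : ((M : ℂ) - 2) ≠ 0 := by
      have : (M : ℂ) ≠ 2 := by exact_mod_cast (by omega : M ≠ 2)
      intro hc; exact this (by linear_combination hc)
    have h' : ((M : ℂ) - 2) * g M = 0 := by linear_combination h
    exact (mul_eq_zero.mp h').resolve_left hne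
  have key_neg : ∀ M : ℤ, M ≤ -3 → M + ν < 0 → g M = 0 := by
    intro M hM hMν
    have h := h3 (-1) (M + 1)
    have e1 : (-1 : ℤ) + (M + 1) = M := by ring
    rw [e1, hfneg (-1) (by norm_num), hfneg (M + 1) (by omega), hfneg (M + ν) hMν] at h
    push_cast at h
    have hne : (-(M : ℂ) - 2) ≠ 0 := by
      have : (M : ℂ) ≠ -2 := by exact_mod_cast (by omega : M ≠ -2)
      intro hc; exact this (by linear_combination -hc)
    have h' : (-(M : ℂ) - 2) * g M = 0 := by linear_combination h
    exact (mul_eq_zero.mp h').resolve_left hne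
  constructor
  · intro hν'
    exact ⟨fun m hm => key_pos m hm (by omega),
           fun m hm => key_neg m (by omega) (by omega)⟩
  · intro hν'
    exact ⟨fun m hm => key_pos m (by omega) (by omega),
           fun m hm => key_neg m hm (by omega)⟩
end
end

section
/- Let ν be an integer with ν ≥ 3 or ν ≤ −3, let a ∈ ℂ, and let f : ℤ → ℂ be given by f(m) = −1 for m > 0, f(0) = a, and f(m) = 0 for m < 0. If g : ℤ → ℂ is such that (f, g, ν) satisfy equations (E2) and (E3), then g(m) = 0 for all m ∈ ℤ. -/
noncomputable section

private lemma cancel0 {c x : ℂ} (hc : c ≠ 0) (h : c * x = 0) : x = 0 := by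
  rcases mul_eq_zero.mp h with h | h
  · exact absurd h hc
  · exact h

private lemma izc {k : ℤ} (h : k ≠ 0) : (k : ℂ) ≠ 0 :=
  (Int.cast_ne_zero (α := ℂ)).mpr h

theorem stmt11 (ν : ℤ) (hν : 3 ≤ ν ∨ ν ≤ -3) (a : ℂ) (f g : ℤ → ℂ)
    (hfpos : ∀ m : ℤ, 0 < m → f m = -1) (hf0 : f 0 = a)
    (hfneg : ∀ m : ℤ, m < 0 → f m = 0)
    (h2 : EqE2 ν g) (h3 : EqE3 ν f g) :
    ∀ m : ℤ, g m = 0 := by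
  rcases hν with hν3 | hν3
  · -- Case ν ≥ 3
    have hB : ∀ k : ℤ, k ≤ -ν - 1 → g k = 0 := by
      intro k hk
      have h := h3 (k + 1) (-1)
      rw [show (k + 1) + (-1) + ν = k + ν by ring, show (k + 1) + (-1) = k by ring,
        hfneg (k+1) (by omega), hfneg (-1) (by omega), hfneg (k+ν) (by omega)] at h
      refine cancel0 (izc (k := k + 2) (by omega)) ?_
      push_cast at h ⊢
      linear_combination h
    have hp1 : g (-1) * g (-ν) = 0 := by
      have h := h2 (-1) (1 - 2*ν)
      rw [show (-1) + (1 - 2*ν) + ν = -ν by ring, hB (1 - 2*ν) (by omega)] at h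
      refine cancel0 (izc (k := 3*ν - 2) (by omega)) ?_
      push_cast at h ⊢
      linear_combination -h
    have hp2 : g (1 - ν) * g (-ν) = 0 := by
      have h := h2 (1 - ν) (-ν - 1)
      rw [show (1 - ν) + (-ν - 1) + ν = -ν by ring, hB (-ν - 1) (by omega)] at h
      refine cancel0 (izc (k := ν + 2) (by omega)) ?_
      push_cast at h ⊢
      linear_combination -h
    have hgν : g (-ν) = 0 := by
      have h := h3 (-1) (1 - ν)
      rw [show (-1) + (1 - ν) + ν = 0 by ring, show (-1) + (1 - ν) = -ν by ring,
        hfneg (-1) (by omega), hfneg (1 - ν) (by omega), hf0] at h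
      have key : ((ν : ℂ) - 2) * (g (-ν) * g (-ν)) = 0 := by
        push_cast at h ⊢
        linear_combination g (-ν) * h + 2*a*hp2 + (2 - 2*(ν:ℂ))*a*hp1
      exact mul_self_eq_zero.mp (cancel0 (izc (k := ν - 2) (by omega))
        (by push_cast; exact key))
    intro m
    by_cases hm : m = -2*ν
    · exact hB m (by omega)
    · have h := h2 m (-ν)
      rw [show m + -ν + ν = m by ring, hgν] at h
      have key : ((m : ℂ) + 2*(ν:ℂ)) * (g m * g m) = 0 := by
        push_cast at h ⊢
        linear_combination -h
      exact mul_self_eq_zero.mp (cancel0 (izc (k := m + 2*ν) (by omega))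
        (by push_cast; exact key))
  · -- Case ν ≤ -3
    have hB : ∀ k : ℤ, 1 - ν ≤ k → g k = 0 := by
      intro k hk
      have h := h3 (k - 1) 1
      rw [show (k - 1) + 1 + ν = k + ν by ring, show (k - 1) + 1 = k by ring,
        hfpos (k-1) (by omega), hfpos 1 (by omega), hfpos (k+ν) (by omega)] at h
      refine cancel0 (izc (k := k - 2) (by omega)) ?_
      push_cast at h ⊢
      linear_combination -h
    have hp1 : g 1 * g (-ν) = 0 := by
      have h := h2 (-2*ν - 1) 1
      rw [show (-2*ν - 1) + 1 + ν = -ν by ring, hB (-2*ν - 1) (by omega)] at h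
      refine cancel0 (izc (k := -3*ν - 2) (by omega)) ?_
      push_cast at h ⊢
      linear_combination -h
    have hp2 : g (-ν - 1) * g (-ν) = 0 := by
      have h := h2 (1 - ν) (-ν - 1)
      rw [show (1 - ν) + (-ν - 1) + ν = -ν by ring, hB (1 - ν) (by omega)] at h
      refine cancel0 (izc (k := 2 - ν) (by omega)) ?_
      push_cast at h ⊢
      linear_combination -h
    have hgν : g (-ν) = 0 := by
      have h := h3 1 (-ν - 1)
      rw [show 1 + (-ν - 1) + ν = 0 by ring, show 1 + (-ν - 1) = -ν by ring,
        hfpos 1 (by omega), hfpos (-ν - 1) (by omega), hf0] at h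
      have key : ((ν : ℂ) + 2) * (g (-ν) * g (-ν)) = 0 := by
        push_cast at h ⊢
        linear_combination -g (-ν) * h + 2*(a+1)*hp2 + (2*(ν:ℂ) + 2)*(a+1)*hp1
      exact mul_self_eq_zero.mp (cancel0 (izc (k := ν + 2) (by omega))
        (by push_cast; exact key))
    intro m
    by_cases hm : m = -2*ν
    · exact hB m (by omega)
    · have h := h2 m (-ν)
      rw [show m + -ν + ν = m by ring, hgν] at h
      have key : ((m : ℂ) + 2*(ν:ℂ)) * (g m * g m) = 0 := by
        push_cast at h ⊢
        linear_combination -h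
      exact mul_self_eq_zero.mp (cancel0 (izc (k := m + 2*ν) (by omega))
        (by push_cast; exact key))
end
end

section
/- Let ν be a nonzero integer, a ∈ ℂ, and let f : ℤ → ℂ be given by f(m) = −1 for m > 0, f(0) = a, and f(m) = 0 for m < 0. Let g : ℤ → ℂ be not identically zero and suppose (f, g, ν) satisfy equations (E2) and (E3). Then exactly one of the following holds: (i) ν ∈ {1, 2}, a = −1, g(−ν) ≠ 0, and g(m) = 0 for all m ≠ −ν; (ii) ν ∈ {−1, −2}, a = 0, g(−ν) ≠ 0, and g(m) = 0 for all m ≠ −ν. -/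
noncomputable section

theorem stmt12 (ν : ℤ) (hν : ν ≠ 0) (a : ℂ) (f g : ℤ → ℂ)
    (hfpos : ∀ m : ℤ, 0 < m → f m = -1) (hf0 : f 0 = a)
    (hfneg : ∀ m : ℤ, m < 0 → f m = 0)
    (hg : ∃ m : ℤ, g m ≠ 0)
    (h2 : EqE2 ν g) (h3 : EqE3 ν f g) :
    Xor'
      ((ν = 1 ∨ ν = 2) ∧ a = -1 ∧ g (-ν) ≠ 0 ∧ ∀ m : ℤ, m ≠ -ν → g m = 0)
      ((ν = -1 ∨ ν = -2) ∧ a = 0 ∧ g (-ν) ≠ 0 ∧ ∀ m : ℤ, m ≠ -ν → g m = 0) := by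
  have T : ∀ m n : ℤ, g n = 0 → (m - n + ν) ≠ 0 → g m ≠ 0 → g (m + n + ν) = 0 := by
    intro m n hn hc hm
    have e := h2 m n
    rw [hn] at e
    have hc' : ((m : ℂ) - n + ν) ≠ 0 := by exact_mod_cast hc
    have e2 : ((m : ℂ) - n + ν) * g m * g (m + n + ν) = 0 := by linear_combination -e
    rcases mul_eq_zero.mp e2 with h | h
    · rcases mul_eq_zero.mp h with h' | h'
      · exact absurd h' hc'
      · exact absurd h' hm
    · exact h
  rcases (by omega : 1 ≤ ν ∨ ν ≤ -1) with hpos | hneg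
  · -- positive ν
    have P1 : ∀ m : ℤ, 1 ≤ m → g m = 0 := by
      intro m hm
      have e := h3 m (-1)
      rw [hfpos m (by omega), hfneg (-1) (by norm_num), hfpos (m + -1 + ν) (by omega)] at e
      push_cast at e
      have hc : ((1:ℂ) + m + ν) ≠ 0 := by exact_mod_cast (show (1 + m + ν : ℤ) ≠ 0 by omega)
      have e2 : ((1:ℂ) + m + ν) * g m = 0 := by linear_combination -e
      exact (mul_eq_zero.mp e2).resolve_left hc
    have P2 : ∀ n : ℤ, n + ν + 2 ≤ 0 → g n = 0 := by
      intro n hn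
      have e := h3 1 n
      rw [hfpos 1 one_pos, hfneg n (by omega), hfneg (1 + n + ν) (by omega)] at e
      push_cast at e
      have hc : ((n:ℂ) - 1 + ν) ≠ 0 := by exact_mod_cast (show (n - 1 + ν : ℤ) ≠ 0 by omega)
      have e2 : ((n:ℂ) - 1 + ν) * g n = 0 := by linear_combination -e
      exact (mul_eq_zero.mp e2).resolve_left hc
    rcases (by omega : ν = 1 ∨ 2 ≤ ν) with h1 | hν2
    · -- ν = 1
      subst h1
      have h0 : g 0 = 0 := by
        by_contra hz
        have s1 : g (-2) = 0 := by
          have := T 0 (-3) (P2 (-3) (by omega)) (by omega) hz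
          rwa [show (0:ℤ) + -3 + 1 = -2 by norm_num] at this
        have s2 : g (-1) = 0 := by
          have := T 0 (-2) s1 (by omega) hz
          rwa [show (0:ℤ) + -2 + 1 = -1 by norm_num] at this
        have e := h2 0 (-1)
        rw [s2, show (0:ℤ) + -1 + 1 = 0 by norm_num] at e
        push_cast at e
        have : g 0 * g 0 = 0 := by linear_combination -e / 2
        exact hz (mul_self_eq_zero.mp this)
      have hm2 : g (-2) = 0 := by
        by_contra h
        have hm1 : g (-1) = 0 := by
          have := T (-2) 0 h0 (by omega) h
          rwa [show (-2:ℤ) + 0 + 1 = -1 by norm_num] at this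
        have e1 := h3 (-2) 1
        rw [show (-2:ℤ) + 1 + 1 = 0 by norm_num, show (-2:ℤ) + 1 = -1 by norm_num,
          hfpos 1 one_pos, hfneg (-2) (by norm_num), hf0, hm1, P1 1 le_rfl] at e1
        push_cast at e1
        have ha1 : a = -1 := by
          have e2 : (a + 1) * g (-2) = 0 := by linear_combination -e1 / 2
          have := (mul_eq_zero.mp e2).resolve_right h
          linear_combination this
        have e2 := h3 (-2) 0
        rw [show (-2:ℤ) + 0 + 1 = -1 by norm_num, show (-2:ℤ) + 0 = -2 by norm_num,
          hfneg (-2) (by norm_num), hf0, hfneg (-1) (by norm_num), ha1] at e2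
        push_cast at e2
        exact h (by linear_combination -e2)
      have gnu : g (-1) ≠ 0 := by
        obtain ⟨k, hk⟩ := hg
        have hk1 : k = -1 := by
          by_contra hkne
          apply hk
          rcases (by omega : 1 ≤ k ∨ k + 1 + 2 ≤ 0 ∨ k = 0 ∨ k = -2) with h | h | h | h
          · exact P1 k h
          · exact P2 k h
          · rw [h]; exact h0
          · rw [h]; exact hm2
        rwa [hk1] at hk
      have ha : a = -1 := by
        have e := h3 (-1) 0
        rw [show (-1:ℤ) + 0 + 1 = 0 by norm_num, show (-1:ℤ) + 0 = -1 by norm_num,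
          hfneg (-1) (by norm_num), hf0, h0] at e
        push_cast at e
        have e2 : (a + 1) * g (-1) = 0 := by linear_combination -e
        have := (mul_eq_zero.mp e2).resolve_right gnu
        linear_combination this
      have supp : ∀ m : ℤ, m ≠ -1 → g m = 0 := by
        intro m hm
        rcases (by omega : 1 ≤ m ∨ m + 1 + 2 ≤ 0 ∨ m = 0 ∨ m = -2) with h | h | h | h
        · exact P1 m h
        · exact P2 m h
        · rw [h]; exact h0
        · rw [h]; exact hm2
      exact Or.inl ⟨⟨Or.inl rfl, ha, gnu, supp⟩, fun hB => by rcases hB.1 with h | h <;> omega⟩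
    · -- 2 ≤ ν
      have Pm1 : g (-ν - 1) = 0 := by
        have e := h3 (-1) (-ν)
        rw [show (-1:ℤ) + -ν + ν = -1 by ring, show (-1:ℤ) + -ν = -ν - 1 by ring,
          hfneg (-1) (by norm_num), hfneg (-ν) (by omega)] at e
        push_cast at e
        have hc : ((ν:ℂ) - 1) ≠ 0 := by exact_mod_cast (show (ν - 1 : ℤ) ≠ 0 by omega)
        have e2 : ((ν:ℂ) - 1) * g (-ν - 1) = 0 := by linear_combination e
        exact (mul_eq_zero.mp e2).resolve_left hc
      have gnu : g (-ν) ≠ 0 := by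
        obtain ⟨k, hk⟩ := hg
        intro h0ν
        refine hk ?_
        by_cases hk2 : k = -2 * ν
        · exact P2 k (by omega)
        · have := T k (-ν) h0ν (by omega) hk
          rwa [show k + -ν + ν = k by ring] at this
      have kill0 : ∀ t : ℤ, -ν + 2 ≤ t → t ≤ 0 → g t = 0 := by
        intro t h1t h2t
        by_contra ht
        have := T t (-2 * ν - t) (P2 _ (by omega)) (by omega) ht
        rw [show t + (-2 * ν - t) + ν = -ν by ring] at this
        exact gnu this
      have killm1 : g (-ν + 1) = 0 := by
        by_contra h
        have := T (-ν + 1) (-ν - 1) Pm1 (by omega) h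
        rw [show (-ν + 1) + (-ν - 1) + ν = -ν by ring] at this
        exact gnu this
      have h0 : g 0 = 0 := kill0 0 (by omega) le_rfl
      have hcν : (ν : ℂ) ≠ 0 := by exact_mod_cast hν
      have ha : a = -1 := by
        have e := h3 (-ν) 0
        rw [show -ν + (0:ℤ) + ν = 0 by ring, show -ν + (0:ℤ) = -ν by ring,
          hf0, hfneg (-ν) (by omega), h0] at e
        push_cast at e
        have e2 : (ν:ℂ) * ((a + 1) * g (-ν)) = 0 := by linear_combination -e
        have e3 := (mul_eq_zero.mp e2).resolve_left hcν
        have := (mul_eq_zero.mp e3).resolve_right gnu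
        linear_combination this
      have supp : ∀ m : ℤ, m ≠ -ν → g m = 0 := by
        intro m hm
        rcases (by omega : 1 ≤ m ∨ m + ν + 2 ≤ 0 ∨ m = -ν - 1 ∨ m = -ν + 1 ∨
            (-ν + 2 ≤ m ∧ m ≤ 0)) with h | h | h | h | ⟨ha', hb'⟩
        · exact P1 m h
        · exact P2 m h
        · rw [h]; exact Pm1
        · rw [h]; exact killm1
        · exact kill0 m ha' hb'
      rcases (by omega : ν = 2 ∨ 3 ≤ ν) with h2' | h3'
      · subst h2'
        exact Or.inl ⟨⟨Or.inr rfl, ha, gnu, supp⟩, fun hB => by rcases hB.1 with h | h <;> omega⟩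
      · -- 3 ≤ ν : contradiction
        have e := h3 (-1) (-ν + 1)
        rw [show (-1:ℤ) + (-ν + 1) + ν = 0 by ring, show (-1:ℤ) + (-ν + 1) = -ν by ring,
          hf0, hfneg (-1) (by norm_num), hfneg (-ν + 1) (by omega), killm1,
          kill0 (-1) (by omega) (by norm_num)] at e
        push_cast at e
        have hc : ((ν:ℂ) - 2) ≠ 0 := by exact_mod_cast (show (ν - 2 : ℤ) ≠ 0 by omega)
        have e2 : ((ν:ℂ) - 2) * g (-ν) = 0 := by linear_combination e
        exact (gnu ((mul_eq_zero.mp e2).resolve_left hc)).elim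
  · -- negative ν
    have P1 : ∀ m : ℤ, m ≤ -1 → g m = 0 := by
      intro m hm
      have e := h3 m 1
      rw [hfneg m (by omega), hfpos 1 one_pos, hfneg (m + 1 + ν) (by omega)] at e
      push_cast at e
      have hc : ((1:ℂ) - m - ν) ≠ 0 := by exact_mod_cast (show (1 - m - ν : ℤ) ≠ 0 by omega)
      have e2 : ((1:ℂ) - m - ν) * g m = 0 := by linear_combination -e
      exact (mul_eq_zero.mp e2).resolve_left hc
    have P2 : ∀ m : ℤ, -ν + 2 ≤ m → g m = 0 := by
      intro m hm
      have e := h3 m (-1)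
      rw [hfpos m (by omega), hfneg (-1) (by norm_num), hfpos (m + -1 + ν) (by omega)] at e
      push_cast at e
      have hc : ((1:ℂ) + m + ν) ≠ 0 := by exact_mod_cast (show (1 + m + ν : ℤ) ≠ 0 by omega)
      have e2 : ((1:ℂ) + m + ν) * g m = 0 := by linear_combination -e
      exact (mul_eq_zero.mp e2).resolve_left hc
    rcases (by omega : ν = -1 ∨ ν ≤ -2) with h1 | hν2
    · -- ν = -1
      subst h1
      have h0 : g 0 = 0 := by
        by_contra hz
        have s1 : g 2 = 0 := by
          have := T 0 3 (P2 3 (by omega)) (by omega) hz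
          rwa [show (0:ℤ) + 3 + -1 = 2 by norm_num] at this
        have s2 : g 1 = 0 := by
          have := T 0 2 s1 (by omega) hz
          rwa [show (0:ℤ) + 2 + -1 = 1 by norm_num] at this
        have e := h2 0 1
        rw [s2, show (0:ℤ) + 1 + -1 = 0 by norm_num] at e
        push_cast at e
        have : g 0 * g 0 = 0 := by linear_combination e / 2
        exact hz (mul_self_eq_zero.mp this)
      have hp2 : g 2 = 0 := by
        by_contra h
        have hp1 : g 1 = 0 := by
          have := T 2 0 h0 (by omega) h
          rwa [show (2:ℤ) + 0 + -1 = 1 by norm_num] at this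
        have e1 := h3 2 (-1)
        rw [show (2:ℤ) + -1 + -1 = 0 by norm_num, show (2:ℤ) + -1 = 1 by norm_num,
          hfpos 2 (by norm_num), hfneg (-1) (by norm_num), hf0, hp1, P1 (-1) (by norm_num)] at e1
        push_cast at e1
        have ha0 : a = 0 := by
          have e2 : a * g 2 = 0 := by linear_combination e1 / 2
          exact (mul_eq_zero.mp e2).resolve_right h
        have e2 := h3 2 0
        rw [show (2:ℤ) + 0 + -1 = 1 by norm_num, show (2:ℤ) + 0 = 2 by norm_num,
          hfpos 2 (by norm_num), hf0, hfpos 1 one_pos, ha0, h0] at e2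
        push_cast at e2
        exact h (by linear_combination -e2)
      have gnu : g 1 ≠ 0 := by
        obtain ⟨k, hk⟩ := hg
        have hk1 : k = 1 := by
          by_contra hkne
          apply hk
          rcases (by omega : k ≤ -1 ∨ -(-1:ℤ) + 2 ≤ k ∨ k = 0 ∨ k = 2) with h | h | h | h
          · exact P1 k h
          · exact P2 k h
          · rw [h]; exact h0
          · rw [h]; exact hp2
        rwa [hk1] at hk
      have ha : a = 0 := by
        have e := h3 1 0
        rw [show (1:ℤ) + 0 + -1 = 0 by norm_num, show (1:ℤ) + 0 = 1 by norm_num,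
          hfpos 1 one_pos, hf0, h0] at e
        push_cast at e
        have e2 : a * g 1 = 0 := by linear_combination e
        exact (mul_eq_zero.mp e2).resolve_right gnu
      refine Or.inr ⟨⟨Or.inl rfl, ha, ?_, ?_⟩, fun hA => by rcases hA.1 with h | h <;> omega⟩
      · show g 1 ≠ 0
        exact gnu
      · intro m hm
        rcases (by omega : m ≤ -1 ∨ -(-1:ℤ) + 2 ≤ m ∨ m = 0 ∨ m = 2) with h | h | h | h
        · exact P1 m h
        · exact P2 m h
        · rw [h]; exact h0
        · rw [h]; exact hp2
    · -- ν ≤ -2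
      have Pm1 : g (-ν + 1) = 0 := by
        have e := h3 1 (-ν)
        rw [show (1:ℤ) + -ν + ν = 1 by ring, show (1:ℤ) + -ν = -ν + 1 by ring,
          hfpos 1 one_pos, hfpos (-ν) (by omega)] at e
        push_cast at e
        have hc : ((1:ℂ) + ν) ≠ 0 := by exact_mod_cast (show (1 + ν : ℤ) ≠ 0 by omega)
        have e2 : ((1:ℂ) + ν) * g (-ν + 1) = 0 := by linear_combination -e
        exact (mul_eq_zero.mp e2).resolve_left hc
      have gnu : g (-ν) ≠ 0 := by
        obtain ⟨k, hk⟩ := hg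
        intro h0ν
        refine hk ?_
        by_cases hk2 : k = -2 * ν
        · exact P2 k (by omega)
        · have := T k (-ν) h0ν (by omega) hk
          rwa [show k + -ν + ν = k by ring] at this
      have kill0 : ∀ t : ℤ, 0 ≤ t → t + ν + 2 ≤ 0 → g t = 0 := by
        intro t h1t h2t
        by_contra ht
        have := T t (-2 * ν - t) (P2 _ (by omega)) (by omega) ht
        rw [show t + (-2 * ν - t) + ν = -ν by ring] at this
        exact gnu this
      have killp1 : g (-ν - 1) = 0 := by
        by_contra h
        have := T (-ν - 1) (-ν + 1) Pm1 (by omega) h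
        rw [show (-ν - 1) + (-ν + 1) + ν = -ν by ring] at this
        exact gnu this
      have h0 : g 0 = 0 := kill0 0 le_rfl (by omega)
      have hcν : (ν : ℂ) ≠ 0 := by exact_mod_cast hν
      have ha : a = 0 := by
        have e := h3 (-ν) 0
        rw [show -ν + (0:ℤ) + ν = 0 by ring, show -ν + (0:ℤ) = -ν by ring,
          hf0, hfpos (-ν) (by omega), h0] at e
        push_cast at e
        have e2 : (ν:ℂ) * (a * g (-ν)) = 0 := by linear_combination -e
        have e3 := (mul_eq_zero.mp e2).resolve_left hcν
        exact (mul_eq_zero.mp e3).resolve_right gnu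
      have supp : ∀ m : ℤ, m ≠ -ν → g m = 0 := by
        intro m hm
        rcases (by omega : m ≤ -1 ∨ -ν + 2 ≤ m ∨ m = -ν - 1 ∨ m = -ν + 1 ∨
            (0 ≤ m ∧ m + ν + 2 ≤ 0)) with h | h | h | h | ⟨ha', hb'⟩
        · exact P1 m h
        · exact P2 m h
        · rw [h]; exact killp1
        · rw [h]; exact Pm1
        · exact kill0 m ha' hb'
      rcases (by omega : ν = -2 ∨ ν ≤ -3) with h2' | h3'
      · subst h2'
        exact Or.inr ⟨⟨Or.inr rfl, ha, gnu, supp⟩, fun hA => by rcases hA.1 with h | h <;> omega⟩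
      · -- ν ≤ -3 : contradiction
        have e := h3 1 (-ν - 1)
        rw [show (1:ℤ) + (-ν - 1) + ν = 0 by ring, show (1:ℤ) + (-ν - 1) = -ν by ring,
          hf0, hfpos 1 one_pos, hfpos (-ν - 1) (by omega), killp1,
          kill0 1 (by norm_num) (by omega)] at e
        push_cast at e
        have hc : ((2:ℂ) + ν) ≠ 0 := by exact_mod_cast (show (2 + ν : ℤ) ≠ 0 by omega)
        have e2 : ((2:ℂ) + ν) * g (-ν) = 0 := by linear_combination -e
        exact (gnu ((mul_eq_zero.mp e2).resolve_left hc)).elim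
end
end

section
/- Let ν be an integer with ν ≥ 1 or ν ≤ −5, and let f : ℤ → ℂ be given by f(m) = −1 for m ≥ 2 and f(m) = 0 for m ≤ 1. If g : ℤ → ℂ is such that (f, g, ν) satisfy equations (E2) and (E3), then g(m) = 0 for all m ∈ ℤ. -/
noncomputable section

theorem stmt13 (ν : ℤ) (hν : 1 ≤ ν ∨ ν ≤ -5) (f g : ℤ → ℂ)
    (hfge : ∀ m : ℤ, 2 ≤ m → f m = -1) (hfle : ∀ m : ℤ, m ≤ 1 → f m = 0)
    (h2 : EqE2 ν g) (h3 : EqE3 ν f g) :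
    ∀ m : ℤ, g m = 0 := by
  rcases hν with hν | hν
  · -- case ν ≥ 1
    have hA : ∀ n : ℤ, n ≤ -1 - ν → g n = 0 := by
      intro n hn
      have e := h3 2 n
      rw [hfge 2 (by norm_num), hfle n (by omega), hfle (2 + n + ν) (by omega)] at e
      have hc : (((n - 2 + ν : ℤ)) : ℂ) ≠ 0 := Int.cast_ne_zero.mpr (by omega)
      push_cast at hc e
      have h0 : ((n : ℂ) - 2 + ν) * g n = 0 := by linear_combination -e
      exact (mul_eq_zero.mp h0).resolve_left hc
    have hC : ∀ m : ℤ, 1 - ν ≤ m → g m = 0 := by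
      intro m hm
      have e1 := h2 m (-2 * ν - m)
      rw [show m + (-2 * ν - m) + ν = -ν from by ring, hA (-2 * ν - m) (by omega)] at e1
      have hc1 : (((2 * m + 3 * ν : ℤ)) : ℂ) ≠ 0 := Int.cast_ne_zero.mpr (by omega)
      push_cast at hc1 e1
      have hp : g m * g (-ν) = 0 := by
        have h0 : (2 * (m : ℂ) + 3 * ν) * (g m * g (-ν)) = 0 := by linear_combination -e1
        exact (mul_eq_zero.mp h0).resolve_left hc1
      have e2 := h2 m (-ν)
      rw [show m + -ν + ν = m from by ring] at e2
      have hc2 : (((m + 2 * ν : ℤ)) : ℂ) ≠ 0 := Int.cast_ne_zero.mpr (by omega)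
      push_cast at hc2 e2
      have h0 : ((m : ℂ) + 2 * ν) * (g m * g m) = 0 := by
        linear_combination -e2 + (ν : ℂ) * hp
      exact mul_self_eq_zero.mp ((mul_eq_zero.mp h0).resolve_left hc2)
    have hD : g (-ν) = 0 := by
      have e := h3 1 (-1 - ν)
      rw [show (1 : ℤ) + (-1 - ν) + ν = 0 from by ring] at e
      rw [show (1 : ℤ) + (-1 - ν) = -ν from by ring] at e
      rw [hfle 1 le_rfl, hfle (-1 - ν) (by omega), hfle 0 (by omega)] at e
      have hc : (((2 + ν : ℤ)) : ℂ) ≠ 0 := Int.cast_ne_zero.mpr (by omega)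
      push_cast at hc e
      have h0 : ((2 : ℂ) + ν) * g (-ν) = 0 := by linear_combination e
      exact (mul_eq_zero.mp h0).resolve_left hc
    intro m
    rcases (by omega : m ≤ -1 - ν ∨ m = -ν ∨ 1 - ν ≤ m) with h | h | h
    · exact hA m h
    · rw [h]; exact hD
    · exact hC m h
  · -- case ν ≤ -5
    have hA : ∀ n : ℤ, n ≤ -1 → g n = 0 := by
      intro n hn
      have e := h3 2 n
      rw [hfge 2 (by norm_num), hfle n (by omega), hfle (2 + n + ν) (by omega)] at e
      have hc : (((n - 2 + ν : ℤ)) : ℂ) ≠ 0 := Int.cast_ne_zero.mpr (by omega)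
      push_cast at hc e
      have h0 : ((n : ℂ) - 2 + ν) * g n = 0 := by linear_combination -e
      exact (mul_eq_zero.mp h0).resolve_left hc
    have hB : ∀ n : ℤ, 2 - ν ≤ n → g n = 0 := by
      intro n hn
      have e := h3 0 n
      rw [show (0 : ℤ) + n = n from by ring] at e
      rw [hfle 0 (by omega), hfge n (by omega), hfge (n + ν) (by omega)] at e
      have hc : (((n + ν : ℤ)) : ℂ) ≠ 0 := Int.cast_ne_zero.mpr (by omega)
      push_cast at hc e
      have h0 : ((n : ℂ) + ν) * g n = 0 := by linear_combination e
      exact (mul_eq_zero.mp h0).resolve_left hc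
    have hC : ∀ m : ℤ, m ≤ -ν - 2 → g m = 0 := by
      intro m hm
      have e1 := h2 m (-2 * ν - m)
      rw [show m + (-2 * ν - m) + ν = -ν from by ring, hB (-2 * ν - m) (by omega)] at e1
      have hc1 : (((2 * m + 3 * ν : ℤ)) : ℂ) ≠ 0 := Int.cast_ne_zero.mpr (by omega)
      push_cast at hc1 e1
      have hp : g m * g (-ν) = 0 := by
        have h0 : (2 * (m : ℂ) + 3 * ν) * (g m * g (-ν)) = 0 := by linear_combination -e1
        exact (mul_eq_zero.mp h0).resolve_left hc1
      have e2 := h2 m (-ν)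
      rw [show m + -ν + ν = m from by ring] at e2
      have hc2 : (((m + 2 * ν : ℤ)) : ℂ) ≠ 0 := Int.cast_ne_zero.mpr (by omega)
      push_cast at hc2 e2
      have h0 : ((m : ℂ) + 2 * ν) * (g m * g m) = 0 := by
        linear_combination -e2 + (ν : ℂ) * hp
      exact mul_self_eq_zero.mp ((mul_eq_zero.mp h0).resolve_left hc2)
    have hD : g (-ν) = 0 := by
      have e := h3 (-ν - 2) 2
      rw [show -ν - 2 + 2 + ν = 0 from by ring] at e
      rw [show -ν - 2 + 2 = -ν from by ring] at e
      rw [hfge (-ν - 2) (by omega), hfge 2 (by norm_num), hfle 0 (by omega),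
        hC 2 (by omega), hC (-ν - 2) (by omega)] at e
      have hc : (((ν + 4 : ℤ)) : ℂ) ≠ 0 := Int.cast_ne_zero.mpr (by omega)
      push_cast at hc e
      have h0 : ((ν : ℂ) + 4) * g (-ν) = 0 := by linear_combination e
      exact (mul_eq_zero.mp h0).resolve_left hc
    have hE : g (1 - ν) = 0 := by
      have e := h2 (1 - ν) (-ν)
      rw [show 1 - ν + -ν + ν = 1 - ν from by ring, hD] at e
      have hc : (((1 + ν : ℤ)) : ℂ) ≠ 0 := Int.cast_ne_zero.mpr (by omega)
      push_cast at hc e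
      have h0 : ((1 : ℂ) + ν) * (g (1 - ν) * g (1 - ν)) = 0 := by linear_combination -e
      exact mul_self_eq_zero.mp ((mul_eq_zero.mp h0).resolve_left hc)
    have hF : g (-ν - 1) = 0 := by
      have e := h2 (-ν) (-ν - 1)
      rw [show -ν + (-ν - 1) + ν = -ν - 1 from by ring, hD] at e
      have hc : (((1 - ν : ℤ)) : ℂ) ≠ 0 := Int.cast_ne_zero.mpr (by omega)
      push_cast at hc e
      have h0 : ((1 : ℂ) - ν) * (g (-ν - 1) * g (-ν - 1)) = 0 := by linear_combination -e
      exact mul_self_eq_zero.mp ((mul_eq_zero.mp h0).resolve_left hc)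
    intro m
    rcases (by omega : m ≤ -ν - 2 ∨ m = -ν - 1 ∨ m = -ν ∨ m = 1 - ν ∨ 2 - ν ≤ m)
      with h | h | h | h | h
    · exact hC m h
    · rw [h]; exact hF
    · rw [h]; exact hD
    · rw [h]; exact hE
    · exact hB m h
end
end

section
/- Let ν be a nonzero integer and let f : ℤ → ℂ be given by f(m) = −1 for m ≥ 2 and f(m) = 0 for m ≤ 1. Let g : ℤ → ℂ be not identically zero and suppose (f, g, ν) satisfy equations (E2) and (E3). Then one of the following holds: (i) ν ∈ {−2, −3, −4}, g(−ν) ≠ 0, and g(m) = 0 for all m ≠ −ν; (ii) ν = −1, g(2) ≠ 0, and g(m) = 0 for all m ≠ 2; (iii) ν = −2, g(2) ≠ 0, g(3) = 2·g(2), and g(m) = 0 for all m ∉ {2, 3}. -/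
noncomputable section

theorem stmt14 (ν : ℤ) (hν : ν ≠ 0) (f g : ℤ → ℂ)
    (hfge : ∀ m : ℤ, 2 ≤ m → f m = -1) (hfle : ∀ m : ℤ, m ≤ 1 → f m = 0)
    (hg : ∃ m : ℤ, g m ≠ 0)
    (h2 : EqE2 ν g) (h3 : EqE3 ν f g) :
    ((ν = -2 ∨ ν = -3 ∨ ν = -4) ∧ g (-ν) ≠ 0 ∧ ∀ m : ℤ, m ≠ -ν → g m = 0) ∨
    (ν = -1 ∧ g 2 ≠ 0 ∧ ∀ m : ℤ, m ≠ 2 → g m = 0) ∨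
    (ν = -2 ∧ g 2 ≠ 0 ∧ g 3 = 2 * g 2 ∧ ∀ m : ℤ, m ≠ 2 → m ≠ 3 → g m = 0) := by

  classical
  -- ★ : consequence of E2 when g n = 0
  have hstar : ∀ m n : ℤ, g n = 0 → ((m : ℂ) - n + ν) * g m * g (m + n + ν) = 0 := by
    intro m n hn
    have e := h2 m n
    rw [hn] at e
    linear_combination -e
  -- (A) : vanishing for large m
  have hA : ∀ m : ℤ, 2 - ν ≤ m → 2 ≤ m → g m = 0 := by
    intro m hm1 hm2
    have e := h3 m 1
    rw [hfge m (by omega), hfle 1 (by omega), hfge (m + 1 + ν) (by omega)] at e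
    have key : ((1 : ℂ) - m - ν) * g m = 0 := by linear_combination e
    rcases mul_eq_zero.mp key with h' | h'
    · exfalso
      have hcc : ((1 - m - ν : ℤ) : ℂ) = 0 := by push_cast; linear_combination h'
      exact (by omega : (1 - m - ν : ℤ) ≠ 0) (by exact_mod_cast hcc)
    · exact h'
  -- (B) : vanishing for small n
  have hB : ∀ n : ℤ, n ≤ 1 → n ≤ -1 - ν → g n = 0 := by
    intro n hn1 hn2
    have e := h3 2 n
    rw [hfge 2 (by omega), hfle n (by omega), hfle (2 + n + ν) (by omega)] at e
    have key : ((n : ℂ) - 2 + ν) * g n = 0 := by linear_combination -e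
    rcases mul_eq_zero.mp key with h' | h'
    · exfalso
      have hcc : ((n - 2 + ν : ℤ) : ℂ) = 0 := by push_cast; linear_combination h'
      exact (by omega : (n - 2 + ν : ℤ) ≠ 0) (by exact_mod_cast hcc)
    · exact h'
  -- (R2) : recurrence in the middle range
  have hR2 : ∀ m n : ℤ, 2 ≤ m → 2 ≤ n → m + n + ν ≤ 1 →
      ((m : ℂ) - n) * g (m + n) = ((m : ℂ) - n + ν) * g m + ((m : ℂ) - n - ν) * g n := by
    intro m n hm hn hs
    have e := h3 m n
    rw [hfge m (by omega), hfge n (by omega), hfle (m + n + ν) (by omega)] at e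
    linear_combination -e
  rcases (by omega : 1 ≤ ν ∨ ν = -1 ∨ ν = -2 ∨ ν = -3 ∨ ν = -4 ∨ ν ≤ -5) with hc | hc | hc | hc | hc | hc
  · -- ν ≥ 1 : impossible
    exfalso
    have hnu : g (-ν) = 0 := by
      have e := h3 1 (-ν - 1)
      rw [show (1 : ℤ) + (-ν - 1) + ν = 0 by ring, show (1 : ℤ) + (-ν - 1) = -ν by ring,
        hfle 1 (by omega), hfle (-ν - 1) (by omega), hfle 0 (by omega)] at e
      have key : ((ν : ℂ) + 2) * g (-ν) = 0 := by push_cast at e ⊢; linear_combination e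
      rcases mul_eq_zero.mp key with h' | h'
      · exfalso
        have hcc : ((ν + 2 : ℤ) : ℂ) = 0 := by push_cast; linear_combination h'
        exact (by omega : (ν + 2 : ℤ) ≠ 0) (by exact_mod_cast hcc)
      · exact h'
    obtain ⟨a, ha⟩ := hg
    have hkey := hstar a (-ν) hnu
    rw [show a + -ν + ν = a by ring] at hkey
    have ha2 : a = -2 * ν := by
      rcases mul_eq_zero.mp hkey with h' | h'
      · rcases mul_eq_zero.mp h' with h'' | h''
        · push_cast at h''
          have hcc : ((a + 2 * ν : ℤ) : ℂ) = 0 := by push_cast; linear_combination h''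
          have := (Int.cast_eq_zero (α := ℂ)).mp hcc
          omega
        · exact absurd h'' ha
      · exact absurd h' ha
    exact ha (hB a (by omega) (by omega))
  · -- ν = -1
    subst hc
    have hg1 : g 1 = 0 := by
      have e := h3 0 1
      rw [show (0 : ℤ) + 1 + -1 = 0 by norm_num, show (0 : ℤ) + 1 = 1 by norm_num,
        hfle 0 (by omega), hfle 1 (by omega)] at e
      linear_combination -e
    have hz : ∀ m : ℤ, m ≠ 2 → g m = 0 := by
      intro m hm
      rcases (by omega : m ≤ 0 ∨ m = 1 ∨ 3 ≤ m) with h' | h' | h'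
      · exact hB m (by omega) (by omega)
      · rw [h']; exact hg1
      · exact hA m (by omega) (by omega)
    obtain ⟨a, ha⟩ := hg
    have ha2 : a = 2 := by by_contra h'; exact ha (hz a h')
    right; left
    exact ⟨rfl, ha2 ▸ ha, hz⟩
  · -- ν = -2
    subst hc
    by_cases hg3 : g 3 = 0
    · -- support {2}
      have hz : ∀ m : ℤ, m ≠ 2 → g m = 0 := by
        intro m hm
        rcases (by omega : m ≤ 1 ∨ m = 3 ∨ 4 ≤ m) with h' | h' | h'
        · exact hB m (by omega) (by omega)
        · rw [h']; exact hg3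
        · exact hA m (by omega) (by omega)
      obtain ⟨a, ha⟩ := hg
      have ha2 : a = 2 := by by_contra h'; exact ha (hz a h')
      left
      refine ⟨Or.inl rfl, ?_, ?_⟩
      · rw [show -(-2 : ℤ) = 2 by norm_num]; exact ha2 ▸ ha
      · intro m hm; exact hz m (by omega)
    · -- support {2,3}
      have e := h2 3 2
      rw [show (3 : ℤ) + 2 + -2 = 3 by norm_num] at e
      have key : g 3 * (g 3 - 2 * g 2) = 0 := by push_cast at e; linear_combination e
      have hg32 : g 3 = 2 * g 2 := by
        rcases mul_eq_zero.mp key with h' | h'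
        · exact absurd h' hg3
        · linear_combination h'
      have hg2 : g 2 ≠ 0 := by
        intro h'
        rw [h'] at hg32
        exact hg3 (by rw [hg32]; ring)
      right; right
      refine ⟨rfl, hg2, hg32, ?_⟩
      intro m hm2 hm3
      rcases (by omega : m ≤ 1 ∨ 4 ≤ m) with h' | h'
      · exact hB m (by omega) (by omega)
      · exact hA m (by omega) (by omega)
  · -- ν = -3
    subst hc
    have hg5 : g 5 = 0 := hA 5 (by norm_num) (by norm_num)
    have r4 : g 2 * g 4 = 0 := by
      have h' := hstar 2 5 hg5
      rw [show (2 : ℤ) + 5 + -3 = 4 by norm_num] at h'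
      push_cast at h'
      linear_combination (-1 / 6 : ℂ) * h'
    have r1 := h2 3 2
    rw [show (3 : ℤ) + 2 + -3 = 2 by norm_num] at r1
    push_cast at r1
    have r2 := h2 4 2
    rw [show (4 : ℤ) + 2 + -3 = 3 by norm_num] at r2
    push_cast at r2
    have r3 := h2 4 3
    rw [show (4 : ℤ) + 3 + -3 = 4 by norm_num] at r3
    push_cast at r3
    have hg2 : g 2 = 0 := by
      by_contra hne
      have hg4 : g 4 = 0 := by
        rcases mul_eq_zero.mp r4 with h' | h'
        · exact absurd h' hne
        · exact h'
      rw [hg4] at r2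
      -- r2 : 2 * 0 * g 2 = (-0 + 5 * g 2) * g 3
      have e3 : g 2 * g 3 = 0 := by linear_combination (-1 / 5 : ℂ) * r2
      have e1 : g 2 * g 2 = 0 := by linear_combination (-1 / 4 : ℂ) * r1 + (3 / 4 : ℂ) * e3
      exact hne (mul_self_eq_zero.mp e1)
    have hg4 : g 4 = 0 := by
      by_contra hne
      rw [hg2] at r2
      have e3 : g 4 * g 3 = 0 := by linear_combination r2
      have hg3 : g 3 = 0 := by
        rcases mul_eq_zero.mp e3 with h' | h'
        · exact absurd h' hne
        · exact h'
      rw [hg3] at r3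
      have e4 : g 4 * g 4 = 0 := by linear_combination (1 / 2 : ℂ) * r3
      exact hne (mul_self_eq_zero.mp e4)
    have hz : ∀ m : ℤ, m ≠ 3 → g m = 0 := by
      intro m hm
      rcases (by omega : m ≤ 1 ∨ m = 2 ∨ m = 4 ∨ 5 ≤ m) with h' | h' | h' | h'
      · exact hB m (by omega) (by omega)
      · rw [h']; exact hg2
      · rw [h']; exact hg4
      · exact hA m (by omega) (by omega)
    obtain ⟨a, ha⟩ := hg
    have ha2 : a = 3 := by by_contra h'; exact ha (hz a h')
    left
    refine ⟨Or.inr (Or.inl rfl), ?_, ?_⟩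
    · rw [show -(-3 : ℤ) = 3 by norm_num]; exact ha2 ▸ ha
    · intro m hm; exact hz m (by omega)
  · -- ν = -4
    subst hc
    have hg1 : g 1 = 0 := hB 1 (by norm_num) (by norm_num)
    have hg6 : g 6 = 0 := hA 6 (by norm_num) (by norm_num)
    have s1 : g 3 * g 2 = 0 := by
      have e := h2 3 2
      rw [show (3 : ℤ) + 2 + -4 = 1 by norm_num, hg1] at e
      push_cast at e
      linear_combination e
    have s2 : g 2 * g 4 = 0 := by
      have h' := hstar 2 6 hg6
      rw [show (2 : ℤ) + 6 + -4 = 4 by norm_num] at h'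
      push_cast at h'
      linear_combination (-1 / 8 : ℂ) * h'
    have s3 := h2 4 2
    rw [show (4 : ℤ) + 2 + -4 = 2 by norm_num] at s3
    push_cast at s3
    have hg2 : g 2 = 0 := by
      have e : g 2 * g 2 = 0 := by linear_combination (-1 / 6 : ℂ) * s3 + (2 / 3 : ℂ) * s2
      exact mul_self_eq_zero.mp e
    have s4 : g 3 * g 5 = 0 := by
      have h' := hstar 3 6 hg6
      rw [show (3 : ℤ) + 6 + -4 = 5 by norm_num] at h'
      push_cast at h'
      linear_combination (-1 / 7 : ℂ) * h'
    have s5 := h2 4 3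
    rw [show (4 : ℤ) + 3 + -4 = 3 by norm_num] at s5
    push_cast at s5
    have s6 := h2 5 3
    rw [show (5 : ℤ) + 3 + -4 = 4 by norm_num] at s6
    push_cast at s6
    have s7 := h2 5 4
    rw [show (5 : ℤ) + 4 + -4 = 5 by norm_num] at s7
    push_cast at s7
    have hg3 : g 3 = 0 := by
      by_contra hne
      have hg5 : g 5 = 0 := by
        rcases mul_eq_zero.mp s4 with h' | h'
        · exact absurd h' hne
        · exact h'
      rw [hg5] at s6
      have e34 : g 3 * g 4 = 0 := by linear_combination (-1 / 6 : ℂ) * s6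
      have hg4 : g 4 = 0 := by
        rcases mul_eq_zero.mp e34 with h' | h'
        · exact absurd h' hne
        · exact h'
      rw [hg4] at s5
      have e : g 3 * g 3 = 0 := by linear_combination (-1 / 5 : ℂ) * s5
      exact hne (mul_self_eq_zero.mp e)
    have hg5 : g 5 = 0 := by
      by_contra hne
      rw [hg3] at s6
      have e54 : g 5 * g 4 = 0 := by linear_combination (1 / 2 : ℂ) * s6
      have hg4 : g 4 = 0 := by
        rcases mul_eq_zero.mp e54 with h' | h'
        · exact absurd h' hne
        · exact h'
      rw [hg4] at s7
      have e : g 5 * g 5 = 0 := by linear_combination (1 / 3 : ℂ) * s7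
      exact hne (mul_self_eq_zero.mp e)
    have hz : ∀ m : ℤ, m ≠ 4 → g m = 0 := by
      intro m hm
      rcases (by omega : m ≤ 1 ∨ m = 2 ∨ m = 3 ∨ m = 5 ∨ 6 ≤ m) with h' | h' | h' | h' | h'
      · exact hB m (by omega) (by omega)
      · rw [h']; exact hg2
      · rw [h']; exact hg3
      · rw [h']; exact hg5
      · exact hA m (by omega) (by omega)
    obtain ⟨a, ha⟩ := hg
    have ha2 : a = 4 := by by_contra h'; exact ha (hz a h')
    left
    refine ⟨Or.inr (Or.inr rfl), ?_, ?_⟩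
    · rw [show -(-4 : ℤ) = 4 by norm_num]; exact ha2 ▸ ha
    · intro m hm; exact hz m (by omega)
  · -- ν ≤ -5 : impossible
    exfalso
    have h2le : ∀ z : ℤ, g z ≠ 0 → 2 ≤ z := by
      intro z hz
      by_contra h'
      exact hz (hB z (by omega) (by omega))
    obtain ⟨a, ha, hmin⟩ := Int.exists_least_of_bdd (P := fun z => g z ≠ 0) ⟨2, h2le⟩ hg
    have hzlt : ∀ z : ℤ, z < a → g z = 0 := by
      intro z hz
      by_contra h'
      exact absurd (hmin z h') (by omega)
    have halb : 2 ≤ a := h2le a ha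
    have haub : a ≤ 1 - ν := by
      by_contra h'
      exact ha (hA a (by omega) (by omega))
    rcases (by omega : 5 ≤ a ∨ a = 4 ∨ a = 3 ∨ a = 2) with hca | hca | hca | hca
    · -- a ≥ 5 : decompose a = (a-2) + 2
      have e := hR2 (a - 2) 2 (by omega) (by omega) (by omega)
      rw [show a - 2 + 2 = a by ring, hzlt (a - 2) (by omega), hzlt 2 (by omega)] at e
      have key : ((a : ℂ) - 4) * g a = 0 := by push_cast at e; linear_combination e
      rcases mul_eq_zero.mp key with h' | h'
      · have hcc : ((a - 4 : ℤ) : ℂ) = 0 := by push_cast; linear_combination h'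
        exact (by omega : (a - 4 : ℤ) ≠ 0) (by exact_mod_cast hcc)
      · exact ha h'
    · -- a = 4
      subst hca
      have hg2 : g 2 = 0 := hzlt 2 (by omega)
      have hg3 : g 3 = 0 := hzlt 3 (by omega)
      have hg5 : g 5 = 0 := by
        have e := hR2 3 2 (by omega) (by omega) (by omega)
        rw [show (3 : ℤ) + 2 = 5 by norm_num, hg2, hg3] at e
        push_cast at e
        linear_combination e
      have hg6 : g 6 = 0 := by
        have h' := hstar 4 (2 - ν) (hA (2 - ν) (by omega) (by omega))
        rw [show (4 : ℤ) + (2 - ν) + ν = 6 by ring] at h'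
        have key : ((2 : ℂ) + 2 * ν) * (g 4 * g 6) = 0 := by push_cast at h'; linear_combination h'
        rcases mul_eq_zero.mp key with h'' | h''
        · exfalso
          have hcc : ((2 + 2 * ν : ℤ) : ℂ) = 0 := by push_cast; linear_combination h''
          exact (by omega : (2 + 2 * ν : ℤ) ≠ 0) (by exact_mod_cast hcc)
        · rcases mul_eq_zero.mp h'' with h3' | h3'
          · exact absurd h3' ha
          · exact h3'
      have e := hR2 4 2 (by omega) (by omega) (by omega)
      rw [show (4 : ℤ) + 2 = 6 by norm_num, hg6, hg2] at e
      have key : ((2 : ℂ) + ν) * g 4 = 0 := by push_cast at e; linear_combination -e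
      rcases mul_eq_zero.mp key with h' | h'
      · have hcc : ((2 + ν : ℤ) : ℂ) = 0 := by push_cast; linear_combination h'
        exact (by omega : (2 + ν : ℤ) ≠ 0) (by exact_mod_cast hcc)
      · exact ha h'
    · -- a = 3
      subst hca
      have hg2 : g 2 = 0 := hzlt 2 (by omega)
      have hg7 : g (7 + ν) = 0 := by
        rcases (by omega : 7 + ν ≤ 1 ∨ 7 + ν = 2) with h' | h'
        · exact hB (7 + ν) (by omega) (by omega)
        · rw [h']; exact hg2
      have s34 : g 4 * g 3 = 0 := by
        have e := h2 4 3
        rw [show (4 : ℤ) + 3 + ν = 7 + ν by ring, hg7] at e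
        push_cast at e
        linear_combination e
      have hg4 : g 4 = 0 := by
        rcases mul_eq_zero.mp s34 with h' | h'
        · exact h'
        · exact absurd h' ha
      have e5 := hR2 3 2 (by omega) (by omega) (by omega)
      rw [show (3 : ℤ) + 2 = 5 by norm_num, hg2] at e5
      -- e5 : g 5 = (1 + ν) * g 3
      have h' := hstar 3 (2 - ν) (hA (2 - ν) (by omega) (by omega))
      rw [show (3 : ℤ) + (2 - ν) + ν = 5 by ring] at h'
      have key : ((1 : ℂ) + 2 * ν) * (g 3 * g 5) = 0 := by push_cast at h'; linear_combination h'
      have hg35 : g 3 * g 5 = 0 := by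
        rcases mul_eq_zero.mp key with h'' | h''
        · exfalso
          have hcc : ((1 + 2 * ν : ℤ) : ℂ) = 0 := by push_cast; linear_combination h''
          exact (by omega : (1 + 2 * ν : ℤ) ≠ 0) (by exact_mod_cast hcc)
        · exact h''
      have hg5 : g 5 = 0 := by
        rcases mul_eq_zero.mp hg35 with h'' | h''
        · exact absurd h'' ha
        · exact h''
      rw [hg5] at e5
      have key2 : ((1 : ℂ) + ν) * g 3 = 0 := by push_cast at e5; linear_combination -e5
      rcases mul_eq_zero.mp key2 with h'' | h''
      · have hcc : ((1 + ν : ℤ) : ℂ) = 0 := by push_cast; linear_combination h''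
        exact (by omega : (1 + ν : ℤ) ≠ 0) (by exact_mod_cast hcc)
      · exact ha h''
    · -- a = 2
      subst hca
      have hg5ν : g (5 + ν) = 0 := hB (5 + ν) (by omega) (by omega)
      have s32 : g 3 * g 2 = 0 := by
        have e := h2 3 2
        rw [show (3 : ℤ) + 2 + ν = 5 + ν by ring, hg5ν] at e
        push_cast at e
        linear_combination e
      have hg3 : g 3 = 0 := by
        rcases mul_eq_zero.mp s32 with h' | h'
        · exact h'
        · exact absurd h' ha
      have e5 := hR2 3 2 (by omega) (by omega) (by omega)
      rw [show (3 : ℤ) + 2 = 5 by norm_num, hg3] at e5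
      -- e5 : g 5 = (1 - ν) * g 2
      have h' := hstar 2 (3 - ν) (hA (3 - ν) (by omega) (by omega))
      rw [show (2 : ℤ) + (3 - ν) + ν = 5 by ring] at h'
      have key : ((2 : ℂ) * ν - 1) * (g 2 * g 5) = 0 := by push_cast at h'; linear_combination h'
      have hg25 : g 2 * g 5 = 0 := by
        rcases mul_eq_zero.mp key with h'' | h''
        · exfalso
          have hcc : ((2 * ν - 1 : ℤ) : ℂ) = 0 := by push_cast; linear_combination h''
          exact (by omega : (2 * ν - 1 : ℤ) ≠ 0) (by exact_mod_cast hcc)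
        · exact h''
      have hg5 : g 5 = 0 := by
        rcases mul_eq_zero.mp hg25 with h'' | h''
        · exact absurd h'' ha
        · exact h''
      rw [hg5] at e5
      have key2 : ((1 : ℂ) - ν) * g 2 = 0 := by push_cast at e5; linear_combination -e5
      rcases mul_eq_zero.mp key2 with h'' | h''
      · have hcc : ((1 - ν : ℤ) : ℂ) = 0 := by push_cast; linear_combination h''
        exact (by omega : (1 - ν : ℤ) ≠ 0) (by exact_mod_cast hcc)
      · exact ha h''
end
end

section
/- Let ν be a nonzero integer and let f : ℤ → ℂ be given by f(m) = 0 for m ≥ 2 and f(m) = −1 for m ≤ 1. Let g : ℤ → ℂ be not identically zero and suppose (f, g, ν) satisfy equations (E2) and (E3). Then one of the following holds: (i) ν ∈ {−2, −3, −4}, g(−ν) ≠ 0, and g(m) = 0 for all m ≠ −ν; (ii) ν = −1, g(2) ≠ 0, and g(m) = 0 for all m ≠ 2; (iii) ν = −2, g(2) ≠ 0, g(3) = 2·g(2), and g(m) = 0 for all m ∉ {2, 3}. -/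
noncomputable section

theorem stmt15 (ν : ℤ) (hν : ν ≠ 0) (f g : ℤ → ℂ)
    (hfge : ∀ m : ℤ, 2 ≤ m → f m = 0) (hfle : ∀ m : ℤ, m ≤ 1 → f m = -1)
    (hg : ∃ m : ℤ, g m ≠ 0)
    (h2 : EqE2 ν g) (h3 : EqE3 ν f g) :
    ((ν = -2 ∨ ν = -3 ∨ ν = -4) ∧ g (-ν) ≠ 0 ∧ ∀ m : ℤ, m ≠ -ν → g m = 0) ∨
    (ν = -1 ∧ g 2 ≠ 0 ∧ ∀ m : ℤ, m ≠ 2 → g m = 0) ∨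
    (ν = -2 ∧ g 2 ≠ 0 ∧ g 3 = 2 * g 2 ∧ ∀ m : ℤ, m ≠ 2 → m ≠ 3 → g m = 0) := by
  have intC : ∀ (a : ℤ) (x : ℂ), a ≠ 0 → (a : ℂ) * x = 0 → x = 0 := by
    intro a x ha h
    exact (mul_eq_zero.mp h).resolve_left (Int.cast_ne_zero.mpr ha)
  -- Vanishing for small arguments
  have hA : ∀ k : ℤ, k ≤ 1 → k + ν ≤ 1 → g k = 0 := by
    intro k hk hkv
    have h := h3 1 (k - 1)
    rw [show (1 : ℤ) + (k - 1) = k from by ring] at h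
    rw [hfle 1 le_rfl, hfle (k - 1) (by omega), hfle (k + ν) hkv] at h
    have key : ((k - 2 : ℤ) : ℂ) * g k = 0 := by
      push_cast at h ⊢; linear_combination h
    exact intC _ _ (by omega) key
  -- Vanishing for large arguments
  have hC : ∀ n : ℤ, 2 ≤ n → 2 ≤ n + ν → g n = 0 := by
    intro n hn hnv
    have h := h3 1 n
    rw [show (1 : ℤ) + n + ν = n + ν + 1 from by ring] at h
    rw [hfle 1 le_rfl, hfge n hn, hfge (n + ν + 1) (by omega)] at h
    have key : ((n - 1 + ν : ℤ) : ℂ) * g n = 0 := by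
      push_cast at h ⊢; linear_combination -h
    exact intC _ _ (by omega) key
  obtain ⟨s, hs⟩ := hg
  rcases lt_or_gt_of_ne hν with hneg | hpos
  · -- ν < 0
    have hlow : ∀ k : ℤ, k ≤ 1 → g k = 0 := fun k hk => hA k hk (by omega)
    have hhigh : ∀ k : ℤ, 2 - ν ≤ k → g k = 0 := fun k hk => hC k (by omega) (by omega)
    by_cases hν1 : ν = -1
    · subst hν1
      have hg2 : g 2 ≠ 0 := by
        have hseq : s = 2 := by
          by_contra hc
          rcases (by omega : s ≤ 1 ∨ 2 - (-1 : ℤ) ≤ s) with h' | h'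
          exacts [hs (hlow s h'), hs (hhigh s h')]
        rwa [← hseq]
      right; left
      refine ⟨rfl, hg2, ?_⟩
      intro m hm
      rcases (by omega : m ≤ 1 ∨ 2 - (-1 : ℤ) ≤ m) with h' | h'
      exacts [hlow m h', hhigh m h']
    · -- ν ≤ -2
      have hν2 : ν ≤ -2 := by omega
      have hsl : 2 ≤ s := by by_contra hc; exact hs (hlow s (by omega))
      have hsu : s ≤ 1 - ν := by by_contra hc; exact hs (hhigh s (by omega))
      have hb : g (-ν) ≠ 0 := by
        intro hc
        have h := h2 (-ν) s
        rw [show -ν + s + ν = s from by ring, hc] at h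
        have key : ((-2 * ν - s : ℤ) : ℂ) * (g s * g s) = 0 := by
          push_cast at h ⊢; linear_combination -h
        exact hs (mul_self_eq_zero.mp (intC _ _ (by omega) key))
      by_cases hm2 : ν = -2
      · subst hm2
        have hb2 : g 2 ≠ 0 := by
          have := hb; norm_num at this; exact this
        have h := h2 3 2
        rw [show (3 : ℤ) + 2 + -2 = 3 from by norm_num] at h
        have key : g 3 * (g 3 - 2 * g 2) = 0 := by
          push_cast at h; linear_combination h
        have hrest : ∀ m : ℤ, m ≠ 2 → m ≠ 3 → g m = 0 := by
          intro m h1' h2'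
          rcases (by omega : m ≤ 1 ∨ 2 - (-2 : ℤ) ≤ m) with h' | h'
          exacts [hlow m h', hhigh m h']
        rcases mul_eq_zero.mp key with h3z | hlin
        · left
          refine ⟨Or.inl rfl, by simpa using hb, ?_⟩
          intro m hm
          by_cases hm3 : m = 3
          · rw [hm3]; exact h3z
          · exact hrest m (by omega) hm3
        · right; right
          exact ⟨rfl, hb2, by linear_combination hlin, hrest⟩
      · -- ν ≤ -3
        have hν3 : ν ≤ -3 := by omega
        have hmid : ∀ k : ℤ, 2 ≤ k → k ≤ -ν - 2 → g k = 0 := by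
          intro k hk1 hk2
          have h := h2 (-2 * ν - k) k
          rw [show -2 * ν - k + k + ν = -ν from by ring,
            hhigh (-2 * ν - k) (by omega)] at h
          have key : ((-3 * ν - 2 * k : ℤ) : ℂ) * (g k * g (-ν)) = 0 := by
            push_cast at h ⊢; linear_combination -h
          exact (mul_eq_zero.mp (intC _ _ (by omega) key)).resolve_right hb
        have hac : g (-ν - 1) * g (-ν + 1) = 0 := by
          have h := h2 (-ν + 2) (-ν - 1)
          rw [show -ν + 2 + (-ν - 1) + ν = -ν + 1 from by ring,
            hhigh (-ν + 2) (by omega)] at h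
          have key : ((3 - ν : ℤ) : ℂ) * (g (-ν - 1) * g (-ν + 1)) = 0 := by
            push_cast at h ⊢; linear_combination -h
          exact intC _ _ (by omega) key
        have h4 := h2 (-ν + 1) (-ν - 1)
        rw [show -ν + 1 + (-ν - 1) + ν = -ν from by ring] at h4
        have hzeros : g (-ν - 1) = 0 ∧ g (-ν + 1) = 0 := by
          rcases mul_eq_zero.mp hac with ha | hc
          · refine ⟨ha, ?_⟩
            rw [ha] at h4
            have key : ((2 + ν : ℤ) : ℂ) * (g (-ν + 1) * g (-ν)) = 0 := by
              push_cast at h4 ⊢; linear_combination -h4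
            exact (mul_eq_zero.mp (intC _ _ (by omega) key)).resolve_right hb
          · refine ⟨?_, hc⟩
            rw [hc] at h4
            have key : ((2 - ν : ℤ) : ℂ) * (g (-ν - 1) * g (-ν)) = 0 := by
              push_cast at h4 ⊢; linear_combination -h4
            exact (mul_eq_zero.mp (intC _ _ (by omega) key)).resolve_right hb
        obtain ⟨ha0, hc0⟩ := hzeros
        have hsupp : ∀ m : ℤ, m ≠ -ν → g m = 0 := by
          intro m hm
          rcases (by omega :
              m ≤ 1 ∨ (2 ≤ m ∧ m ≤ -ν - 2) ∨ m = -ν - 1 ∨ m = -ν + 1 ∨ 2 - ν ≤ m) with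
            h' | ⟨h1', h2'⟩ | h' | h' | h'
          · exact hlow m h'
          · exact hmid m h1' h2'
          · rw [h']; exact ha0
          · rw [h']; exact hc0
          · exact hhigh m h'
        have hν4 : -4 ≤ ν := by
          by_contra hc
          have h := h3 2 (-ν - 2)
          rw [show (2 : ℤ) + (-ν - 2) = -ν from by ring] at h
          rw [show -ν + ν = (0 : ℤ) from by ring] at h
          rw [hfge 2 le_rfl, hfge (-ν - 2) (by omega), hfle 0 (by norm_num)] at h
          rw [hsupp (-ν - 2) (by omega), hsupp 2 (by omega)] at h
          have key : ((ν + 4 : ℤ) : ℂ) * g (-ν) = 0 := by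
            push_cast at h ⊢; linear_combination h
          exact hb (intC _ _ (by omega) key)
        left
        exact ⟨by omega, hb, hsupp⟩
  · -- ν > 0 : contradiction
    exfalso
    have hs1 : s ≤ 1 := by by_contra hc; exact hs (hC s (by omega) (by omega))
    have hs2 : 2 - ν ≤ s := by by_contra hc; exact hs (hA s (by omega) (by omega))
    have h0 : g (-ν) = 0 := hA (-ν) (by omega) (by omega)
    have h := h2 (-ν) s
    rw [show -ν + s + ν = s from by ring, h0] at h
    have key : ((2 * ν + s : ℤ) : ℂ) * (g s * g s) = 0 := by
      push_cast at h ⊢; linear_combination h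
    exact hs (mul_self_eq_zero.mp (intC _ _ (by omega) key))
end
end

section
/- Let b ∈ ℂ be nonzero, let ν = −2, let f : ℤ → ℂ be given by f(m) = −1 for m ≥ 2 and f(m) = 0 for m ≤ 1, and let g : ℤ → ℂ be given by g(2) = −b, g(3) = −2b, and g(m) = 0 for all m ∉ {2, 3}. Then f satisfies equation (E) and (f, g, ν) satisfy equations (E2) and (E3). -/
noncomputable section

theorem stmt16 (b : ℂ) (hb : b ≠ 0) (f g : ℤ → ℂ)
    (hfge : ∀ m : ℤ, 2 ≤ m → f m = -1) (hfle : ∀ m : ℤ, m ≤ 1 → f m = 0)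
    (hg2 : g 2 = -b) (hg3 : g 3 = -2 * b)
    (hg0 : ∀ m : ℤ, m ≠ 2 → m ≠ 3 → g m = 0) :
    EqE f ∧ EqE2 (-2) g ∧ EqE3 (-2) f g := by
  refine ⟨?_, ?_, ?_⟩
  · -- EqE
    intro m n
    rcases le_or_gt 2 (m + n) with hmn | hmn
    · rcases le_or_gt 2 m with hm | hm
      · rcases le_or_gt 2 n with hn | hn
        · rw [hfge m hm, hfge n hn, hfge (m+n) hmn]; ring
        · rw [hfge m hm, hfle n (by omega), hfge (m+n) hmn]; ring
      · rcases le_or_gt 2 n with hn | hn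
        · rw [hfle m (by omega), hfge n hn, hfge (m+n) hmn]; ring
        · have hm1 : m = 1 := by omega
          have hn1 : n = 1 := by omega
          subst hm1; subst hn1; norm_num
    · rcases le_or_gt 2 m with hm | hm
      · rcases le_or_gt 2 n with hn | hn
        · omega
        · rw [hfge m hm, hfle n (by omega), hfle (m+n) (by omega)]; ring
      · rcases le_or_gt 2 n with hn | hn
        · rw [hfle m (by omega), hfge n hn, hfle (m+n) (by omega)]; ring
        · rw [hfle m (by omega), hfle n (by omega), hfle (m+n) (by omega)]; ring
  · -- EqE2
    intro m n
    rcases eq_or_ne m 2 with rfl | hm2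
    · rcases eq_or_ne n 2 with rfl | hn2
      · have e : (2 : ℤ) + 2 + (-2) = 2 := by norm_num
        rw [e, hg2]; push_cast; ring
      · rcases eq_or_ne n 3 with rfl | hn3
        · have e : (2 : ℤ) + 3 + (-2) = 3 := by norm_num
          rw [e, hg2, hg3]; push_cast; ring
        · have hgn : g n = 0 := hg0 n hn2 hn3
          have e : (2 : ℤ) + n + (-2) = n := by ring
          rw [e, hgn]; ring
    · rcases eq_or_ne m 3 with rfl | hm3
      · rcases eq_or_ne n 2 with rfl | hn2
        · have e : (3 : ℤ) + 2 + (-2) = 3 := by norm_num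
          rw [e, hg2, hg3]; push_cast; ring
        · rcases eq_or_ne n 3 with rfl | hn3
          · have e : (3 : ℤ) + 3 + (-2) = 4 := by norm_num
            rw [e, hg0 4 (by norm_num) (by norm_num)]; ring
          · have hgn : g n = 0 := hg0 n hn2 hn3
            rcases eq_or_ne n 1 with rfl | hn1
            · norm_num [hgn]
            · have e : (3 : ℤ) + n + (-2) = n + 1 := by ring
              rw [e, hgn, hg0 (n+1) (by omega) (by omega)]; ring
      · have hgm : g m = 0 := hg0 m hm2 hm3
        rcases eq_or_ne n 2 with rfl | hn2
        · have e : m + 2 + (-2) = m := by ring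
          rw [e, hgm]; ring
        · rcases eq_or_ne n 3 with rfl | hn3
          · rcases eq_or_ne m 1 with rfl | hm1
            · norm_num [hgm]
            · have e : m + 3 + (-2) = m + 1 := by ring
              rw [e, hgm, hg0 (m+1) (by omega) (by omega)]; ring
          · rw [hgm, hg0 n hn2 hn3]; ring
  · -- EqE3
    intro m n
    have hL : ((m : ℂ) - n) * (f m + f n + 1) * g (m + n) = 0 := by
      by_cases h : m + n = 2 ∨ m + n = 3
      · rcases le_or_gt 2 m with hm | hm
        · rw [hfge m hm, hfle n (by omega)]; ring
        · rcases le_or_gt 2 n with hn | hn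
          · rw [hfle m (by omega), hfge n hn]; ring
          · have hm1 : m = 1 := by omega
            have hn1 : n = 1 := by omega
            subst hm1; subst hn1; norm_num
      · push_neg at h
        rw [hg0 (m + n) h.1 h.2]; ring
    have hR1 : ((n : ℂ) - m + ((-2 : ℤ) : ℂ)) * (f (m + n + (-2)) - f m) * g n = 0 := by
      rcases eq_or_ne n 2 with rfl | hn2
      · have e : m + 2 + (-2) = m := by ring
        rw [e]; ring
      · rcases eq_or_ne n 3 with rfl | hn3
        · have e : m + 3 + (-2) = m + 1 := by ring
          rw [e]
          rcases le_or_gt 2 m with hm | hm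
          · rw [hfge (m+1) (by omega), hfge m hm]; ring
          · rcases eq_or_ne m 1 with rfl | hm1
            · norm_num
            · rw [hfle (m+1) (by omega), hfle m (by omega)]; ring
        · rw [hg0 n hn2 hn3]; ring
    have hR2 : ((n : ℂ) - m - ((-2 : ℤ) : ℂ)) * (f (m + n + (-2)) - f n) * g m = 0 := by
      rcases eq_or_ne m 2 with rfl | hm2
      · have e : (2 : ℤ) + n + (-2) = n := by ring
        rw [e]; ring
      · rcases eq_or_ne m 3 with rfl | hm3
        · have e : (3 : ℤ) + n + (-2) = n + 1 := by ring
          rw [e]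
          rcases le_or_gt 2 n with hn | hn
          · rw [hfge (n+1) (by omega), hfge n hn]; ring
          · rcases eq_or_ne n 1 with rfl | hn1
            · norm_num
            · rw [hfle (n+1) (by omega), hfle n (by omega)]; ring
        · rw [hg0 m hm2 hm3]; ring
    rw [hL, hR1, hR2, add_zero]
end
end

section
/- Let f : ℤ → ℂ and let R : W → W be the ℂ-linear map on the Witt algebra W determined by R(L_m) = f(m)·L_m for all m ∈ ℤ. Then R is a Rota–Baxter operator of weight 1 on W if and only if f is one of the following eight functions: (P1) f ≡ 0; (P2) f ≡ −1; (P3ᵃ) f(m) = −1 for m > 0, f(0) = a, f(m) = 0 for m < 0, for some a ∈ ℂ; (P4ᵃ) f(m) = 0 for m > 0, f(0) = a, f(m) = −1 for m < 0, for some a ∈ ℂ; (P5) f(m) = −1 for m ≥ 2, f(m) = 0 for m ≤ 1; (P6) f(m) = 0 for m ≥ 2, f(m) = −1 for m ≤ 1; (P7) f(m) = −1 for m ≤ −2, f(m) = 0 for m ≥ −1; (P8) f(m) = 0 for m ≤ −2, f(m) = −1 for m ≥ −1. -/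
noncomputable section

/-- `R` is a Rota–Baxter operator of weight 1 with respect to the bracket `br`. -/
def IsRotaBaxterWeightOne (br : W →ₗ[ℂ] W →ₗ[ℂ] W) (R : W →ₗ[ℂ] W) : Prop :=
  ∀ x y : W, br (R x) (R y) = R (br (R x) y + br x (R y)) + R (br x y)


section Aux
variable (f : ℤ → ℂ)


lemma posLemma
    (h1 : ∀ m : ℤ, m ≠ 0 → f m = 0 ∨ f m = -1)
    (hA : ∀ m n : ℤ, m ≠ n → f m = 0 → f n = 0 → f (m + n) = 0)
    (hB : ∀ m n : ℤ, m ≠ n → f m = -1 → f n = -1 → f (m + n) = -1) :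
    (∀ m : ℤ, 1 ≤ m → f m = 0) ∨ (∀ m : ℤ, 1 ≤ m → f m = -1) ∨
    (f 1 = 0 ∧ ∀ m : ℤ, 2 ≤ m → f m = -1) ∨
    (f 1 = -1 ∧ ∀ m : ℤ, 2 ≤ m → f m = 0) := by
  rcases h1 1 one_ne_zero with h1v | h1v <;> rcases h1 2 two_ne_zero with h2v | h2v
  · -- f 1 = 0, f 2 = 0
    left
    have key : ∀ m : ℤ, 2 ≤ m → f m = 0 :=
      Int.le_induction h2v (fun n hn ih => hA n 1 (by omega) ih h1v)
    intro m hm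
    rcases eq_or_lt_of_le hm with h | h
    · rw [← h]; exact h1v
    · exact key m (by omega)
  · -- f 1 = 0, f 2 = -1
    rcases h1 3 (by norm_num) with h3 | h3
    · -- f 3 = 0 : excluded case
      exfalso
      rcases h1 (-1) (by norm_num) with hm1 | hm1
      · have : f 2 = 0 := by have := hA 3 (-1) (by omega) h3 hm1; norm_num at this; exact this
        rw [this] at h2v; norm_num at h2v
      · have : f 1 = -1 := by have := hB 2 (-1) (by omega) h2v hm1; norm_num at this; exact this
        rw [this] at h1v; norm_num at h1v
    · -- f 3 = -1
      have f5 : f 5 = -1 := by have := hB 2 3 (by omega) h2v h3; norm_num at this; exact this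
      have f4 : f 4 = -1 := by
        rcases h1 4 (by norm_num) with h4 | h4
        · exfalso
          have : f 5 = 0 := by have := hA 1 4 (by omega) h1v h4; norm_num at this; exact this
          rw [this] at f5; norm_num at f5
        · exact h4
      have key : ∀ m : ℤ, 2 ≤ m → f m = -1 ∧ f (m + 1) = -1 ∧ f (m + 2) = -1 := by
        refine Int.le_induction ⟨h2v, ?_, ?_⟩ (fun n hn ih => ⟨ih.2.1, by rw [show n + 1 + 1 = n + 2 by ring]; exact ih.2.2, ?_⟩)
        · norm_num; exact h3
        · norm_num; exact f4
        · exact hB (n + 1) 2 (by omega) ih.2.1 h2v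
      exact Or.inr (Or.inr (Or.inl ⟨h1v, fun m hm => (key m hm).1⟩))
  · -- f 1 = -1, f 2 = 0
    rcases h1 3 (by norm_num) with h3 | h3
    · -- f 3 = 0
      have f4 : f 4 = 0 := by
        rcases h1 4 (by norm_num) with h4 | h4
        · exact h4
        · exfalso
          have e1 : f 5 = -1 := by have := hB 1 4 (by omega) h1v h4; norm_num at this; exact this
          have e2 : f 5 = 0 := by have := hA 2 3 (by omega) h2v h3; norm_num at this; exact this
          rw [e2] at e1; norm_num at e1
      have key : ∀ m : ℤ, 2 ≤ m → f m = 0 ∧ f (m + 1) = 0 ∧ f (m + 2) = 0 := by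
        refine Int.le_induction ⟨h2v, ?_, ?_⟩ (fun n hn ih => ⟨ih.2.1, by rw [show n + 1 + 1 = n + 2 by ring]; exact ih.2.2, ?_⟩)
        · norm_num; exact h3
        · norm_num; exact f4
        · exact hA (n + 1) 2 (by omega) ih.2.1 h2v
      exact Or.inr (Or.inr (Or.inr ⟨h1v, fun m hm => (key m hm).1⟩))
    · -- f 3 = -1 : excluded case
      exfalso
      rcases h1 (-1) (by norm_num) with hm1 | hm1
      · have : f 1 = 0 := by have := hA 2 (-1) (by omega) h2v hm1; norm_num at this; exact this
        rw [this] at h1v; norm_num at h1v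
      · have : f 2 = -1 := by have := hB 3 (-1) (by omega) h3 hm1; norm_num at this; exact this
        rw [this] at h2v; norm_num at h2v
  · -- f 1 = -1, f 2 = -1
    right; left
    have key : ∀ m : ℤ, 2 ≤ m → f m = -1 :=
      Int.le_induction h2v (fun n hn ih => hB n 1 (by omega) ih h1v)
    intro m hm
    rcases eq_or_lt_of_le hm with h | h
    · rw [← h]; exact h1v
    · exact key m (by omega)

lemma classify_s17
    (h : ∀ m n : ℤ, ((m:ℂ) - n) * (f m * f n) = ((m:ℂ) - n) * ((f m + f n + 1) * f (m + n))) :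
    IsGradedType f := by
  have h1 : ∀ m : ℤ, m ≠ 0 → f m = 0 ∨ f m = -1 := by
    intro m hm
    have H := h m 0
    rw [add_zero] at H
    have hm' : (m : ℂ) ≠ 0 := Int.cast_ne_zero.mpr hm
    have key : (m : ℂ) * (f m * (f m + 1)) = 0 := by push_cast at H ⊢; linear_combination -H
    rcases mul_eq_zero.mp key with h' | h'
    · exact absurd h' hm'
    · rcases mul_eq_zero.mp h' with h'' | h''
      · exact Or.inl h''
      · exact Or.inr (by linear_combination h'')
  have hA : ∀ m n : ℤ, m ≠ n → f m = 0 → f n = 0 → f (m + n) = 0 := by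
    intro m n hne hm hn
    have H := h m n
    rw [hm, hn] at H
    have hmn : ((m:ℂ) - n) ≠ 0 := sub_ne_zero.mpr (by exact_mod_cast hne)
    have key : ((m:ℂ) - n) * f (m + n) = 0 := by linear_combination -H
    exact (mul_eq_zero.mp key).resolve_left hmn
  have hB : ∀ m n : ℤ, m ≠ n → f m = -1 → f n = -1 → f (m + n) = -1 := by
    intro m n hne hm hn
    have H := h m n
    rw [hm, hn] at H
    have hmn : ((m:ℂ) - n) ≠ 0 := sub_ne_zero.mpr (by exact_mod_cast hne)
    have key : ((m:ℂ) - n) * (f (m + n) + 1) = 0 := by linear_combination H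
    have := (mul_eq_zero.mp key).resolve_left hmn
    linear_combination this
  have h1' : ∀ m : ℤ, m ≠ 0 → f (-m) = 0 ∨ f (-m) = -1 := fun m hm => h1 (-m) (by omega)
  have hA' : ∀ m n : ℤ, m ≠ n → f (-m) = 0 → f (-n) = 0 → f (-(m + n)) = 0 := by
    intro m n hne hm hn
    have := hA (-m) (-n) (by omega) hm hn
    rwa [show -m + -n = -(m + n) by ring] at this
  have hB' : ∀ m n : ℤ, m ≠ n → f (-m) = -1 → f (-n) = -1 → f (-(m + n)) = -1 := by
    intro m n hne hm hn
    have := hB (-m) (-n) (by omega) hm hn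
    rwa [show -m + -n = -(m + n) by ring] at this
  have hp := posLemma f h1 hA hB
  have hn := posLemma (fun m => f (-m)) h1' hA' hB'
  rcases hp with p0 | p1 | ⟨p2a, p2b⟩ | ⟨p3a, p3b⟩ <;>
    rcases hn with n0 | n1 | ⟨n2a, n2b⟩ | ⟨n3a, n3b⟩
  · -- P1
    left; intro m
    rcases lt_trichotomy m 0 with hm | hm | hm
    · have := n0 (-m) (by omega); rwa [neg_neg] at this
    · rw [hm]
      have := hA 1 (-1) (by omega) (p0 1 le_rfl) (n0 1 le_rfl)
      norm_num at this; exact this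
    · exact p0 m (by omega)
  · -- P4
    right; right; right; left
    exact ⟨f 0, fun m hm => p0 m (by omega), rfl,
      fun m hm => by have := n1 (-m) (by omega); rwa [neg_neg] at this⟩
  · -- P7
    right; right; right; right; right; right; left
    have f0 : f 0 = 0 := by
      have := hA 1 (-1) (by omega) (p0 1 le_rfl) n2a; norm_num at this; exact this
    refine ⟨fun m hm => by have := n2b (-m) (by omega); rwa [neg_neg] at this, fun m hm => ?_⟩
    rcases lt_trichotomy m 0 with h' | h' | h'
    · have hm1 : m = -1 := by omega
      rw [hm1]; exact n2a
    · rw [h']; exact f0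
    · exact p0 m (by omega)
  · -- contradiction (p0,n3)
    exfalso
    have := hA 1 (-2) (by omega) (p0 1 le_rfl) (n3b 2 le_rfl)
    norm_num at this
    rw [this] at n3a; norm_num at n3a
  · -- P3
    right; right; left
    exact ⟨f 0, fun m hm => p1 m (by omega), rfl,
      fun m hm => by have := n0 (-m) (by omega); rwa [neg_neg] at this⟩
  · -- P2
    right; left; intro m
    rcases lt_trichotomy m 0 with hm | hm | hm
    · have := n1 (-m) (by omega); rwa [neg_neg] at this
    · rw [hm]
      have := hB 1 (-1) (by omega) (p1 1 le_rfl) (n1 1 le_rfl)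
      norm_num at this; exact this
    · exact p1 m (by omega)
  · -- contradiction (p1,n2)
    exfalso
    have := hB 1 (-2) (by omega) (p1 1 le_rfl) (n2b 2 le_rfl)
    norm_num at this
    rw [this] at n2a; norm_num at n2a
  · -- P8
    right; right; right; right; right; right; right
    have f0 : f 0 = -1 := by
      have := hB 1 (-1) (by omega) (p1 1 le_rfl) n3a; norm_num at this; exact this
    refine ⟨fun m hm => by have := n3b (-m) (by omega); rwa [neg_neg] at this, fun m hm => ?_⟩
    rcases lt_trichotomy m 0 with h' | h' | h'
    · have hm1 : m = -1 := by omega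
      rw [hm1]; exact n3a
    · rw [h']; exact f0
    · exact p1 m (by omega)
  · -- P5
    right; right; right; right; left
    have f0 : f 0 = 0 := by
      have := hA 1 (-1) (by omega) p2a (n0 1 le_rfl); norm_num at this; exact this
    refine ⟨p2b, fun m hm => ?_⟩
    rcases lt_trichotomy m 0 with h' | h' | h'
    · have := n0 (-m) (by omega); rwa [neg_neg] at this
    · rw [h']; exact f0
    · have hm1 : m = 1 := by omega
      rw [hm1]; exact p2a
  · -- contradiction (p2,n1)
    exfalso
    have := hB 2 (-1) (by omega) (p2b 2 le_rfl) (n1 1 le_rfl)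
    norm_num at this
    rw [this] at p2a; norm_num at p2a
  · -- contradiction (p2,n2)
    exfalso
    have := hB 2 (-3) (by omega) (p2b 2 le_rfl) (n2b 3 (by omega))
    norm_num at this
    rw [this] at n2a; norm_num at n2a
  · -- contradiction (p2,n3)
    exfalso
    have := hA 1 (-2) (by omega) p2a (n3b 2 le_rfl)
    norm_num at this
    rw [this] at n3a; norm_num at n3a
  · -- contradiction (p3,n0)
    exfalso
    have := hA 2 (-1) (by omega) (p3b 2 le_rfl) (n0 1 le_rfl)
    norm_num at this
    rw [this] at p3a; norm_num at p3a
  · -- P6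
    right; right; right; right; right; left
    have f0 : f 0 = -1 := by
      have := hB 1 (-1) (by omega) p3a (n1 1 le_rfl); norm_num at this; exact this
    refine ⟨p3b, fun m hm => ?_⟩
    rcases lt_trichotomy m 0 with h' | h' | h'
    · have := n1 (-m) (by omega); rwa [neg_neg] at this
    · rw [h']; exact f0
    · have hm1 : m = 1 := by omega
      rw [hm1]; exact p3a
  · -- contradiction (p3,n2)
    exfalso
    have := hA 2 (-1) (by omega) (p3b 2 le_rfl) n2a
    norm_num at this
    rw [this] at p3a; norm_num at p3a
  · -- contradiction (p3,n3)
    exfalso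
    have := hA 2 (-3) (by omega) (p3b 2 le_rfl) (n3b 3 (by omega))
    norm_num at this
    rw [this] at n3a; norm_num at n3a

lemma graded_key (f : ℤ → ℂ) (hg : IsGradedType f) (m n : ℤ) :
    ((m:ℂ) - n) * (f m * f n) = ((m:ℂ) - n) * ((f m + f n + 1) * f (m + n)) := by
  by_cases hmn : m = n
  · subst hmn; ring
  rcases hg with h | h | ⟨a, hp, h0, hneg⟩ | ⟨a, hp, h0, hneg⟩ | ⟨h2, h1⟩ | ⟨h2, h1⟩ |
    ⟨h2, h1⟩ | ⟨h2, h1⟩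
  · simp only [h]; ring
  · simp only [h]; ring
  · rcases lt_trichotomy m 0 with hm | hm | hm <;> rcases lt_trichotomy n 0 with hn' | hn' | hn'
    · rw [hneg m hm, hneg n hn', hneg (m + n) (by omega)]; ring
    · subst hn'; rw [add_zero, hneg m hm]; ring
    · rw [hneg m hm, hp n hn']; ring
    · subst hm; rw [zero_add, hneg n hn']; ring
    · exact absurd (hm.trans hn'.symm) hmn
    · subst hm; rw [zero_add, hp n hn']; ring
    · rw [hp m hm, hneg n hn']; ring
    · subst hn'; rw [add_zero, hp m hm]; ring
    · rw [hp m hm, hp n hn', hp (m + n) (by omega)]; ring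
  · rcases lt_trichotomy m 0 with hm | hm | hm <;> rcases lt_trichotomy n 0 with hn' | hn' | hn'
    · rw [hneg m hm, hneg n hn', hneg (m + n) (by omega)]; ring
    · subst hn'; rw [add_zero, hneg m hm]; ring
    · rw [hneg m hm, hp n hn']; ring
    · subst hm; rw [zero_add, hneg n hn']; ring
    · exact absurd (hm.trans hn'.symm) hmn
    · subst hm; rw [zero_add, hp n hn']; ring
    · rw [hp m hm, hneg n hn']; ring
    · subst hn'; rw [add_zero, hp m hm]; ring
    · rw [hp m hm, hp n hn', hp (m + n) (by omega)]; ring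
  · rcases le_or_gt m 1 with hm | hm <;> rcases le_or_gt n 1 with hn' | hn'
    · rw [h1 m hm, h1 n hn', h1 (m + n) (by omega)]; ring
    · rw [h1 m hm, h2 n (by omega)]; ring
    · rw [h2 m (by omega), h1 n hn']; ring
    · rw [h2 m (by omega), h2 n (by omega), h2 (m + n) (by omega)]; ring
  · rcases le_or_gt m 1 with hm | hm <;> rcases le_or_gt n 1 with hn' | hn'
    · rw [h1 m hm, h1 n hn', h1 (m + n) (by omega)]; ring
    · rw [h1 m hm, h2 n (by omega)]; ring
    · rw [h2 m (by omega), h1 n hn']; ring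
    · rw [h2 m (by omega), h2 n (by omega), h2 (m + n) (by omega)]; ring
  · rcases le_or_gt (-1) m with hm | hm <;> rcases le_or_gt (-1) n with hn' | hn'
    · rw [h1 m hm, h1 n hn', h1 (m + n) (by omega)]; ring
    · rw [h1 m hm, h2 n (by omega)]; ring
    · rw [h2 m (by omega), h1 n hn']; ring
    · rw [h2 m (by omega), h2 n (by omega), h2 (m + n) (by omega)]; ring
  · rcases le_or_gt (-1) m with hm | hm <;> rcases le_or_gt (-1) n with hn' | hn'
    · rw [h1 m hm, h1 n hn', h1 (m + n) (by omega)]; ring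
    · rw [h1 m hm, h2 n (by omega)]; ring
    · rw [h2 m (by omega), h1 n hn']; ring
    · rw [h2 m (by omega), h2 n (by omega), h2 (m + n) (by omega)]; ring

end Aux

theorem stmt17 (br : W →ₗ[ℂ] W →ₗ[ℂ] W)
    (hbr : ∀ m n : ℤ, br (L m) (L n) = (m - n : ℂ) • L (m + n))
    (f : ℤ → ℂ) (R : W →ₗ[ℂ] W)
    (hR : ∀ m : ℤ, R (L m) = f m • L m) :
    IsRotaBaxterWeightOne br R ↔ IsGradedType f := by
  constructor
  · intro h
    apply classify_s17 f
    intro m n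
    have H := h (L m) (L n)
    simp only [hR, map_smul, LinearMap.smul_apply, hbr, map_add, smul_smul] at H
    have H2 := DFunLike.congr_fun H (m + n)
    simp only [L, Finsupp.smul_single, smul_eq_mul, mul_one, Finsupp.add_apply,
      Finsupp.single_eq_same] at H2
    linear_combination H2
  · intro hg x y
    have key : ∀ m n : ℤ, br (R (L m)) (R (L n)) =
        R (br (R (L m)) (L n) + br (L m) (R (L n))) + R (br (L m) (L n)) := by
      intro m n
      simp only [hR, map_smul, LinearMap.smul_apply, hbr, map_add, smul_smul]
      match_scalars
      linear_combination graded_key f hg m n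
    induction x using Finsupp.induction_linear with
    | zero => simp
    | add x1 x2 ih1 ih2 =>
      simp only [map_add, LinearMap.add_apply] at *
      rw [ih1, ih2]; abel
    | single a b =>
      induction y using Finsupp.induction_linear with
      | zero => simp
      | add y1 y2 ih1 ih2 =>
        simp only [map_add, LinearMap.add_apply] at *
        rw [ih1, ih2]; abel
      | single c d =>
        have hab : (Finsupp.single a b : W) = b • L a := by
          rw [L, Finsupp.smul_single', mul_one]
        have hcd : (Finsupp.single c d : W) = d • L c := by
          rw [L, Finsupp.smul_single', mul_one]
        rw [hab, hcd]
        simp only [map_smul, LinearMap.smul_apply, smul_add, key a c]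
        simp only [map_add, map_smul, smul_add, smul_smul]
end
end

section
/- Let ν be a nonzero integer, let f, g : ℤ → ℂ, and let R : W → W be the ℂ-linear map on the Witt algebra W determined by R(L_m) = f(m)·L_m + g(m)·L_{m+ν} for all m ∈ ℤ. Then R is a Rota–Baxter operator of weight 1 on W if and only if f satisfies equation (E) and (f, g, ν) satisfy equations (E2) and (E3). -/
noncomputable section

/-- Coefficient extraction for combinations of `L k`, `L (k+ν)`, `L (k+2ν)`. -/
lemma tri_coeff {ν : ℤ} (hν : ν ≠ 0) (k : ℤ) (a b c a' b' c' : ℂ) :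
    a • L k + b • L (k+ν) + c • L (k+2*ν) = a' • L k + b' • L (k+ν) + c' • L (k+2*ν) ↔
      a = a' ∧ b = b' ∧ c = c' := by
  constructor
  · intro h
    have h1 := DFunLike.congr_fun h k
    have h2 := DFunLike.congr_fun h (k+ν)
    have h3 := DFunLike.congr_fun h (k+2*ν)
    simp [L, Finsupp.single_apply, hν, show (2:ℤ)*ν ≠ ν by omega,
      show ν ≠ 2*ν by omega] at h1 h2 h3
    exact ⟨h1, h2, h3⟩
  · rintro ⟨rfl, rfl, rfl⟩; rfl

theorem stmt18 (ν : ℤ) (hν : ν ≠ 0) (br : W →ₗ[ℂ] W →ₗ[ℂ] W)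
    (hbr : ∀ m n : ℤ, br (L m) (L n) = (m - n : ℂ) • L (m + n))
    (f g : ℤ → ℂ) (R : W →ₗ[ℂ] W)
    (hR : ∀ m : ℤ, R (L m) = f m • L m + g m • L (m + ν)) :
    IsRotaBaxterWeightOne br R ↔ (EqE f ∧ EqE2 ν g ∧ EqE3 ν f g) := by
  -- Step 1: reduce the Rota–Baxter identity to basis elements.
  have basis_iff : IsRotaBaxterWeightOne br R ↔
      ∀ m n : ℤ, br (R (L m)) (R (L n)) =
        R (br (R (L m)) (L n) + br (L m) (R (L n))) + R (br (L m) (L n)) := by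
    constructor
    · intro h m n; exact h (L m) (L n)
    · intro h
      have key : ((br ∘ₗ R).compl₂ R) =
          ((br ∘ₗ R).compr₂ R) + ((br.compl₂ R).compr₂ R) + (br.compr₂ R) := by
        ext m n : 4
        simpa [L, map_add] using h m n
      intro x y
      simpa [map_add] using LinearMap.congr_fun (LinearMap.congr_fun key x) y
  -- Step 2: the basis identity at (m, n) is equivalent to three scalar equations.
  have scalar_iff : ∀ m n : ℤ,
      (br (R (L m)) (R (L n)) =
        R (br (R (L m)) (L n) + br (L m) (R (L n))) + R (br (L m) (L n))) ↔
      (f m * f n * ((m:ℂ)-n) = (f m + f n + 1) * ((m:ℂ)-n) * f (m+n) ∧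
       f m * g n * ((m:ℂ)-n-ν) + g m * f n * ((m:ℂ)-n+ν)
         = (f m + f n + 1) * ((m:ℂ)-n) * g (m+n)
           + (((m:ℂ)-n+ν) * g m + ((m:ℂ)-n-ν) * g n) * f (m+n+ν) ∧
       g m * g n * ((m:ℂ)-n) = (((m:ℂ)-n+ν) * g m + ((m:ℂ)-n-ν) * g n) * g (m+n+ν)) := by
    intro m n
    have e1 : br (R (L m)) (R (L n)) =
        (f m * f n * ((m:ℂ)-n)) • L (m+n)
        + (f m * g n * ((m:ℂ)-n-ν) + g m * f n * ((m:ℂ)-n+ν)) • L (m+n+ν)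
        + (g m * g n * ((m:ℂ)-n)) • L (m+n+2*ν) := by
      simp only [hR, map_add, map_smul, LinearMap.add_apply, LinearMap.smul_apply, hbr,
        smul_smul]
      push_cast
      rw [show m + (n+ν) = m+n+ν by ring, show m+ν+n = m+n+ν by ring,
          show m+ν+(n+ν) = m+n+2*ν by ring]
      module
    have e2 : R (br (R (L m)) (L n) + br (L m) (R (L n))) + R (br (L m) (L n)) =
        ((f m + f n + 1) * ((m:ℂ)-n) * f (m+n)) • L (m+n)
        + ((f m + f n + 1) * ((m:ℂ)-n) * g (m+n)
            + (((m:ℂ)-n+ν) * g m + ((m:ℂ)-n-ν) * g n) * f (m+n+ν)) • L (m+n+ν)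
        + ((((m:ℂ)-n+ν) * g m + ((m:ℂ)-n-ν) * g n) * g (m+n+ν)) • L (m+n+2*ν) := by
      simp only [hR, map_add, map_smul, LinearMap.add_apply, LinearMap.smul_apply, hbr,
        smul_smul]
      push_cast
      rw [show m + (n+ν) = m+n+ν by ring, show m+ν+n = m+n+ν by ring,
          show m+n+ν+ν = m+n+2*ν by ring]
      module
    rw [e1, e2, tri_coeff hν]
  rw [basis_iff]
  constructor
  · intro h
    refine ⟨fun m n => ?_, fun m n => ?_, fun m n => ?_⟩
    · have := ((scalar_iff m n).1 (h m n)).1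
      linear_combination -this
    · have := ((scalar_iff m n).1 (h m n)).2.2
      linear_combination this
    · have := ((scalar_iff m n).1 (h m n)).2.1
      linear_combination -this
  · rintro ⟨hE, hE2, hE3⟩ m n
    refine (scalar_iff m n).2 ⟨?_, ?_, ?_⟩
    · linear_combination -hE m n
    · linear_combination -hE3 m n
    · linear_combination hE2 m n
end
end
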